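/- arXiv:1001.1663 — 10 statements merged into one kernel-verified Lean document; each statement's English description precedes it below -/
import Mathlib

section
/- Let L be a co-Heyting algebra and a a join-irreducible element of L (a ≠ ⊥ and a = x ⊔ y implies a = x or a = y). Then for every b ∈ L, b ≪ a if and only if b < a. -/
/-- `Ll b a` means `b ≪ a`: `a \ b = a` and `b ≤ a`. -/
def Ll {L : Type*} [CoheytingAlgebra L] (b a : L) : Prop := a \ b = a ∧ b ≤ a

theorem ll_iff_lt_of_supIrred {L : Type*} [CoheytingAlgebra L] (a : L)
    (ha : a ≠ ⊥) (hirr : ∀ x y : L, a = x ⊔ y → a = x ∨ a = y) (b : L) :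
    Ll b a ↔ b < a := by
  constructor
  · rintro ⟨h1, h2⟩
    refine lt_of_le_of_ne h2 fun hba => ?_
    subst hba
    exact ha (by simpa using h1.symm)
  · intro hlt
    refine ⟨?_, hlt.le⟩
    rcases hirr (a \ b) b (sdiff_sup_cancel hlt.le).symm with h | h
    · exact h.symm
    · exact absurd h.symm hlt.ne
end

section
/- Let L₀ be a finite co-Heyting algebra, L an extension of L₀, and (x₁, x₂) a primitive tuple over L₀ with witness g ∈ JoinIrr(L₀). Then g = g(x₁, L₀) = g(x₂, L₀), where g(x, L₀) is the infimum of all elements of L₀ above x. -/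
/-- `S` is (the underlying set of) a co-Heyting subalgebra. -/
def IsSubalg {L : Type*} [CoheytingAlgebra L] (S : Set L) : Prop :=
  ⊥ ∈ S ∧ ⊤ ∈ S ∧ ∀ a ∈ S, ∀ b ∈ S, a ⊔ b ∈ S ∧ a ⊓ b ∈ S ∧ a \ b ∈ S

/-- `g` is join irreducible in the subalgebra `S`. -/
def SupIrredIn {L : Type*} [CoheytingAlgebra L] (S : Set L) (g : L) : Prop :=
  g ∈ S ∧ g ≠ ⊥ ∧ ∀ x ∈ S, ∀ y ∈ S, g = x ⊔ y → g = x ∨ g = y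

/-- `(x₁, x₂)` is a primitive tuple over the subalgebra `S`, with witness `g`
(join irreducible in `S`) whose predecessor in `S` is `gm` (`g⁻`). -/
def Primitive {L : Type*} [CoheytingAlgebra L] (S : Set L) (g gm x₁ x₂ : L) : Prop :=
  x₁ ∉ S ∧ x₂ ∉ S ∧ SupIrredIn S g ∧ IsLUB {b | b ∈ S ∧ b < g} gm ∧
  gm ⊓ x₁ ∈ S ∧ gm ⊓ x₂ ∈ S ∧
  ((x₁ = x₂ ∧ Ll (gm ⊓ x₁) x₁ ∧ Ll x₁ g) ∨
   (x₁ ≠ x₂ ∧ x₁ ⊓ x₂ ∈ S ∧ g \ x₁ = x₂ ∧ g \ x₂ = x₁))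

/-- `T` is the co-Heyting subalgebra generated by `S ∪ {x₁, x₂}`. -/
def GeneratesOver {L : Type*} [CoheytingAlgebra L] (S T : Set L) (x₁ x₂ : L) : Prop :=
  IsSubalg T ∧ S ⊆ T ∧ x₁ ∈ T ∧ x₂ ∈ T ∧
  ∀ Tp : Set L, IsSubalg Tp → S ⊆ Tp → x₁ ∈ Tp → x₂ ∈ Tp → T ⊆ Tp

lemma glb_aux {L : Type*} [CoheytingAlgebra L] (S : Set L) (hS : IsSubalg S)
    {g gm x : L} (hg : SupIrredIn S g) (hgm : IsLUB {b | b ∈ S ∧ b < g} gm)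
    (hxS : x ∉ S) (hgmx : gm ⊓ x ∈ S) (hxg : x ≤ g) :
    IsGLB {a | a ∈ S ∧ x ≤ a} g := by
  obtain ⟨hgS, hgbot, hirr⟩ := hg
  have hleast : IsLeast {a | a ∈ S ∧ x ≤ a} g := by
    refine ⟨⟨hgS, hxg⟩, ?_⟩
    rintro a ⟨haS, hxa⟩
    have hga : g ⊓ a ∈ S := (hS.2.2 g hgS a haS).2.1
    have hgsa : g \ a ∈ S := (hS.2.2 g hgS a haS).2.2
    have hsplit : g = (g ⊓ a) ⊔ (g \ a) := by
      apply le_antisymm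
      · have h1 : g ≤ a ⊔ g \ a := le_sup_sdiff
        calc g = g ⊓ (a ⊔ g \ a) := (inf_eq_left.mpr h1).symm
          _ = (g ⊓ a) ⊔ (g ⊓ g \ a) := inf_sup_left g a (g \ a)
          _ ≤ (g ⊓ a) ⊔ (g \ a) := sup_le_sup_left inf_le_right _
      · exact sup_le inf_le_left sdiff_le
    rcases hirr _ hga _ hgsa hsplit with h | h
    · exact h.le.trans inf_le_right
    · by_cases hle : g ≤ a
      · exact hle
      · exfalso
        have hlt : g ⊓ a < g := lt_of_le_of_ne inf_le_left (fun he => hle (he.ge.trans inf_le_right))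
        have hgmle : g ⊓ a ≤ gm := hgm.1 ⟨hga, hlt⟩
        have hxgm : x ≤ gm := le_trans (le_inf hxg hxa) hgmle
        have : gm ⊓ x = x := inf_eq_right.mpr hxgm
        exact hxS (this ▸ hgmx)
  exact hleast.isGLB

theorem primitive_witness_eq_inf {L : Type*} [CoheytingAlgebra L] (S : Set L)
    (hfin : S.Finite) (hS : IsSubalg S) (g gm x₁ x₂ : L)
    (hp : Primitive S g gm x₁ x₂) :
    IsGLB {a | a ∈ S ∧ x₁ ≤ a} g ∧ IsGLB {a | a ∈ S ∧ x₂ ≤ a} g := by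
  obtain ⟨hx1, hx2, hg, hgm, hgmx1, hgmx2, hcase⟩ := hp
  have hx1g : x₁ ≤ g := by
    rcases hcase with ⟨heq, _, _, h⟩ | ⟨_, _, h1, h2⟩
    · exact h
    · exact h2 ▸ sdiff_le
  have hx2g : x₂ ≤ g := by
    rcases hcase with ⟨heq, _⟩ | ⟨_, _, h1, h2⟩
    · exact heq ▸ hx1g
    · exact h1 ▸ sdiff_le
  exact ⟨glb_aux S hS hg hgm hx1 hgmx1 hx1g, glb_aux S hS hg hgm hx2 hgmx2 hx2g⟩
end

section
/- Let L₀ be a finite co-Heyting algebra and L an extension generated (as a co-Heyting algebra) over L₀ by a primitive tuple (x₁, x₂) with witness g. Then L equals the upper semilattice generated by L₀ ∪ {x₁, x₂}, i.e., every element of L has the form a, a ⊔ x₁, a ⊔ x₂, or a ⊔ x₁ ⊔ x₂ with a ∈ L₀; in particular L is finite. -/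
set_option maxHeartbeats 1000000 in
theorem primitive_extension_is_sup_semilattice_generated {L : Type*} [CoheytingAlgebra L]
    (S : Set L) (hfin : S.Finite) (hS : IsSubalg S) (g gm x₁ x₂ : L)
    (hp : Primitive S g gm x₁ x₂) (hgen : GeneratesOver S Set.univ x₁ x₂) :
    (∀ y : L, ∃ a ∈ S, y = a ∨ y = a ⊔ x₁ ∨ y = a ⊔ x₂ ∨ y = a ⊔ x₁ ⊔ x₂) ∧ Finite L := by
  obtain ⟨hbotS, htopS, hcl⟩ := hS
  obtain ⟨hx1S, hx2S, ⟨hgS, hgbot, hirr⟩, hlub, hgm1, hgm2, hcase⟩ := hp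
  have hsupS : ∀ a ∈ S, ∀ b ∈ S, a ⊔ b ∈ S := fun a ha b hb => (hcl a ha b hb).1
  have hinfS : ∀ a ∈ S, ∀ b ∈ S, a ⊓ b ∈ S := fun a ha b hb => (hcl a ha b hb).2.1
  have hdiffS : ∀ a ∈ S, ∀ b ∈ S, a \ b ∈ S := fun a ha b hb => (hcl a ha b hb).2.2
  -- x₁, x₂ ≤ g
  have hx1g : x₁ ≤ g := by
    rcases hcase with ⟨_, _, hl⟩ | ⟨_, _, _, h2⟩
    · exact hl.2
    · rw [← h2]; exact sdiff_le
  have hx2g : x₂ ≤ g := by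
    rcases hcase with ⟨he, _, hl⟩ | ⟨_, _, h1, _⟩
    · rw [← he]; exact hl.2
    · rw [← h1]; exact sdiff_le
  have hx1ne : x₁ ≠ g := fun h => hx1S (h ▸ hgS)
  have hx2ne : x₂ ≠ g := fun h => hx2S (h ▸ hgS)
  -- elements of S strictly below g are below gm
  have hsmall : ∀ b ∈ S, b ≤ g → b ≠ g → b ≤ gm := fun b hb hle hne =>
    hlub.1 ⟨hb, lt_of_le_of_ne hle hne⟩
  -- decomposition
  have hdec : ∀ c b : L, c = c ⊓ b ⊔ c \ b := by
    intro c b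
    have h : c ≤ c ⊓ b ⊔ c \ b := by
      calc c = c ⊓ (b ⊔ c \ b) := (inf_eq_left.2 le_sup_sdiff).symm
        _ = c ⊓ b ⊔ c ⊓ (c \ b) := inf_sup_left c b (c \ b)
        _ ≤ c ⊓ b ⊔ c \ b := sup_le_sup_left inf_le_right _
    exact le_antisymm h (sup_le inf_le_left sdiff_le)
  -- g \ u = g for u ∈ S strictly below g
  have hgdiff : ∀ u ∈ S, u ≤ g → u ≠ g → g \ u = g := by
    intro u hu hle hne
    have hd : g = u ⊔ g \ u := by
      have := hdec g u; rwa [inf_eq_right.2 hle] at this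
    rcases hirr u hu (g \ u) (hdiffS g hgS u hu) hd with h | h
    · exact absurd h.symm hne
    · exact h.symm
  -- xᵢ \ (gm ⊓ xᵢ) = xᵢ
  have hgmx1ne : gm ⊓ x₁ ≠ g := fun h => hx1ne (le_antisymm hx1g (h ▸ inf_le_right))
  have hgmx2ne : gm ⊓ x₂ ≠ g := fun h => hx2ne (le_antisymm hx2g (h ▸ inf_le_right))
  have hll1 : x₁ \ (gm ⊓ x₁) = x₁ := by
    rcases hcase with ⟨_, hl, _⟩ | ⟨_, _, _, h2⟩
    · exact hl.1
    · have hg : g \ (gm ⊓ x₁) = g := hgdiff _ hgm1 (inf_le_right.trans hx1g) hgmx1ne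
      calc x₁ \ (gm ⊓ x₁) = (g \ x₂) \ (gm ⊓ x₁) := by rw [h2]
        _ = (g \ (gm ⊓ x₁)) \ x₂ := by rw [sdiff_sdiff, sdiff_sdiff, sup_comm]
        _ = g \ x₂ := by rw [hg]
        _ = x₁ := h2
  have hll2 : x₂ \ (gm ⊓ x₂) = x₂ := by
    rcases hcase with ⟨he, hl, _⟩ | ⟨_, _, h1, _⟩
    · rw [← he]; exact hl.1
    · have hg : g \ (gm ⊓ x₂) = g := hgdiff _ hgm2 (inf_le_right.trans hx2g) hgmx2ne
      calc x₂ \ (gm ⊓ x₂) = (g \ x₁) \ (gm ⊓ x₂) := by rw [h1]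
        _ = (g \ (gm ⊓ x₂)) \ x₁ := by rw [sdiff_sdiff, sdiff_sdiff, sup_comm]
        _ = g \ x₁ := by rw [hg]
        _ = x₂ := h1
  -- for b ∈ S with ¬ g ≤ b, b ⊓ g ≤ gm
  have hbg : ∀ b ∈ S, ¬ g ≤ b → b ⊓ g ≤ gm := by
    intro b hb hg
    exact hsmall _ (hinfS b hb g hgS) inf_le_right (fun h => hg (h ▸ inf_le_left))
  have hinfg1 : ∀ a ∈ S, ¬ g ≤ a → a ⊓ x₁ ∈ S := by
    intro a ha hg
    have h1 : a ⊓ g ≤ gm := hbg a ha hg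
    have : a ⊓ x₁ = (a ⊓ g) ⊓ (gm ⊓ x₁) := by
      apply le_antisymm
      · exact le_inf (le_inf inf_le_left (inf_le_right.trans hx1g))
          (le_inf ((le_inf inf_le_left (inf_le_right.trans hx1g)).trans h1) inf_le_right)
      · exact le_inf (inf_le_left.trans inf_le_left) (inf_le_right.trans inf_le_right)
    rw [this]; exact hinfS _ (hinfS a ha g hgS) _ hgm1
  have hinfg2 : ∀ a ∈ S, ¬ g ≤ a → a ⊓ x₂ ∈ S := by
    intro a ha hg
    have h1 : a ⊓ g ≤ gm := hbg a ha hg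
    have : a ⊓ x₂ = (a ⊓ g) ⊓ (gm ⊓ x₂) := by
      apply le_antisymm
      · exact le_inf (le_inf inf_le_left (inf_le_right.trans hx2g))
          (le_inf ((le_inf inf_le_left (inf_le_right.trans hx2g)).trans h1) inf_le_right)
      · exact le_inf (inf_le_left.trans inf_le_left) (inf_le_right.trans inf_le_right)
    rw [this]; exact hinfS _ (hinfS a ha g hgS) _ hgm2
  have hA1 : ∀ a ∈ S, a ⊓ x₁ ∈ S ∨ a ⊓ x₁ = x₁ := by
    intro a ha
    by_cases hg : g ≤ a
    · right; exact inf_eq_right.2 (hx1g.trans hg)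
    · left; exact hinfg1 a ha hg
  have hA2 : ∀ a ∈ S, a ⊓ x₂ ∈ S ∨ a ⊓ x₂ = x₂ := by
    intro a ha
    by_cases hg : g ≤ a
    · right; exact inf_eq_right.2 (hx2g.trans hg)
    · left; exact hinfg2 a ha hg
  -- xᵢ \ z = xᵢ whenever xᵢ ⊓ z ≤ gm ⊓ xᵢ
  have hfull1 : ∀ z : L, x₁ ⊓ z ≤ gm ⊓ x₁ → x₁ \ z = x₁ := by
    intro z hz
    apply le_antisymm sdiff_le
    calc x₁ = x₁ \ (gm ⊓ x₁) := hll1.symm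
      _ ≤ x₁ \ (x₁ ⊓ z) := sdiff_le_sdiff_left hz
      _ = x₁ \ z := sdiff_inf_self_left x₁ z
  have hfull2 : ∀ z : L, x₂ ⊓ z ≤ gm ⊓ x₂ → x₂ \ z = x₂ := by
    intro z hz
    apply le_antisymm sdiff_le
    calc x₂ = x₂ \ (gm ⊓ x₂) := hll2.symm
      _ ≤ x₂ \ (x₂ ⊓ z) := sdiff_le_sdiff_left hz
      _ = x₂ \ z := sdiff_inf_self_left x₂ z
  -- xᵢ \ b for b ∈ S
  have hD1 : ∀ b ∈ S, x₁ \ b = ⊥ ∨ x₁ \ b = x₁ := by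
    intro b hb
    by_cases hg : g ≤ b
    · left; exact sdiff_eq_bot_iff.2 (hx1g.trans hg)
    · right
      refine hfull1 b (le_inf ?_ inf_le_left)
      exact (le_inf inf_le_right (inf_le_left.trans hx1g)).trans (hbg b hb hg)
  have hD2 : ∀ b ∈ S, x₂ \ b = ⊥ ∨ x₂ \ b = x₂ := by
    intro b hb
    by_cases hg : g ≤ b
    · left; exact sdiff_eq_bot_iff.2 (hx2g.trans hg)
    · right
      refine hfull2 b (le_inf ?_ inf_le_left)
      exact (le_inf inf_le_right (inf_le_left.trans hx2g)).trans (hbg b hb hg)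
  -- x₁ \ x₂ and x₂ \ x₁
  have hx12gm : x₁ ⊓ x₂ ∈ S → x₁ ⊓ x₂ ≤ gm := fun h =>
    hsmall _ h (inf_le_left.trans hx1g)
      (fun hh => hx1ne (le_antisymm hx1g (hh ▸ inf_le_left)))
  have hX12 : x₁ \ x₂ = ⊥ ∨ x₁ \ x₂ = x₁ := by
    rcases hcase with ⟨he, _, _⟩ | ⟨hne, hinf12, h1, h2⟩
    · left; rw [he, sdiff_self]
    · right
      exact hfull1 x₂ (le_inf (hx12gm hinf12) inf_le_left)
  have hX21 : x₂ \ x₁ = ⊥ ∨ x₂ \ x₁ = x₂ := by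
    rcases hcase with ⟨he, _, _⟩ | ⟨hne, hinf12, h1, h2⟩
    · left; rw [← he, sdiff_self]
    · right
      refine hfull2 x₁ (le_inf ?_ inf_le_left)
      exact (le_of_eq (inf_comm x₂ x₁)).trans (hx12gm hinf12)
  -- structure of c \ xᵢ for c ∈ S
  have hkey : ∀ c x : L, x ≤ g → c \ x = (c ⊓ g) \ x ⊔ c \ g := by
    intro c x hx
    have h2 : (c \ g) \ x = c \ g := by
      apply le_antisymm sdiff_le
      calc c \ g = (c \ g) \ g := sdiff_idem.symm
        _ ≤ (c \ g) \ x := sdiff_le_sdiff_left hx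
    conv_lhs => rw [hdec c g]
    rw [sup_sdiff, h2]
  have hL71 : ∀ c ∈ S, ∃ c' ∈ S, c \ x₁ = c' ∨ c \ x₁ = c' ⊔ x₂ := by
    intro c hc
    have hdecc := hkey c x₁ hx1g
    by_cases hg : g ≤ c
    · have hcg : c ⊓ g = g := inf_eq_right.2 hg
      rcases hcase with ⟨he, _, hlg⟩ | ⟨hne, _, h1, _⟩
      · refine ⟨g ⊔ c \ g, hsupS _ hgS _ (hdiffS c hc g hgS), Or.inl ?_⟩
        rw [hdecc, hcg, hlg.1]
      · refine ⟨c \ g, hdiffS c hc g hgS, Or.inr ?_⟩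
        rw [hdecc, hcg, h1, sup_comm]
    · have h1 : (c ⊓ g) ⊓ x₁ ∈ S := hinfg1 _ (hinfS c hc g hgS) (fun h => hg (h.trans inf_le_left))
      have h2 : (c ⊓ g) \ x₁ = (c ⊓ g) \ ((c ⊓ g) ⊓ x₁) := (sdiff_inf_self_left _ _).symm
      refine ⟨(c ⊓ g) \ ((c ⊓ g) ⊓ x₁) ⊔ c \ g,
        hsupS _ (hdiffS _ (hinfS c hc g hgS) _ h1) _ (hdiffS c hc g hgS), Or.inl ?_⟩
      rw [hdecc, h2]
  have hL72 : ∀ c ∈ S, ∃ c' ∈ S, c \ x₂ = c' ∨ c \ x₂ = c' ⊔ x₁ := by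
    intro c hc
    have hdecc := hkey c x₂ hx2g
    by_cases hg : g ≤ c
    · have hcg : c ⊓ g = g := inf_eq_right.2 hg
      rcases hcase with ⟨he, _, hlg⟩ | ⟨hne, _, _, h2⟩
      · refine ⟨g ⊔ c \ g, hsupS _ hgS _ (hdiffS c hc g hgS), Or.inl ?_⟩
        rw [hdecc, hcg, ← he, hlg.1]
      · refine ⟨c \ g, hdiffS c hc g hgS, Or.inr ?_⟩
        rw [hdecc, hcg, h2, sup_comm]
    · have h1 : (c ⊓ g) ⊓ x₂ ∈ S := hinfg2 _ (hinfS c hc g hgS) (fun h => hg (h.trans inf_le_left))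
      have h2 : (c ⊓ g) \ x₂ = (c ⊓ g) \ ((c ⊓ g) ⊓ x₂) := (sdiff_inf_self_left _ _).symm
      refine ⟨(c ⊓ g) \ ((c ⊓ g) ⊓ x₂) ⊔ c \ g,
        hsupS _ (hdiffS _ (hinfS c hc g hgS) _ h1) _ (hdiffS c hc g hgS), Or.inl ?_⟩
      rw [hdecc, h2]
  -- the sup-semilattice generated set
  set T : Set L := {y | ∃ a ∈ S, y = a ∨ y = a ⊔ x₁ ∨ y = a ⊔ x₂ ∨ y = a ⊔ x₁ ⊔ x₂} with hT
  have memS : ∀ a ∈ S, a ∈ T := fun a ha => ⟨a, ha, Or.inl rfl⟩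
  have memS1 : ∀ a ∈ S, a ⊔ x₁ ∈ T := fun a ha => ⟨a, ha, Or.inr (Or.inl rfl)⟩
  have memS2 : ∀ a ∈ S, a ⊔ x₂ ∈ T := fun a ha => ⟨a, ha, Or.inr (Or.inr (Or.inl rfl))⟩
  have memS12 : ∀ a ∈ S, a ⊔ x₁ ⊔ x₂ ∈ T := fun a ha => ⟨a, ha, Or.inr (Or.inr (Or.inr rfl))⟩
  have memx1 : x₁ ∈ T := ⟨⊥, hbotS, Or.inr (Or.inl (bot_sup_eq x₁).symm)⟩
  have memx2 : x₂ ∈ T := ⟨⊥, hbotS, Or.inr (Or.inr (Or.inl (bot_sup_eq x₂).symm))⟩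
  have hx12T : x₁ ⊓ x₂ ∈ T := by
    rcases hcase with ⟨he, _, _⟩ | ⟨_, h, _, _⟩
    · rw [he, inf_idem]; exact memx2
    · exact memS _ h
  -- T is closed under ⊔
  have hsupT : ∀ y ∈ T, ∀ z ∈ T, y ⊔ z ∈ T := by
    rintro y ⟨a, ha, h | h | h | h⟩ z ⟨b, hb, h' | h' | h' | h'⟩ <;> rw [h, h'] <;>
      first
      | · refine Set.mem_of_eq_of_mem ?_ (memS _ (hsupS a ha b hb))
          simp [sup_assoc, sup_comm, sup_left_comm, sup_idem, sup_left_idem]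
      | · refine Set.mem_of_eq_of_mem ?_ (memS1 _ (hsupS a ha b hb))
          simp [sup_assoc, sup_comm, sup_left_comm, sup_idem, sup_left_idem]
      | · refine Set.mem_of_eq_of_mem ?_ (memS2 _ (hsupS a ha b hb))
          simp [sup_assoc, sup_comm, sup_left_comm, sup_idem, sup_left_idem]
      | · refine Set.mem_of_eq_of_mem ?_ (memS12 _ (hsupS a ha b hb))
          simp [sup_assoc, sup_comm, sup_left_comm, sup_idem, sup_left_idem]
  -- T is closed under ⊓
  have hax1T : ∀ a ∈ S, a ⊓ x₁ ∈ T := by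
    intro a ha
    rcases hA1 a ha with h | h
    · exact memS _ h
    · rw [h]; exact memx1
  have hax2T : ∀ a ∈ S, a ⊓ x₂ ∈ T := by
    intro a ha
    rcases hA2 a ha with h | h
    · exact memS _ h
    · rw [h]; exact memx2
  have hx1zT : ∀ z ∈ T, x₁ ⊓ z ∈ T := by
    rintro z ⟨b, hb, h | h | h | h⟩ <;> rw [h]
    · rw [inf_comm]; exact hax1T b hb
    · rw [inf_eq_left.2 le_sup_right]; exact memx1
    · rw [inf_sup_left, inf_comm x₁ b]
      exact hsupT _ (hax1T b hb) _ hx12T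
    · rw [inf_eq_left.2 (le_sup_of_le_left le_sup_right)]; exact memx1
  have hx2zT : ∀ z ∈ T, x₂ ⊓ z ∈ T := by
    rintro z ⟨b, hb, h | h | h | h⟩ <;> rw [h]
    · rw [inf_comm]; exact hax2T b hb
    · rw [inf_sup_left, inf_comm x₂ b, inf_comm x₂ x₁]
      exact hsupT _ (hax2T b hb) _ hx12T
    · rw [inf_eq_left.2 le_sup_right]; exact memx2
    · rw [inf_eq_left.2 le_sup_right]; exact memx2
  have hazT : ∀ a ∈ S, ∀ z ∈ T, a ⊓ z ∈ T := by
    rintro a ha z ⟨b, hb, h | h | h | h⟩ <;> rw [h]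
    · exact memS _ (hinfS a ha b hb)
    · rw [inf_sup_left]; exact hsupT _ (memS _ (hinfS a ha b hb)) _ (hax1T a ha)
    · rw [inf_sup_left]; exact hsupT _ (memS _ (hinfS a ha b hb)) _ (hax2T a ha)
    · rw [inf_sup_left, inf_sup_left]
      exact hsupT _ (hsupT _ (memS _ (hinfS a ha b hb)) _ (hax1T a ha)) _ (hax2T a ha)
  have hinfT : ∀ y ∈ T, ∀ z ∈ T, y ⊓ z ∈ T := by
    rintro y ⟨a, ha, h | h | h | h⟩ z hz <;> rw [h]
    · exact hazT a ha z hz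
    · rw [inf_sup_right]; exact hsupT _ (hazT a ha z hz) _ (hx1zT z hz)
    · rw [inf_sup_right]; exact hsupT _ (hazT a ha z hz) _ (hx2zT z hz)
    · rw [inf_sup_right, inf_sup_right]
      exact hsupT _ (hsupT _ (hazT a ha z hz) _ (hx1zT z hz)) _ (hx2zT z hz)
  -- T is closed under \
  have hc1T : ∀ c ∈ S, c \ x₁ ∈ T := by
    intro c hc
    rcases hL71 c hc with ⟨c', hc', h | h⟩
    · rw [h]; exact memS _ hc'
    · rw [h]; exact memS2 _ hc'
  have hc2T : ∀ c ∈ S, c \ x₂ ∈ T := by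
    intro c hc
    rcases hL72 c hc with ⟨c', hc', h | h⟩
    · rw [h]; exact memS _ hc'
    · rw [h]; exact memS1 _ hc'
  have hc12T : ∀ c ∈ S, c \ (x₁ ⊔ x₂) ∈ T := by
    intro c hc
    rw [← sdiff_sdiff]
    rcases hL71 c hc with ⟨c', hc', h | h⟩
    · rw [h]; exact hc2T c' hc'
    · rw [h, sup_sdiff, sdiff_self, sup_bot_eq]
      exact hc2T c' hc'
  have hczT : ∀ c ∈ S, ∀ z ∈ T, c \ z ∈ T := by
    rintro c hc z ⟨b, hb, h | h | h | h⟩ <;> rw [h]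
    · exact memS _ (hdiffS c hc b hb)
    · rw [← sdiff_sdiff]; exact hc1T _ (hdiffS c hc b hb)
    · rw [← sdiff_sdiff]; exact hc2T _ (hdiffS c hc b hb)
    · rw [sup_assoc, ← sdiff_sdiff]; exact hc12T _ (hdiffS c hc b hb)
  have hx1zT' : ∀ z ∈ T, x₁ \ z ∈ T := by
    rintro z ⟨b, hb, hh | hh | hh | hh⟩ <;> rw [hh]
    · rcases hD1 b hb with h | h
      · rw [h]; exact memS _ hbotS
      · rw [h]; exact memx1
    · rw [← sdiff_sdiff]
      rcases hD1 b hb with h | h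
      · rw [h, bot_sdiff]; exact memS _ hbotS
      · rw [h, sdiff_self]; exact memS _ hbotS
    · rw [← sdiff_sdiff]
      rcases hD1 b hb with h | h
      · rw [h, bot_sdiff]; exact memS _ hbotS
      · rw [h]
        rcases hX12 with h2 | h2
        · rw [h2]; exact memS _ hbotS
        · rw [h2]; exact memx1
    · rw [sdiff_eq_bot_iff.2 (le_sup_of_le_left le_sup_right)]; exact memS _ hbotS
  have hx2zT' : ∀ z ∈ T, x₂ \ z ∈ T := by
    rintro z ⟨b, hb, hh | hh | hh | hh⟩ <;> rw [hh]
    · rcases hD2 b hb with h | h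
      · rw [h]; exact memS _ hbotS
      · rw [h]; exact memx2
    · rw [← sdiff_sdiff]
      rcases hD2 b hb with h | h
      · rw [h, bot_sdiff]; exact memS _ hbotS
      · rw [h]
        rcases hX21 with h2 | h2
        · rw [h2]; exact memS _ hbotS
        · rw [h2]; exact memx2
    · rw [← sdiff_sdiff]
      rcases hD2 b hb with h | h
      · rw [h, bot_sdiff]; exact memS _ hbotS
      · rw [h, sdiff_self]; exact memS _ hbotS
    · rw [sdiff_eq_bot_iff.2 le_sup_right]; exact memS _ hbotS
  have hdiffT : ∀ y ∈ T, ∀ z ∈ T, y \ z ∈ T := by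
    rintro y ⟨a, ha, h | h | h | h⟩ z hz <;> rw [h]
    · exact hczT a ha z hz
    · rw [sup_sdiff]; exact hsupT _ (hczT a ha z hz) _ (hx1zT' z hz)
    · rw [sup_sdiff]; exact hsupT _ (hczT a ha z hz) _ (hx2zT' z hz)
    · rw [sup_sdiff, sup_sdiff]
      exact hsupT _ (hsupT _ (hczT a ha z hz) _ (hx1zT' z hz)) _ (hx2zT' z hz)
  -- conclusion
  have hsubalg : IsSubalg T :=
    ⟨memS ⊥ hbotS, memS ⊤ htopS, fun a ha b hb => ⟨hsupT a ha b hb, hinfT a ha b hb, hdiffT a ha b hb⟩⟩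
  have huniv : Set.univ ⊆ T := hgen.2.2.2.2 T hsubalg (fun a ha => memS a ha) memx1 memx2
  refine ⟨fun y => huniv (Set.mem_univ y), ?_⟩
  have hTsub : T ⊆ S ∪ (· ⊔ x₁) '' S ∪ (· ⊔ x₂) '' S ∪ (· ⊔ x₁ ⊔ x₂) '' S := by
    rintro y ⟨a, ha, h | h | h | h⟩ <;> rw [h]
    · exact Or.inl (Or.inl (Or.inl ha))
    · exact Or.inl (Or.inl (Or.inr ⟨a, ha, rfl⟩))
    · exact Or.inl (Or.inr ⟨a, ha, rfl⟩)
    · exact Or.inr ⟨a, ha, rfl⟩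
  have hufin : (Set.univ : Set L).Finite :=
    ((((hfin.union (hfin.image _)).union (hfin.image _)).union (hfin.image _)).subset
      (huniv.trans hTsub))
  exact Set.finite_univ_iff.mp hufin
end

section
/- Let L₀ be a finite co-Heyting algebra and L the extension generated over L₀ by a primitive tuple (x₁, x₂) with witness g. If x₁ = x₂ then JoinIrr(L) = JoinIrr(L₀) ∪ {x₁}; if x₁ ≠ x₂ then JoinIrr(L) = (JoinIrr(L₀) \ {g}) ∪ {x₁, x₂}. -/
namespace PrimitiveExtAux

variable {L : Type*} [CoheytingAlgebra L]

lemma sup_mem {S : Set L} (hS : IsSubalg S) {a b : L} (ha : a ∈ S) (hb : b ∈ S) :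
    a ⊔ b ∈ S := (hS.2.2 a ha b hb).1

lemma inf_mem {S : Set L} (hS : IsSubalg S) {a b : L} (ha : a ∈ S) (hb : b ∈ S) :
    a ⊓ b ∈ S := (hS.2.2 a ha b hb).2.1

lemma sdiff_mem {S : Set L} (hS : IsSubalg S) {a b : L} (ha : a ∈ S) (hb : b ∈ S) :
    a \ b ∈ S := (hS.2.2 a ha b hb).2.2

lemma decomp (a b : L) : a = a ⊓ b ⊔ a \ b := by
  apply le_antisymm
  · have h := le_sup_sdiff (a := a ⊓ b) (b := a)
    rwa [sdiff_inf_self_left] at h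
  · exact sup_le inf_le_left sdiff_le

lemma finsetSup_mem {S : Set L} (hS : IsSubalg S) (F : Finset L) (hF : ∀ a ∈ F, a ∈ S) :
    F.sup id ∈ S := by
  classical
  revert hF
  refine Finset.induction_on F ?_ ?_
  · intro _; simpa using hS.1
  · intro x F hx ih hF
    rw [Finset.sup_insert]
    exact sup_mem hS (hF x (Finset.mem_insert_self x F))
      (ih fun a ha => hF a (Finset.mem_insert_of_mem ha))

lemma eq_of_irred_finsetSup {S : Set L} (hS : IsSubalg S) {g : L} (hg : SupIrredIn S g)
    (F : Finset L) (hF : ∀ a ∈ F, a ∈ S) (h : g = F.sup id) : ∃ a ∈ F, g = a := by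
  classical
  revert hF h
  refine Finset.induction_on F ?_ ?_
  · intro _ h
    rw [Finset.sup_empty] at h
    exact absurd h hg.2.1
  · intro x F hx ih hF h
    rw [Finset.sup_insert] at h
    rcases hg.2.2 x (hF x (Finset.mem_insert_self x F)) (F.sup id)
        (finsetSup_mem hS F fun a ha => hF a (Finset.mem_insert_of_mem ha)) h with h1 | h1
    · exact ⟨x, Finset.mem_insert_self x F, h1⟩
    · obtain ⟨a, ha, hga⟩ := ih (fun a ha => hF a (Finset.mem_insert_of_mem ha)) h1
      exact ⟨a, Finset.mem_insert_of_mem ha, hga⟩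

lemma gm_facts {S : Set L} (hfin : S.Finite) (hS : IsSubalg S) {g gm : L}
    (hg : SupIrredIn S g) (hlub : IsLUB {b | b ∈ S ∧ b < g} gm) :
    gm ∈ S ∧ gm < g ∧ g \ gm = g := by
  classical
  have hFfin : {b | b ∈ S ∧ b < g}.Finite := hfin.subset fun a ha => ha.1
  set Fs := hFfin.toFinset with hFs
  have hmem : ∀ a ∈ Fs, a ∈ S := fun a ha => (hFfin.mem_toFinset.mp ha).1
  have hlub2 : IsLUB {b | b ∈ S ∧ b < g} (Fs.sup id) := by
    constructor
    · intro a ha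
      exact Finset.le_sup (f := id) (hFfin.mem_toFinset.mpr ha)
    · intro b hb
      exact Finset.sup_le fun a ha => hb (hFfin.mem_toFinset.mp ha)
  have hgmeq : gm = Fs.sup id := hlub.unique hlub2
  have hgmS : gm ∈ S := by rw [hgmeq]; exact finsetSup_mem hS Fs hmem
  have hgmle : gm ≤ g := hlub.2 fun a ha => ha.2.le
  have hgmlt : gm < g := by
    rcases hgmle.lt_or_eq with h | h
    · exact h
    · exfalso
      obtain ⟨a, ha, hga⟩ := eq_of_irred_finsetSup hS hg Fs hmem (by rw [← hgmeq, ← h])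
      have halt : a < g := (hFfin.mem_toFinset.mp ha).2
      rw [← hga] at halt
      exact lt_irrefl g halt
  have hsd : g \ gm = g := by
    have hdec : g = gm ⊔ g \ gm := by
      have h := decomp g gm
      rwa [inf_eq_right.mpr hgmle] at h
    rcases hg.2.2 gm hgmS (g \ gm) (sdiff_mem hS hg.1 hgmS) hdec with h | h
    · exact absurd h.symm (ne_of_lt hgmlt)
    · exact h.symm
  exact ⟨hgmS, hgmlt, hsd⟩

lemma dich {S : Set L} (hS : IsSubalg S) {g gm : L} (hg : SupIrredIn S g)
    (hlub : IsLUB {b | b ∈ S ∧ b < g} gm) {s : L} (hs : s ∈ S) :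
    g ≤ s ∨ s ⊓ g ≤ gm := by
  rcases hg.2.2 (g ⊓ s) (inf_mem hS hg.1 hs) (g \ s) (sdiff_mem hS hg.1 hs)
      (decomp g s) with h | h
  · left; rw [h]; exact inf_le_right
  · right
    have hlt : g ⊓ s < g := by
      rcases (inf_le_left : g ⊓ s ≤ g).lt_or_eq with h1 | h1
      · exact h1
      · exfalso
        have hgs : g ≤ s := by rw [← h1]; exact inf_le_right
        have hb : g \ s = ⊥ := sdiff_eq_bot_iff.mpr hgs
        rw [hb] at h
        exact hg.2.1 h
    have h2 := hlub.1 ⟨inf_mem hS hg.1 hs, hlt⟩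
    rwa [inf_comm] at h2

lemma fold_lemma {S : Set L} (hS : IsSubalg S) {g gm : L} (hg : SupIrredIn S g)
    (hlub : IsLUB {b | b ∈ S ∧ b < g} gm) {x : L} (hxg : x ≤ g) (hgmx : gm ⊓ x ∈ S)
    {b : L} (hb : b ∈ S) : b ⊓ x = x ∨ (b ⊓ x ∈ S ∧ b ⊓ x ≤ gm) := by
  rcases dich hS hg hlub hb with h | h
  · left; exact inf_eq_right.mpr (hxg.trans h)
  · right
    have hbx : b ⊓ x ≤ gm := le_trans (inf_le_inf_left b hxg) h
    have heq : b ⊓ x = b ⊓ (gm ⊓ x) := by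
      apply le_antisymm
      · exact le_inf inf_le_left (le_inf hbx inf_le_right)
      · exact inf_le_inf_left b inf_le_right
    exact ⟨by rw [heq]; exact inf_mem hS hb hgmx, hbx⟩

lemma sdiff_small {g gm x : L} (hxg : x ≤ g) (hxgm : x \ gm = x) {s : L}
    (hsg : s ⊓ g ≤ gm) : x \ s = x := by
  apply le_antisymm sdiff_le
  have h1 : x ⊓ s ≤ gm := by
    refine le_trans (le_inf (le_trans inf_le_left hxg) inf_le_right) ?_
    rwa [inf_comm] at hsg
  calc x = x \ gm := hxgm.symm
    _ ≤ x \ (x ⊓ s) := sdiff_le_sdiff_left h1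
    _ = x \ s := sdiff_inf_self_left x s

lemma sdiff_low {S : Set L} (hS : IsSubalg S) {g gm x : L} (hxg : x ≤ g)
    (hgmx : gm ⊓ x ∈ S) {s : L} (hs : s ∈ S) (hsg : s ⊓ g ≤ gm) : s \ x ∈ S := by
  have hsxle : s ⊓ x ≤ gm := le_trans (inf_le_inf_left s hxg) hsg
  have hsx : s ⊓ x ∈ S := by
    have heq : s ⊓ x = s ⊓ (gm ⊓ x) := by
      apply le_antisymm
      · exact le_inf inf_le_left (le_inf hsxle inf_le_right)
      · exact inf_le_inf_left s inf_le_right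
    rw [heq]; exact inf_mem hS hs hgmx
  have h : s \ x = s \ (s ⊓ x) := (sdiff_inf_self_left s x).symm
  rw [h]
  exact sdiff_mem hS hs hsx


lemma case_ne {L : Type*} [CoheytingAlgebra L] {S : Set L} (hfin : S.Finite)
    (hS : IsSubalg S) {g gm x₁ x₂ : L}
    (hx1 : x₁ ∉ S) (hx2 : x₂ ∉ S) (hg : SupIrredIn S g)
    (hlub : IsLUB {b | b ∈ S ∧ b < g} gm)
    (hgmx1 : gm ⊓ x₁ ∈ S) (hgmx2 : gm ⊓ x₂ ∈ S)
    (h12 : x₁ ⊓ x₂ ∈ S) (hd1 : g \ x₁ = x₂) (hd2 : g \ x₂ = x₁)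
    (hgen : GeneratesOver S Set.univ x₁ x₂) :
    {a : L | SupIrred a} = ({a : L | SupIrredIn S a} \ {g}) ∪ {x₁, x₂} := by
  obtain ⟨hgmS, hgmlt, hggm⟩ := gm_facts hfin hS hg hlub
  have hbotS : (⊥ : L) ∈ S := hS.1
  have htopS : (⊤ : L) ∈ S := hS.2.1
  have hgS : g ∈ S := hg.1
  have h21 : x₂ ⊓ x₁ ∈ S := by rwa [inf_comm] at h12
  have hx1g : x₁ ≤ g := by rw [← hd2]; exact sdiff_le
  have hx2g : x₂ ≤ g := by rw [← hd1]; exact sdiff_le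
  have hg12 : g = x₁ ⊔ x₂ := by
    apply le_antisymm
    · have h := le_sup_sdiff (a := x₁) (b := g)
      rwa [hd1] at h
    · exact sup_le hx1g hx2g
  have hx1gm : x₁ \ gm = x₁ := by rw [← hd2, sdiff_right_comm, hggm, hd2]
  have hx2gm : x₂ \ gm = x₂ := by rw [← hd1, sdiff_right_comm, hggm, hd1]
  have hx21 : x₂ \ x₁ = x₂ := by rw [← hd1, sdiff_idem]
  have hx12 : x₁ \ x₂ = x₁ := by rw [← hd2, sdiff_idem]
  have hdichS : ∀ s ∈ S, g ≤ s ∨ s ⊓ g ≤ gm := fun s hs => dich hS hg hlub hs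
  -- the normal form set
  set T' : Set L := {t | ∃ a ∈ S, ∃ b ∈ S, ∃ c ∈ S, t = a ⊔ b ⊓ x₁ ⊔ c ⊓ x₂} with hT'def
  have hmemS : ∀ s ∈ S, s ∈ T' := fun s hs => ⟨s, hs, ⊥, hbotS, ⊥, hbotS, by simp⟩
  have hmemx1 : x₁ ∈ T' := ⟨⊥, hbotS, ⊤, htopS, ⊥, hbotS, by simp⟩
  have hmemx2 : x₂ ∈ T' := ⟨⊥, hbotS, ⊥, hbotS, ⊤, htopS, by simp⟩
  have hsupT' : ∀ u ∈ T', ∀ v ∈ T', u ⊔ v ∈ T' := by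
    rintro u ⟨a, ha, b, hb, c, hc, rfl⟩ v ⟨a', ha', b', hb', c', hc', rfl⟩
    refine ⟨a ⊔ a', sup_mem hS ha ha', b ⊔ b', sup_mem hS hb hb',
      c ⊔ c', sup_mem hS hc hc', ?_⟩
    rw [inf_sup_right, inf_sup_right]
    ac_rfl
  have hinfT' : ∀ u ∈ T', ∀ v ∈ T', u ⊓ v ∈ T' := by
    rintro u ⟨a, ha, b, hb, c, hc, rfl⟩ v ⟨a', ha', b', hb', c', hc', rfl⟩
    have p1 : ∀ s ∈ S, s ⊓ (a' ⊔ b' ⊓ x₁ ⊔ c' ⊓ x₂) ∈ T' := by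
      intro s hs
      refine ⟨s ⊓ a', inf_mem hS hs ha', s ⊓ b', inf_mem hS hs hb',
        s ⊓ c', inf_mem hS hs hc', ?_⟩
      simp only [inf_sup_left, inf_assoc]
    have p2 : ∀ b₀ ∈ S, (b₀ ⊓ x₁) ⊓ (a' ⊔ b' ⊓ x₁ ⊔ c' ⊓ x₂) ∈ T' := by
      intro b₀ hb₀
      rw [inf_sup_left, inf_sup_left]
      refine hsupT' _ (hsupT' _ ?_ _ ?_) _ ?_
      · rw [inf_right_comm]
        exact ⟨⊥, hbotS, b₀ ⊓ a', inf_mem hS hb₀ ha', ⊥, hbotS, by simp⟩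
      · rw [inf_inf_inf_comm, inf_idem]
        exact ⟨⊥, hbotS, b₀ ⊓ b', inf_mem hS hb₀ hb', ⊥, hbotS, by simp⟩
      · rw [inf_inf_inf_comm]
        exact ⟨b₀ ⊓ c' ⊓ (x₁ ⊓ x₂), inf_mem hS (inf_mem hS hb₀ hc') h12,
          ⊥, hbotS, ⊥, hbotS, by simp⟩
    have p3 : ∀ c₀ ∈ S, (c₀ ⊓ x₂) ⊓ (a' ⊔ b' ⊓ x₁ ⊔ c' ⊓ x₂) ∈ T' := by
      intro c₀ hc₀
      rw [inf_sup_left, inf_sup_left]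
      refine hsupT' _ (hsupT' _ ?_ _ ?_) _ ?_
      · rw [inf_right_comm]
        exact ⟨⊥, hbotS, ⊥, hbotS, c₀ ⊓ a', inf_mem hS hc₀ ha', by simp⟩
      · rw [inf_inf_inf_comm]
        exact ⟨c₀ ⊓ b' ⊓ (x₂ ⊓ x₁), inf_mem hS (inf_mem hS hc₀ hb') h21,
          ⊥, hbotS, ⊥, hbotS, by simp⟩
      · rw [inf_inf_inf_comm, inf_idem]
        exact ⟨⊥, hbotS, ⊥, hbotS, c₀ ⊓ c', inf_mem hS hc₀ hc', by simp⟩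
    rw [inf_sup_right, inf_sup_right]
    exact hsupT' _ (hsupT' _ (p1 a ha) _ (p2 b hb)) _ (p3 c hc)
  -- sdiff of S-elements by x₁, x₂
  have hsdx1 : ∀ s ∈ S, s \ x₁ ∈ T' := by
    intro s hs
    rcases hdichS s hs with h | h
    · have heq : s \ x₁ = s \ g ⊔ x₂ := by
        apply le_antisymm
        · rw [sdiff_le_iff]
          calc s ≤ s \ g ⊔ g := le_sdiff_sup
            _ = s \ g ⊔ (x₁ ⊔ x₂) := by rw [hg12]
            _ ≤ x₁ ⊔ (s \ g ⊔ x₂) := by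
                apply sup_le
                · exact le_sup_of_le_right le_sup_left
                · exact sup_le le_sup_left (le_sup_of_le_right le_sup_right)
        · apply sup_le (sdiff_le_sdiff_left hx1g)
          rw [← hd1]
          exact sdiff_le_sdiff_right h
      rw [heq]
      exact ⟨s \ g, sdiff_mem hS hs hgS, ⊥, hbotS, ⊤, htopS, by simp⟩
    · exact hmemS _ (sdiff_low hS hx1g hgmx1 hs h)
  have hsdx2 : ∀ s ∈ S, s \ x₂ ∈ T' := by
    intro s hs
    rcases hdichS s hs with h | h
    · have heq : s \ x₂ = s \ g ⊔ x₁ := by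
        apply le_antisymm
        · rw [sdiff_le_iff]
          calc s ≤ s \ g ⊔ g := le_sdiff_sup
            _ = s \ g ⊔ (x₁ ⊔ x₂) := by rw [hg12]
            _ ≤ x₂ ⊔ (s \ g ⊔ x₁) := by
                apply sup_le
                · exact le_sup_of_le_right le_sup_left
                · exact sup_le (le_sup_of_le_right le_sup_right) le_sup_left
        · apply sup_le (sdiff_le_sdiff_left hx2g)
          rw [← hd2]
          exact sdiff_le_sdiff_right h
      rw [heq]
      exact ⟨s \ g, sdiff_mem hS hs hgS, ⊤, htopS, ⊥, hbotS, by simp⟩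
    · exact hmemS _ (sdiff_low hS hx2g hgmx2 hs h)
  -- T' sdiff an S-element
  have hTds : ∀ t ∈ T', ∀ s ∈ S, t \ s ∈ T' := by
    rintro t ⟨a, ha, b, hb, c, hc, rfl⟩ s hs
    rw [sup_sdiff, sup_sdiff]
    refine hsupT' _ (hsupT' _ (hmemS _ (sdiff_mem hS ha hs)) _ ?_) _ ?_
    · rcases hdichS s hs with h | h
      · have hle : b ⊓ x₁ ≤ s := le_trans inf_le_right (hx1g.trans h)
        rw [sdiff_eq_bot_iff.mpr hle]
        exact hmemS _ hbotS
      · rcases fold_lemma hS hg hlub hx1g hgmx1 hb with h2 | h2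
        · rw [h2, sdiff_small hx1g hx1gm h]
          exact hmemx1
        · exact hmemS _ (sdiff_mem hS h2.1 hs)
    · rcases hdichS s hs with h | h
      · have hle : c ⊓ x₂ ≤ s := le_trans inf_le_right (hx2g.trans h)
        rw [sdiff_eq_bot_iff.mpr hle]
        exact hmemS _ hbotS
      · rcases fold_lemma hS hg hlub hx2g hgmx2 hc with h2 | h2
        · rw [h2, sdiff_small hx2g hx2gm h]
          exact hmemx2
        · exact hmemS _ (sdiff_mem hS h2.1 hs)
  -- T' sdiff x₁ and x₂
  have hTdx1 : ∀ t ∈ T', t \ x₁ ∈ T' := by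
    rintro t ⟨a, ha, b, hb, c, hc, rfl⟩
    rw [sup_sdiff, sup_sdiff]
    refine hsupT' _ (hsupT' _ (hsdx1 a ha) _ ?_) _ ?_
    · rw [sdiff_eq_bot_iff.mpr inf_le_right]
      exact hmemS _ hbotS
    · rcases fold_lemma hS hg hlub hx2g hgmx2 hc with h2 | h2
      · rw [h2, hx21]
        exact hmemx2
      · exact hsdx1 _ h2.1
  have hTdx2 : ∀ t ∈ T', t \ x₂ ∈ T' := by
    rintro t ⟨a, ha, b, hb, c, hc, rfl⟩
    rw [sup_sdiff, sup_sdiff]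
    refine hsupT' _ (hsupT' _ (hsdx2 a ha) _ ?_) _ ?_
    · rcases fold_lemma hS hg hlub hx1g hgmx1 hb with h2 | h2
      · rw [h2, hx12]
        exact hmemx1
      · exact hsdx2 _ h2.1
    · rw [sdiff_eq_bot_iff.mpr inf_le_right]
      exact hmemS _ hbotS
  have hTsd : ∀ t ∈ T', ∀ v ∈ T', t \ v ∈ T' := by
    intro t ht v hv
    obtain ⟨a', ha', b', hb', c', hc', rfl⟩ := hv
    have key1 : ∀ u ∈ T', u \ (b' ⊓ x₁) ∈ T' := by
      intro u hu
      rw [sdiff_inf]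
      exact hsupT' _ (hTds u hu b' hb') _ (hTdx1 u hu)
    have key2 : ∀ u ∈ T', u \ (c' ⊓ x₂) ∈ T' := by
      intro u hu
      rw [sdiff_inf]
      exact hsupT' _ (hTds u hu c' hc') _ (hTdx2 u hu)
    rw [← sdiff_sdiff, ← sdiff_sdiff]
    exact key2 _ (key1 _ (hTds t ht a' ha'))
  have hT'alg : IsSubalg T' :=
    ⟨hmemS _ hbotS, hmemS _ htopS, fun u hu v hv =>
      ⟨hsupT' u hu v hv, hinfT' u hu v hv, hTsd u hu v hv⟩⟩
  have huniv : ∀ t : L, t ∈ T' :=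
    fun t => hgen.2.2.2.2 T' hT'alg (fun s hs => hmemS s hs) hmemx1 hmemx2 (Set.mem_univ t)
  have hrefined : ∀ u : L, ∃ s ∈ S, u = s ∨ u = s ⊔ x₁ ∨ u = s ⊔ x₂ ∨ u = s ⊔ x₁ ⊔ x₂ := by
    intro u
    obtain ⟨a, ha, b, hb, c, hc, rfl⟩ := huniv u
    rcases fold_lemma hS hg hlub hx1g hgmx1 hb with h1 | h1 <;>
      rcases fold_lemma hS hg hlub hx2g hgmx2 hc with h2 | h2
    · exact ⟨a, ha, Or.inr (Or.inr (Or.inr (by rw [h1, h2])))⟩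
    · refine ⟨a ⊔ c ⊓ x₂, sup_mem hS ha h2.1, Or.inr (Or.inl ?_)⟩
      rw [h1]; ac_rfl
    · exact ⟨a ⊔ b ⊓ x₁, sup_mem hS ha h1.1, Or.inr (Or.inr (Or.inl (by rw [h2])))⟩
    · exact ⟨a ⊔ b ⊓ x₁ ⊔ c ⊓ x₂, sup_mem hS (sup_mem hS ha h1.1) h2.1, Or.inl rfl⟩
  have hgne1 : ¬ x₂ ≤ x₁ := by
    intro hle
    apply hx1
    have hag : g = x₁ := le_antisymm (by rw [hg12]; exact sup_le le_rfl hle) hx1g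
    rw [← hag]; exact hgS
  have hgne2 : ¬ x₁ ≤ x₂ := by
    intro hle
    apply hx2
    have hag : g = x₂ := le_antisymm (by rw [hg12]; exact sup_le hle le_rfl) hx2g
    rw [← hag]; exact hgS
  have hirrx1 : SupIrred x₁ := by
    constructor
    · intro hmin
      exact hx1 (by rw [hmin.eq_bot]; exact hbotS)
    · intro u v huv
      have hux : u ≤ x₁ := huv ▸ le_sup_left
      have hvx : v ≤ x₁ := huv ▸ le_sup_right
      have key : ∀ w, w ≤ x₁ → ∀ sw ∈ S,
          (w = sw ∨ w = sw ⊔ x₁ ∨ w = sw ⊔ x₂ ∨ w = sw ⊔ x₁ ⊔ x₂) → w = x₁ ∨ w ∈ S := by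
        intro w hw sw hsw hwc
        rcases hwc with h | h | h | h
        · exact Or.inr (by rw [h]; exact hsw)
        · exact Or.inl (le_antisymm hw (by rw [h]; exact le_sup_right))
        · exact absurd (le_trans (by rw [h]; exact le_sup_right : x₂ ≤ w) hw) hgne1
        · exact absurd (le_trans (by rw [h]; exact le_sup_right : x₂ ≤ w) hw) hgne1
      obtain ⟨su, hsu, hucase⟩ := hrefined u
      obtain ⟨sv, hsv, hvcase⟩ := hrefined v
      rcases key u hux su hsu hucase with h | h
      · exact Or.inl h
      · rcases key v hvx sv hsv hvcase with h2 | h2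
        · exact Or.inr h2
        · exact absurd (by rw [← huv]; exact sup_mem hS h h2) hx1
  have hirrx2 : SupIrred x₂ := by
    constructor
    · intro hmin
      exact hx2 (by rw [hmin.eq_bot]; exact hbotS)
    · intro u v huv
      have hux : u ≤ x₂ := huv ▸ le_sup_left
      have hvx : v ≤ x₂ := huv ▸ le_sup_right
      have key : ∀ w, w ≤ x₂ → ∀ sw ∈ S,
          (w = sw ∨ w = sw ⊔ x₁ ∨ w = sw ⊔ x₂ ∨ w = sw ⊔ x₁ ⊔ x₂) → w = x₂ ∨ w ∈ S := by
        intro w hw sw hsw hwc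
        rcases hwc with h | h | h | h
        · exact Or.inr (by rw [h]; exact hsw)
        · exact absurd (le_trans (by rw [h]; exact le_sup_right : x₁ ≤ w) hw) hgne2
        · exact Or.inl (le_antisymm hw (by rw [h]; exact le_sup_right))
        · exact absurd (le_trans (by rw [h]; exact le_sup_of_le_left le_sup_right : x₁ ≤ w) hw) hgne2
      obtain ⟨su, hsu, hucase⟩ := hrefined u
      obtain ⟨sv, hsv, hvcase⟩ := hrefined v
      rcases key u hux su hsu hucase with h | h
      · exact Or.inl h
      · rcases key v hvx sv hsv hvcase with h2 | h2
        · exact Or.inr h2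
        · exact absurd (by rw [← huv]; exact sup_mem hS h h2) hx2
  -- now the set equality
  ext a
  simp only [Set.mem_setOf_eq, Set.mem_union, Set.mem_diff, Set.mem_insert_iff,
    Set.mem_singleton_iff]
  constructor
  · intro ha
    have hane : a ≠ ⊥ := fun h => ha.1 (h ▸ isMin_bot)
    have hmkS : ∀ s ∈ S, a = s → (SupIrredIn S a ∧ ¬a = g) := by
      intro s hs has
      have haS : a ∈ S := by rw [has]; exact hs
      refine ⟨⟨haS, hane, ?_⟩, ?_⟩
      · intro u _ v _ huv
        rcases ha.2 huv.symm with h | h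
        · exact Or.inl h.symm
        · exact Or.inr h.symm
      · intro hag
        have hsum : x₁ ⊔ x₂ = a := by rw [hag]; exact hg12.symm
        rcases ha.2 hsum with h | h
        · exact hx1 (by rw [h]; exact haS)
        · exact hx2 (by rw [h]; exact haS)
    obtain ⟨s, hs, hcases⟩ := hrefined a
    rcases hcases with h | h | h | h
    · exact Or.inl (hmkS s hs h)
    · rcases ha.2 h.symm with h1 | h1
      · exact Or.inl (hmkS s hs h1.symm)
      · exact Or.inr (Or.inl h1.symm)
    · rcases ha.2 h.symm with h1 | h1
      · exact Or.inl (hmkS s hs h1.symm)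
      · exact Or.inr (Or.inr h1.symm)
    · rcases ha.2 h.symm with h1 | h1
      · rcases ha.2 h1 with h2 | h2
        · exact Or.inl (hmkS s hs h2.symm)
        · exact Or.inr (Or.inl h2.symm)
      · exact Or.inr (Or.inr h1.symm)
  · intro hcase
    rcases hcase with ⟨⟨haS, habot, hbin⟩, hag⟩ | h | h
    · constructor
      · intro hmin; exact habot hmin.eq_bot
      · intro u v huv
        have hua : u ≤ a := huv ▸ le_sup_left
        have hva : v ≤ a := huv ▸ le_sup_right
        obtain ⟨su, hsu, hucase⟩ := hrefined u
        obtain ⟨sv, hsv, hvcase⟩ := hrefined v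
        by_cases hxa : x₁ ≤ a ∨ x₂ ≤ a
        · have hga : g ≤ a := by
            rcases hdichS a haS with h | h
            · exact h
            · exfalso
              rcases hxa with hx | hx
              · apply hx1
                have h1 : x₁ ≤ gm := le_trans (le_inf hx hx1g) h
                rw [← inf_eq_right.mpr h1]
                exact hgmx1
              · apply hx2
                have h1 : x₂ ≤ gm := le_trans (le_inf hx hx2g) h
                rw [← inf_eq_right.mpr h1]
                exact hgmx2
          have hadg : a \ g = a := by
            have hdc : a = g ⊔ a \ g := by
              have h := decomp a g
              rwa [inf_eq_right.mpr hga] at h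
            rcases hbin g hgS (a \ g) (sdiff_mem hS haS hgS) hdc with h | h
            · exact absurd h hag
            · exact h.symm
          have hug : ∀ w : L, ∀ sw ∈ S,
              (w = sw ∨ w = sw ⊔ x₁ ∨ w = sw ⊔ x₂ ∨ w = sw ⊔ x₁ ⊔ x₂) → w \ g = sw \ g := by
            intro w sw _ hwc
            have e1 : x₁ \ g = ⊥ := sdiff_eq_bot_iff.mpr hx1g
            have e2 : x₂ \ g = ⊥ := sdiff_eq_bot_iff.mpr hx2g
            rcases hwc with h | h | h | h <;> rw [h] <;> simp [sup_sdiff, e1, e2]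
          have hadg2 : a = u \ g ⊔ v \ g := by rw [← sup_sdiff, huv, hadg]
          rcases hbin (u \ g) (by rw [hug u su hsu hucase]; exact sdiff_mem hS hsu hgS)
              (v \ g) (by rw [hug v sv hsv hvcase]; exact sdiff_mem hS hsv hgS)
              hadg2 with h | h
          · left
            exact le_antisymm hua (by rw [h]; exact sdiff_le)
          · right
            exact le_antisymm hva (by rw [h]; exact sdiff_le)
        · push_neg at hxa
          have hu' : u = su := by
            rcases hucase with h | h | h | h
            · exact h
            · exact absurd (le_trans (by rw [h]; exact le_sup_right) hua) hxa.1
            · exact absurd (le_trans (by rw [h]; exact le_sup_right) hua) hxa.2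
            · exact absurd (le_trans (by rw [h]; exact le_sup_right) hua) hxa.2
          have hv' : v = sv := by
            rcases hvcase with h | h | h | h
            · exact h
            · exact absurd (le_trans (by rw [h]; exact le_sup_right) hva) hxa.1
            · exact absurd (le_trans (by rw [h]; exact le_sup_right) hva) hxa.2
            · exact absurd (le_trans (by rw [h]; exact le_sup_right) hva) hxa.2
          rcases hbin u (by rw [hu']; exact hsu) v (by rw [hv']; exact hsv) huv.symm with h | h
          · exact Or.inl h.symm
          · exact Or.inr h.symm
    · rw [h]; exact hirrx1
    · rw [h]; exact hirrx2
lemma case_eq {L : Type*} [CoheytingAlgebra L] {S : Set L} (hfin : S.Finite)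
    (hS : IsSubalg S) {g gm x₁ : L}
    (hx1 : x₁ ∉ S) (hg : SupIrredIn S g)
    (hlub : IsLUB {b | b ∈ S ∧ b < g} gm)
    (hgmx1 : gm ⊓ x₁ ∈ S) (hll1 : Ll (gm ⊓ x₁) x₁) (hll2 : Ll x₁ g)
    (hgen : GeneratesOver S Set.univ x₁ x₁) :
    {a : L | SupIrred a} = {a : L | SupIrredIn S a} ∪ {x₁} := by
  obtain ⟨hgmS, hgmlt, hggm⟩ := gm_facts hfin hS hg hlub
  have hbotS : (⊥ : L) ∈ S := hS.1
  have htopS : (⊤ : L) ∈ S := hS.2.1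
  have hgS : g ∈ S := hg.1
  have hx1g : x₁ ≤ g := hll2.2
  have hgx : g \ x₁ = g := hll2.1
  have hx1gm : x₁ \ gm = x₁ := by
    have h := hll1.1
    rwa [sdiff_inf, sdiff_self, sup_bot_eq] at h
  have hdichS : ∀ s ∈ S, g ≤ s ∨ s ⊓ g ≤ gm := fun s hs => dich hS hg hlub hs
  -- sdiff of an S-element by x₁ stays in S
  have hsdx1 : ∀ s ∈ S, s \ x₁ ∈ S := by
    intro s hs
    rcases hdichS s hs with h | h
    · have heq : s \ x₁ = s := by
        apply le_antisymm sdiff_le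
        have h2 : x₁ ≤ s \ x₁ := hx1g.trans (by rw [← hgx]; exact sdiff_le_sdiff_right h)
        exact le_trans le_sup_sdiff (sup_le h2 le_rfl)
      rw [heq]; exact hs
    · exact sdiff_low hS hx1g hgmx1 hs h
  -- the normal form set
  set T' : Set L := {t | ∃ a ∈ S, ∃ b ∈ S, t = a ⊔ b ⊓ x₁} with hT'def
  have hmemS : ∀ s ∈ S, s ∈ T' := fun s hs => ⟨s, hs, ⊥, hbotS, by simp⟩
  have hmemx1 : x₁ ∈ T' := ⟨⊥, hbotS, ⊤, htopS, by simp⟩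
  have hsupT' : ∀ u ∈ T', ∀ v ∈ T', u ⊔ v ∈ T' := by
    rintro u ⟨a, ha, b, hb, rfl⟩ v ⟨a', ha', b', hb', rfl⟩
    refine ⟨a ⊔ a', sup_mem hS ha ha', b ⊔ b', sup_mem hS hb hb', ?_⟩
    rw [inf_sup_right]
    ac_rfl
  have hinfT' : ∀ u ∈ T', ∀ v ∈ T', u ⊓ v ∈ T' := by
    rintro u ⟨a, ha, b, hb, rfl⟩ v ⟨a', ha', b', hb', rfl⟩
    have p1 : ∀ s ∈ S, s ⊓ (a' ⊔ b' ⊓ x₁) ∈ T' := by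
      intro s hs
      refine ⟨s ⊓ a', inf_mem hS hs ha', s ⊓ b', inf_mem hS hs hb', ?_⟩
      simp only [inf_sup_left, inf_assoc]
    have p2 : ∀ b₀ ∈ S, (b₀ ⊓ x₁) ⊓ (a' ⊔ b' ⊓ x₁) ∈ T' := by
      intro b₀ hb₀
      rw [inf_sup_left]
      refine hsupT' _ ?_ _ ?_
      · rw [inf_right_comm]
        exact ⟨⊥, hbotS, b₀ ⊓ a', inf_mem hS hb₀ ha', by simp⟩
      · rw [inf_inf_inf_comm, inf_idem]
        exact ⟨⊥, hbotS, b₀ ⊓ b', inf_mem hS hb₀ hb', by simp⟩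
    rw [inf_sup_right]
    exact hsupT' _ (p1 a ha) _ (p2 b hb)
  have hTds : ∀ t ∈ T', ∀ s ∈ S, t \ s ∈ T' := by
    rintro t ⟨a, ha, b, hb, rfl⟩ s hs
    rw [sup_sdiff]
    refine hsupT' _ (hmemS _ (sdiff_mem hS ha hs)) _ ?_
    rcases hdichS s hs with h | h
    · have hle : b ⊓ x₁ ≤ s := le_trans inf_le_right (hx1g.trans h)
      rw [sdiff_eq_bot_iff.mpr hle]
      exact hmemS _ hbotS
    · rcases fold_lemma hS hg hlub hx1g hgmx1 hb with h2 | h2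
      · rw [h2, sdiff_small hx1g hx1gm h]
        exact hmemx1
      · exact hmemS _ (sdiff_mem hS h2.1 hs)
  have hTdx1 : ∀ t ∈ T', t \ x₁ ∈ T' := by
    rintro t ⟨a, ha, b, hb, rfl⟩
    rw [sup_sdiff]
    refine hsupT' _ (hmemS _ (hsdx1 a ha)) _ ?_
    rw [sdiff_eq_bot_iff.mpr inf_le_right]
    exact hmemS _ hbotS
  have hTsd : ∀ t ∈ T', ∀ v ∈ T', t \ v ∈ T' := by
    intro t ht v hv
    obtain ⟨a', ha', b', hb', rfl⟩ := hv
    have key1 : ∀ u ∈ T', u \ (b' ⊓ x₁) ∈ T' := by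
      intro u hu
      rw [sdiff_inf]
      exact hsupT' _ (hTds u hu b' hb') _ (hTdx1 u hu)
    rw [← sdiff_sdiff]
    exact key1 _ (hTds t ht a' ha')
  have hT'alg : IsSubalg T' :=
    ⟨hmemS _ hbotS, hmemS _ htopS, fun u hu v hv =>
      ⟨hsupT' u hu v hv, hinfT' u hu v hv, hTsd u hu v hv⟩⟩
  have huniv : ∀ t : L, t ∈ T' :=
    fun t => hgen.2.2.2.2 T' hT'alg (fun s hs => hmemS s hs) hmemx1 hmemx1 (Set.mem_univ t)
  have hrefined : ∀ u : L, ∃ s ∈ S, u = s ∨ u = s ⊔ x₁ := by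
    intro u
    obtain ⟨a, ha, b, hb, rfl⟩ := huniv u
    rcases fold_lemma hS hg hlub hx1g hgmx1 hb with h1 | h1
    · exact ⟨a, ha, Or.inr (by rw [h1])⟩
    · exact ⟨a ⊔ b ⊓ x₁, sup_mem hS ha h1.1, Or.inl rfl⟩
  have hirrx1 : SupIrred x₁ := by
    constructor
    · intro hmin
      exact hx1 (by rw [hmin.eq_bot]; exact hbotS)
    · intro u v huv
      have hux : u ≤ x₁ := huv ▸ le_sup_left
      have hvx : v ≤ x₁ := huv ▸ le_sup_right
      have key : ∀ w, w ≤ x₁ → ∀ sw ∈ S, (w = sw ∨ w = sw ⊔ x₁) → w = x₁ ∨ w ∈ S := by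
        intro w hw sw hsw hwc
        rcases hwc with h | h
        · exact Or.inr (by rw [h]; exact hsw)
        · exact Or.inl (le_antisymm hw (by rw [h]; exact le_sup_right))
      obtain ⟨su, hsu, hucase⟩ := hrefined u
      obtain ⟨sv, hsv, hvcase⟩ := hrefined v
      rcases key u hux su hsu hucase with h | h
      · exact Or.inl h
      · rcases key v hvx sv hsv hvcase with h2 | h2
        · exact Or.inr h2
        · exact absurd (by rw [← huv]; exact sup_mem hS h h2) hx1
  ext a
  simp only [Set.mem_setOf_eq, Set.mem_union, Set.mem_singleton_iff]
  constructor
  · intro ha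
    have hane : a ≠ ⊥ := fun h => ha.1 (h ▸ isMin_bot)
    have hmkS : ∀ s ∈ S, a = s → SupIrredIn S a := by
      intro s hs has
      have haS : a ∈ S := by rw [has]; exact hs
      refine ⟨haS, hane, ?_⟩
      intro u _ v _ huv
      rcases ha.2 huv.symm with h | h
      · exact Or.inl h.symm
      · exact Or.inr h.symm
    obtain ⟨s, hs, hcases⟩ := hrefined a
    rcases hcases with h | h
    · exact Or.inl (hmkS s hs h)
    · rcases ha.2 h.symm with h1 | h1
      · exact Or.inl (hmkS s hs h1.symm)
      · exact Or.inr h1.symm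
  · intro hcase
    rcases hcase with ⟨haS, habot, hbin⟩ | h
    · constructor
      · intro hmin; exact habot hmin.eq_bot
      · intro u v huv
        have hua : u ≤ a := huv ▸ le_sup_left
        have hva : v ≤ a := huv ▸ le_sup_right
        obtain ⟨su, hsu, hucase⟩ := hrefined u
        obtain ⟨sv, hsv, hvcase⟩ := hrefined v
        by_cases hxa : x₁ ≤ a
        · have hga : g ≤ a := by
            rcases hdichS a haS with h | h
            · exact h
            · exfalso
              apply hx1
              have h1 : x₁ ≤ gm := le_trans (le_inf hxa hx1g) h
              rw [← inf_eq_right.mpr h1]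
              exact hgmx1
          have hadx : a \ x₁ = a := by
            apply le_antisymm sdiff_le
            have h2 : x₁ ≤ a \ x₁ := hx1g.trans (by rw [← hgx]; exact sdiff_le_sdiff_right hga)
            exact le_trans le_sup_sdiff (sup_le h2 le_rfl)
          have hug : ∀ w : L, ∀ sw ∈ S, (w = sw ∨ w = sw ⊔ x₁) → w \ x₁ = sw \ x₁ := by
            intro w sw _ hwc
            rcases hwc with h | h <;> rw [h] <;> simp [sup_sdiff]
          have hadg2 : a = u \ x₁ ⊔ v \ x₁ := by rw [← sup_sdiff, huv, hadx]
          rcases hbin (u \ x₁) (by rw [hug u su hsu hucase]; exact hsdx1 su hsu)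
              (v \ x₁) (by rw [hug v sv hsv hvcase]; exact hsdx1 sv hsv)
              hadg2 with h | h
          · left
            exact le_antisymm hua (by rw [h]; exact sdiff_le)
          · right
            exact le_antisymm hva (by rw [h]; exact sdiff_le)
        · have hu' : u = su := by
            rcases hucase with h | h
            · exact h
            · exact absurd (le_trans (by rw [h]; exact le_sup_right) hua) hxa
          have hv' : v = sv := by
            rcases hvcase with h | h
            · exact h
            · exact absurd (le_trans (by rw [h]; exact le_sup_right) hva) hxa
          rcases hbin u (by rw [hu']; exact hsu) v (by rw [hv']; exact hsv) huv.symm with h | h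
          · exact Or.inl h.symm
          · exact Or.inr h.symm
    · rw [h]; exact hirrx1

end PrimitiveExtAux

theorem primitive_extension_supIrred {L : Type*} [CoheytingAlgebra L]
    (S : Set L) (hfin : S.Finite) (hS : IsSubalg S) (g gm x₁ x₂ : L)
    (hp : Primitive S g gm x₁ x₂) (hgen : GeneratesOver S Set.univ x₁ x₂) :
    (x₁ = x₂ → {a : L | SupIrred a} = {a : L | SupIrredIn S a} ∪ {x₁}) ∧
    (x₁ ≠ x₂ → {a : L | SupIrred a} = ({a : L | SupIrredIn S a} \ {g}) ∪ {x₁, x₂}) := by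
  obtain ⟨hx1, hx2, hg, hlub, hgmx1, hgmx2, hcase⟩ := hp
  rcases hcase with ⟨heq, hll1, hll2⟩ | ⟨hne, h12, hd1, hd2⟩
  · refine ⟨fun _ => ?_, fun hne => absurd heq hne⟩
    subst heq
    exact PrimitiveExtAux.case_eq hfin hS hx1 hg hlub hgmx1 hll1 hll2 hgen
  · refine ⟨fun heq => absurd heq hne, fun _ => ?_⟩
    exact PrimitiveExtAux.case_ne hfin hS hx1 hx2 hg hlub hgmx1 hgmx2 h12 hd1 hd2 hgen
end

section
/- Every finite proper extension L of a finite co-Heyting algebra L₀ contains a primitive tuple over L₀. Explicitly: if x is minimal in JoinIrr(L) \ L₀ and g = inf{a ∈ L₀ : x ≤ a}, then g is join irreducible in L₀, g⁻ ⊓ x ∈ L₀, and either x ≪ g (in which case (x, x) is primitive over L₀) or (x, g \ x) is primitive over L₀. -/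
section Helpers

variable {L : Type*} [CoheytingAlgebra L]

lemma finsetSup_mem (S : Set L) (hS : IsSubalg S) (t : Finset L) (h : ∀ b ∈ t, b ∈ S) :
    t.sup id ∈ S := by
  classical
  induction t using Finset.cons_induction with
  | empty => simpa using hS.1
  | cons a t ha ih =>
      rw [Finset.sup_cons]
      exact (hS.2.2 a (h a (Finset.mem_cons_self a t)) _
        (ih fun b hb => h b (Finset.mem_cons_of_mem hb))).1

lemma finsetInf_mem (S : Set L) (hS : IsSubalg S) (t : Finset L) (h : ∀ b ∈ t, b ∈ S) :
    t.inf id ∈ S := by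
  classical
  induction t using Finset.cons_induction with
  | empty => simpa using hS.2.1
  | cons a t ha ih =>
      rw [Finset.inf_cons]
      exact (hS.2.2 a (h a (Finset.mem_cons_self a t)) _
        (ih fun b hb => h b (Finset.mem_cons_of_mem hb))).2.1

lemma mem_of_supIrred_le [Finite L] (S : Set L) (hS : IsSubalg S) (a : L)
    (h : ∀ y : L, SupIrred y → y ≤ a → y ∈ S) : a ∈ S := by
  obtain ⟨t, ht, hirr⟩ := exists_supIrred_decomposition a
  exact ht ▸ finsetSup_mem S hS t
    (fun b hb => h b (hirr hb) (ht ▸ Finset.le_sup (f := id) hb))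

lemma supIrredIn_finsetSup (S : Set L) (hS : IsSubalg S) {g : L} (hg : SupIrredIn S g)
    (t : Finset L) (ht : ∀ b ∈ t, b ∈ S) (heq : g = t.sup id) : ∃ b ∈ t, g = b := by
  classical
  induction t using Finset.cons_induction with
  | empty => exact absurd (by simpa using heq) hg.2.1
  | cons a t ha ih =>
      rw [Finset.sup_cons] at heq
      have htS : t.sup id ∈ S :=
        finsetSup_mem S hS t (fun b hb => ht b (Finset.mem_cons_of_mem hb))
      rcases hg.2.2 a (ht a (Finset.mem_cons_self a t)) _ htS heq with h | h
      · exact ⟨a, Finset.mem_cons_self a t, h⟩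
      · obtain ⟨b, hb, hgb⟩ := ih (fun b hb => ht b (Finset.mem_cons_of_mem hb)) h
        exact ⟨b, Finset.mem_cons_of_mem hb, hgb⟩

end Helpers

theorem exists_primitive_tuple {L : Type*} [CoheytingAlgebra L] [Finite L]
    (S : Set L) (hS : IsSubalg S) (hne : S ≠ Set.univ) (x g : L)
    (hxirr : SupIrred x) (hxS : x ∉ S)
    (hxmin : ∀ y : L, SupIrred y → y ∉ S → y ≤ x → y = x)
    (hg : IsGLB {a | a ∈ S ∧ x ≤ a} g) :
    SupIrredIn S g ∧
    ∃ gm : L, IsLUB {b | b ∈ S ∧ b < g} gm ∧ gm ⊓ x ∈ S ∧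
      ((Ll x g ∧ Primitive S g gm x x) ∨ Primitive S g gm x (g \ x)) := by
  classical
  have hxg : x ≤ g := hg.2 (fun a ha => ha.2)
  have hxbot : x ≠ ⊥ := hxirr.ne_bot
  have hgbot : g ≠ ⊥ := fun h => hxbot (le_bot_iff.mp (h ▸ hxg))
  have hfin : {a : L | a ∈ S ∧ x ≤ a}.Finite := Set.toFinite _
  have hglb' : IsGLB {a : L | a ∈ S ∧ x ≤ a} (hfin.toFinset.inf id) := by
    constructor
    · intro a ha
      exact Finset.inf_le (f := id) (hfin.mem_toFinset.mpr ha)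
    · intro b hb
      exact Finset.le_inf fun a ha => hb (hfin.mem_toFinset.mp ha)
  have hgeq : g = hfin.toFinset.inf id := hg.unique hglb'
  have hgS : g ∈ S := by
    rw [hgeq]
    exact finsetInf_mem S hS _ (fun b hb => (hfin.mem_toFinset.mp hb).1)
  have hgle : ∀ a ∈ S, x ≤ a → g ≤ a := fun a haS hxa => hg.1 ⟨haS, hxa⟩
  have hxp : SupPrime x := supPrime_iff_supIrred.mpr hxirr
  have hprime : ∀ b c : L, x ≤ b ⊔ c → x ≤ b ∨ x ≤ c := fun b c h => hxp.2 h
  have hirrg : SupIrredIn S g := by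
    refine ⟨hgS, hgbot, fun a haS b hbS hab => ?_⟩
    rcases hprime a b (hab ▸ hxg) with h | h
    · exact Or.inl (le_antisymm (hgle a haS h) (le_sup_left.trans hab.ge))
    · exact Or.inr (le_antisymm (hgle b hbS h) (le_sup_right.trans hab.ge))
  have hfin2 : {b : L | b ∈ S ∧ b < g}.Finite := Set.toFinite _
  set gm := hfin2.toFinset.sup id with hgmdef
  have hlub : IsLUB {b : L | b ∈ S ∧ b < g} gm := by
    constructor
    · intro b hb
      exact Finset.le_sup (f := id) (hfin2.mem_toFinset.mpr hb)
    · intro c hc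
      exact Finset.sup_le fun b hb => hc (hfin2.mem_toFinset.mp hb)
  have hgmS : gm ∈ S := finsetSup_mem S hS _ (fun b hb => (hfin2.mem_toFinset.mp hb).1)
  have hgmle : gm ≤ g := Finset.sup_le fun b hb => (hfin2.mem_toFinset.mp hb).2.le
  have hgmlt : gm < g := by
    rcases lt_or_eq_of_le hgmle with h | h
    · exact h
    · obtain ⟨b, hb, hgb⟩ := supIrredIn_finsetSup S hS hirrg _
        (fun b hb => (hfin2.mem_toFinset.mp hb).1) h.symm
      exact absurd hgb.symm (hfin2.mem_toFinset.mp hb).2.ne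
  have hxgm : ¬ x ≤ gm := fun h => absurd (hgle gm hgmS h) hgmlt.not_ge
  have hsd : ∀ b : L, ¬ x ≤ b → x \ b = x := fun b hb =>
    le_antisymm sdiff_le ((hprime b (x \ b) le_sup_sdiff).resolve_left hb)
  have hgmx : gm ⊓ x ∈ S := by
    refine mem_of_supIrred_le S hS _ (fun y hy hyle => ?_)
    by_contra hyS
    have hyx := hxmin y hy hyS (hyle.trans inf_le_right)
    subst hyx
    exact hxgm (hyle.trans inf_le_left)
  refine ⟨hirrg, gm, hlub, hgmx, ?_⟩
  by_cases hcase : g \ x = g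
  · left
    have hLl : Ll x g := ⟨hcase, hxg⟩
    refine ⟨hLl, hxS, hxS, hirrg, hlub, hgmx, hgmx, Or.inl ⟨rfl, ⟨?_, inf_le_right⟩, hLl⟩⟩
    rw [sdiff_inf, sdiff_self, sup_bot_eq, hsd gm hxgm]
  · right
    have hxngx : ¬ x ≤ g \ x := by
      intro h
      exact hcase (le_antisymm sdiff_le (le_sup_sdiff.trans (sup_le h le_rfl)))
    have hgg : g \ (g \ x) = x := by
      apply le_antisymm
      · exact sdiff_le_iff.mpr (by rw [sup_comm]; exact le_sup_sdiff)
      · exact (hprime (g \ x) (g \ (g \ x)) (hxg.trans le_sup_sdiff)).resolve_left hxngx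
    have hx2S : g \ x ∉ S := fun h => hxS (hgg ▸ (hS.2.2 g hgS _ h).2.2)
    have hne2 : x ≠ g \ x := fun h => hxngx h.le
    have hd : x ⊓ (g \ x) ∈ S := by
      refine mem_of_supIrred_le S hS _ (fun y hy hyle => ?_)
      by_contra hyS
      have hyx := hxmin y hy hyS (hyle.trans inf_le_left)
      subst hyx
      exact hxngx (hyle.trans inf_le_right)
    have hgmsd : gm \ x ∈ S := by
      have h1 : gm \ (gm ⊓ x) = gm \ x := sdiff_inf_self_left gm x
      exact h1 ▸ (hS.2.2 gm hgmS _ hgmx).2.2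
    have hkey : gm ⊓ (g \ x) = (gm \ x) ⊔ (gm ⊓ (x ⊓ (g \ x))) := by
      apply le_antisymm
      · have h1 : gm ⊓ (g \ x) ≤ (gm ⊓ (g \ x)) ⊓ (x ⊔ gm \ x) :=
          le_inf le_rfl (inf_le_left.trans le_sup_sdiff)
        rw [inf_sup_left] at h1
        refine h1.trans (sup_le ?_ (le_sup_of_le_left inf_le_right))
        have : gm ⊓ (g \ x) ⊓ x = gm ⊓ (x ⊓ (g \ x)) := by ac_rfl
        rw [this]
        exact le_sup_right
      · exact sup_le (le_inf sdiff_le (sdiff_le_sdiff_right hgmle))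
          (inf_le_inf_left _ inf_le_right)
    have hgm2 : gm ⊓ (g \ x) ∈ S := by
      rw [hkey]
      exact (hS.2.2 _ hgmsd _ (hS.2.2 gm hgmS _ hd).2.1).1
    exact ⟨hxS, hx2S, hirrg, hlub, hgmx, hgm2, Or.inr ⟨hne2, hd, rfl, hgg⟩⟩
end

section
/- Every finite proper extension of a finite co-Heyting algebra L₀ is the union of a finite tower L₀ ⊆ L₁ ⊆ ⋯ ⊆ Lₙ = L of co-Heyting subalgebras in which each Lᵢ₊₁ is generated over Lᵢ by a primitive tuple over Lᵢ. -/
section Aux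

variable {L : Type*} [CoheytingAlgebra L] [Finite L]

/-- To prove `a ≤ b` it suffices to consider sup-prime elements below `a`. -/
private lemma prime_le_crit {a b : L} (h : ∀ p : L, SupPrime p → p ≤ a → p ≤ b) : a ≤ b := by
  obtain ⟨s, hsup, hirr⟩ := exists_supIrred_decomposition a
  rw [← hsup]
  exact Finset.sup_le fun i hi => h i ((hirr hi).supPrime)
    (hsup ▸ Finset.le_sup (f := id) hi)

/-- Every proper co-Heyting subalgebra of a finite co-Heyting algebra admits a
primitive tuple over it. -/
private lemma exists_primitive (S : Set L) (hS : IsSubalg S) (hne : S ≠ Set.univ) :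
    ∃ g gm x₁ x₂ : L, Primitive S g gm x₁ x₂ := by
  classical
  letI : Fintype L := Fintype.ofFinite L
  obtain ⟨hbot, htop, hcl⟩ := hS
  have hsup_cl : ∀ a ∈ S, ∀ b ∈ S, a ⊔ b ∈ S := fun a ha b hb => (hcl a ha b hb).1
  have hinf_cl : ∀ a ∈ S, ∀ b ∈ S, a ⊓ b ∈ S := fun a ha b hb => (hcl a ha b hb).2.1
  have hsdiff_cl : ∀ a ∈ S, ∀ b ∈ S, a \ b ∈ S := fun a ha b hb => (hcl a ha b hb).2.2
  -- the least element of `S` above `p`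
  set F : L → Finset L := fun p => Finset.univ.filter fun s => s ∈ S ∧ p ≤ s with hF
  have hFne : ∀ p : L, (F p).Nonempty :=
    fun p => ⟨⊤, Finset.mem_filter.2 ⟨Finset.mem_univ _, htop, le_top⟩⟩
  set sp : L → L := fun p => (F p).inf' (hFne p) id with hspdef
  have hsp_le : ∀ p t : L, t ∈ S → p ≤ t → sp p ≤ t := fun p t ht hpt =>
    Finset.inf'_le id (Finset.mem_filter.2 ⟨Finset.mem_univ _, ht, hpt⟩)
  have hle_sp : ∀ p : L, p ≤ sp p := fun p =>
    Finset.le_inf' _ id fun b hb => (Finset.mem_filter.1 hb).2.2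
  have hsp_mem : ∀ p : L, sp p ∈ S := by
    intro p
    have := Finset.inf'_mem {a : L | a ∈ S ∧ p ≤ a}
      (fun x hx y hy => ⟨hinf_cl x hx.1 y hy.1, le_inf hx.2 hy.2⟩)
      (F p) (hFne p) id (fun i hi => (Finset.mem_filter.1 hi).2)
    exact this.1
  -- membership criterion
  have hmem_crit : ∀ a : L, (∀ p : L, SupPrime p → p ≤ a → sp p ≤ a) → a ∈ S := by
    intro a ha
    set t := Finset.univ.filter fun p : L => SupPrime p ∧ p ≤ a with ht
    rcases t.eq_empty_or_nonempty with hte | htne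
    · have hab : a ≤ ⊥ := prime_le_crit fun p hp hpa => by
        exfalso
        have : p ∈ t := Finset.mem_filter.2 ⟨Finset.mem_univ _, hp, hpa⟩
        rw [hte] at this
        exact Finset.notMem_empty p this
      rw [le_bot_iff.1 hab]; exact hbot
    · set c := t.sup' htne sp with hc
      have hcS : c ∈ S := Finset.sup'_mem S hsup_cl t htne sp (fun i _ => hsp_mem i)
      have hac : a ≤ c := prime_le_crit fun p hp hpa =>
        le_trans (hle_sp p)
          (Finset.le_sup' sp (Finset.mem_filter.2 ⟨Finset.mem_univ _, hp, hpa⟩))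
      have hca : c ≤ a := Finset.sup'_le _ _ fun p hp =>
        ha p (Finset.mem_filter.1 hp).2.1 (Finset.mem_filter.1 hp).2.2
      rw [le_antisymm hac hca]; exact hcS
  -- there is a bad prime
  obtain ⟨a, haS⟩ := (Set.ne_univ_iff_exists_notMem S).1 hne
  have hbad : ¬ ∀ p : L, SupPrime p → p ≤ a → sp p ≤ a := fun h => haS (hmem_crit a h)
  push_neg at hbad
  obtain ⟨p₀, hp₀, hp₀a, hp₀sp⟩ := hbad
  -- pick a minimal bad image g
  set B := Finset.univ.filter
    (fun gg : L => ∃ p : L, SupPrime p ∧ sp p = gg ∧ p ≠ sp p) with hB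
  have hBne : B.Nonempty :=
    ⟨sp p₀, Finset.mem_filter.2 ⟨Finset.mem_univ _, p₀, hp₀, rfl,
      fun h => hp₀sp (h ▸ hp₀a)⟩⟩
  obtain ⟨g, hgB, hgmin⟩ := B.exists_minimal hBne
  obtain ⟨p₁, hp₁, hp₁g, hp₁ne⟩ := (Finset.mem_filter.1 hgB).2
  -- pick a minimal prime x in the fiber of g
  set Fz := Finset.univ.filter
    (fun p : L => SupPrime p ∧ sp p = g ∧ p ≠ g) with hFzdef
  have hFzne : Fz.Nonempty :=
    ⟨p₁, Finset.mem_filter.2 ⟨Finset.mem_univ _, hp₁, hp₁g,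
      fun h => hp₁ne (h.trans hp₁g.symm)⟩⟩
  obtain ⟨x, hxFz, hxmin⟩ := Fz.exists_minimal hFzne
  obtain ⟨hxp, hspx, hxg⟩ := (Finset.mem_filter.1 hxFz).2
  have hxleg : x ≤ g := hspx ▸ hle_sp x
  have hxltg : x < g := lt_of_le_of_ne hxleg hxg
  have hgS : g ∈ S := hspx ▸ hsp_mem x
  have hgbot : g ≠ ⊥ := fun h => hxp.ne_bot (le_bot_iff.1 (h ▸ hxleg))
  have hxS : x ∉ S := fun hx =>
    absurd (hspx ▸ hsp_le x x hx le_rfl : g ≤ x) (not_le_of_gt hxltg)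
  -- g is join irreducible in S
  have hgirr : SupIrredIn S g := by
    refine ⟨hgS, hgbot, fun u hu v hv huv => ?_⟩
    have hx_uv : x ≤ u ⊔ v := huv ▸ hxleg
    rcases hxp.2 hx_uv with h | h
    · exact Or.inl (le_antisymm (hspx ▸ hsp_le x u hu h) (by rw [huv]; exact le_sup_left))
    · exact Or.inr (le_antisymm (hspx ▸ hsp_le x v hv h) (by rw [huv]; exact le_sup_right))
  -- the predecessor gm of g in S
  set Gm := Finset.univ.filter (fun b : L => b ∈ S ∧ b < g) with hGmdef
  have hGmne : Gm.Nonempty :=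
    ⟨⊥, Finset.mem_filter.2 ⟨Finset.mem_univ _, hbot, bot_lt_iff_ne_bot.2 hgbot⟩⟩
  set gm := Gm.sup' hGmne id with hgmdef
  have hgm_mem_lt : gm ∈ {b : L | b ∈ S ∧ b < g} := by
    refine Finset.sup'_mem _ ?_ _ hGmne id (fun i hi => (Finset.mem_filter.1 hi).2)
    rintro u ⟨huS, hug⟩ v ⟨hvS, hvg⟩
    refine ⟨hsup_cl u huS v hvS, lt_of_le_of_ne (sup_le hug.le hvg.le) ?_⟩
    intro h
    rcases hgirr.2.2 u huS v hvS h.symm with h' | h'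
    · exact hug.ne h'.symm
    · exact hvg.ne h'.symm
  have hgmS : gm ∈ S := hgm_mem_lt.1
  have hgmlt : gm < g := hgm_mem_lt.2
  have hle_gm : ∀ b : L, b ∈ S → b < g → b ≤ gm := fun b hb hbg =>
    Finset.le_sup' id (Finset.mem_filter.2 ⟨Finset.mem_univ _, hb, hbg⟩)
  have hgm_lub : IsLUB {b : L | b ∈ S ∧ b < g} gm :=
    ⟨fun b hb => hle_gm b hb.1 hb.2,
     fun u hu => Finset.sup'_le _ _ fun b hb => hu (Finset.mem_filter.1 hb).2⟩
  -- minimality of g: primes with small image are good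
  have hgood : ∀ q : L, SupPrime q → sp q < g → sp q = q := by
    intro q hq hlt
    by_contra hne'
    exact not_lt_of_ge (hgmin (y := sp q)
      (Finset.mem_filter.2 ⟨Finset.mem_univ _, q, hq, rfl, fun h => hne' h.symm⟩) hlt.le) hlt
  -- everything below gm is in S
  have hbelow : ∀ a : L, a ≤ gm → a ∈ S := by
    intro b hbgm
    refine hmem_crit b fun p hp hpb => ?_
    have h1 : sp p ≤ gm := hsp_le p gm hgmS (hpb.trans hbgm)
    have h2 : sp p = p := hgood p hp (lt_of_le_of_lt h1 hgmlt)
    rw [h2]; exact hpb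
  -- primes strictly below x are below gm
  have hprime_lt_x : ∀ q : L, SupPrime q → q < x → q ≤ gm := by
    intro q hq hqx
    have hqg : q < g := hqx.trans hxltg
    have hspq_le : sp q ≤ g := hsp_le q g hgS hqg.le
    rcases eq_or_lt_of_le hspq_le with heq | hlt
    · exact absurd hqx (not_lt_of_ge (hxmin (y := q)
        (Finset.mem_filter.2 ⟨Finset.mem_univ _, hq, heq, hqg.ne⟩) hqx.le))
    · have h2 := hgood q hq hlt
      exact hle_gm q (h2 ▸ hsp_mem q) (h2 ▸ hlt)
  -- everything strictly below x is in S
  have hlt_x_mem : ∀ b : L, b < x → b ∈ S := by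
    intro b hbx
    exact hbelow b (prime_le_crit fun p hp hpb => hprime_lt_x p hp (lt_of_le_of_lt hpb hbx))
  set y := g \ x with hydef
  have hgxy : g ≤ x ⊔ y := sdiff_le_iff.1 le_rfl
  have hy1 : ∀ p : L, SupPrime p → p ≤ g → ¬ p ≤ x → p ≤ y := fun p hp hpg hpx =>
    (hp.2 (hpg.trans hgxy)).resolve_left hpx
  have hgmxS : gm ⊓ x ∈ S := hbelow _ inf_le_left
  by_cases hxy : x ≤ y
  · -- primitive tuple of the first kind
    have hgy : g ≤ y := by
      set c := (Finset.univ.filter fun q : L => SupPrime q ∧ q ≤ g ∧ ¬ q ≤ x).sup id with hc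
      have hyc : y ≤ c := by
        refine sdiff_le_iff.2 (prime_le_crit fun p hp hpg => ?_)
        by_cases hpx : p ≤ x
        · exact le_sup_of_le_left hpx
        · exact le_sup_of_le_right
            (Finset.le_sup (f := id)
              (Finset.mem_filter.2 ⟨Finset.mem_univ _, hp, hpg, hpx⟩))
      have hxc : x ≤ c := hxy.trans hyc
      obtain ⟨q, hqmem, hxq⟩ := hxp.le_finset_sup.1 hxc
      obtain ⟨-, hq, hqg, hqx⟩ := Finset.mem_filter.1 hqmem
      have hqy : q ≤ y := hy1 q hq hqg hqx
      refine prime_le_crit fun p hp hpg => ?_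
      by_cases hpx : p ≤ x
      · exact (hpx.trans hxq).trans hqy
      · exact hy1 p hp hpg hpx
    have hgx_eq : g \ x = g := le_antisymm sdiff_le hgy
    have hll1 : Ll (gm ⊓ x) x := by
      refine ⟨le_antisymm sdiff_le ?_, inf_le_right⟩
      have hx2 : x ≤ (gm ⊓ x) ⊔ (x \ (gm ⊓ x)) := sdiff_le_iff.1 le_rfl
      rcases hxp.2 hx2 with h | h
      · exact absurd (hspx ▸ hsp_le x gm hgmS (h.trans inf_le_left))
          (not_le_of_gt hgmlt)
      · exact h
    exact ⟨g, gm, x, x, hxS, hxS, hgirr, hgm_lub, hgmxS, hgmxS,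
      Or.inl ⟨rfl, hll1, hgx_eq, hxleg⟩⟩
  · -- primitive tuple of the second kind
    have hgyx : g \ y = x := by
      refine le_antisymm (sdiff_le_iff.2 (by rw [sup_comm]; exact hgxy)) ?_
      have h2 : x ≤ y ⊔ g \ y := hxleg.trans (sdiff_le_iff.1 le_rfl)
      exact (hxp.2 h2).resolve_left hxy
    have hyS : y ∉ S := fun hyS => hxS (hgyx ▸ hsdiff_cl g hgS y hyS)
    have hxny : x ≠ y := fun h => hxy (le_of_eq h)
    have hxiy : x ⊓ y ∈ S :=
      hlt_x_mem _ (lt_of_le_of_ne inf_le_left fun h => hxy (inf_eq_left.1 h))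
    have hgmyS : gm ⊓ y ∈ S := hbelow _ inf_le_left
    exact ⟨g, gm, x, y, hxS, hyS, hgirr, hgm_lub, hgmxS, hgmyS,
      Or.inr ⟨hxny, hxiy, hydef.symm, hgyx⟩⟩

end Aux

private def genSub {L : Type*} [CoheytingAlgebra L] (S : Set L) (x₁ x₂ : L) : Set L :=
  ⋂₀ {T : Set L | IsSubalg T ∧ S ⊆ T ∧ x₁ ∈ T ∧ x₂ ∈ T}

private lemma genSub_spec {L : Type*} [CoheytingAlgebra L] (S : Set L) (x₁ x₂ : L) :
    GeneratesOver S (genSub S x₁ x₂) x₁ x₂ := by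
  refine ⟨⟨?_, ?_, ?_⟩, ?_, ?_, ?_, ?_⟩
  · exact Set.mem_sInter.2 fun T hT => hT.1.1
  · exact Set.mem_sInter.2 fun T hT => hT.1.2.1
  · intro a ha b hb
    refine ⟨?_, ?_, ?_⟩ <;>
      exact Set.mem_sInter.2 fun T hT => by
        have h := hT.1.2.2 a (Set.mem_sInter.1 ha T hT) b (Set.mem_sInter.1 hb T hT)
        first
          | exact h.1
          | exact h.2.1
          | exact h.2.2
  · exact fun s hs => Set.mem_sInter.2 fun T hT => hT.2.1 hs
  · exact Set.mem_sInter.2 fun T hT => hT.2.2.1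
  · exact Set.mem_sInter.2 fun T hT => hT.2.2.2
  · exact fun Tp h1 h2 h3 h4 => Set.sInter_subset_of_mem ⟨h1, h2, h3, h4⟩

private lemma tower {L : Type*} [CoheytingAlgebra L] [Finite L] :
    ∀ (k : ℕ) (S : Set L), IsSubalg S → (Sᶜ).ncard ≤ k →
    ∃ (n : ℕ) (T : Fin (n + 1) → Set L),
      T 0 = S ∧ T (Fin.last n) = Set.univ ∧
      ∀ i : Fin n, IsSubalg (T i.castSucc) ∧
        ∃ g gm x₁ x₂ : L, Primitive (T i.castSucc) g gm x₁ x₂ ∧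
          GeneratesOver (T i.castSucc) (T i.succ) x₁ x₂ := by
  intro k
  induction k with
  | zero =>
    intro S hS hcard
    have hSu : S = Set.univ := by
      have h0 : (Sᶜ).ncard = 0 := Nat.le_zero.1 hcard
      have h2 : Sᶜ = ∅ := (Set.ncard_eq_zero (Set.toFinite _)).1 h0
      simpa [Set.compl_empty_iff] using h2
    exact ⟨0, fun _ => S, rfl, by simp [hSu], fun i => i.elim0⟩
  | succ k ih =>
    intro S hS hcard
    by_cases hSu : S = Set.univ
    · exact ⟨0, fun _ => S, rfl, by simp [hSu], fun i => i.elim0⟩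
    · obtain ⟨g, gm, x₁, x₂, hprim⟩ := exists_primitive S hS hSu
      set T' := genSub S x₁ x₂ with hT'
      have hgen := genSub_spec S x₁ x₂
      have hsub : S ⊆ T' := hgen.2.1
      have hx₁T : x₁ ∈ T' := hgen.2.2.1
      have hx₁S : x₁ ∉ S := hprim.1
      have hT'sub : IsSubalg T' := hgen.1
      have hss : T'ᶜ ⊂ Sᶜ := by
        constructor
        · exact Set.compl_subset_compl.2 hsub
        · intro hcon
          exact (hcon (Set.mem_compl hx₁S)) hx₁T
      have hlt : (T'ᶜ).ncard < (Sᶜ).ncard := Set.ncard_lt_ncard hss (Set.toFinite _)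
      have hcard' : (T'ᶜ).ncard ≤ k := Nat.lt_succ_iff.1 (lt_of_lt_of_le hlt hcard)
      obtain ⟨n, U, hU0, hUlast, hUstep⟩ := ih T' hT'sub hcard'
      refine ⟨n + 1, Fin.cons S U, Fin.cons_zero _ _, ?_, ?_⟩
      · rw [← Fin.succ_last, Fin.cons_succ, hUlast]
      · intro i
        induction i using Fin.cases with
        | zero =>
          have e1 : (Fin.cons S U : Fin (n + 2) → Set L) ((0 : Fin (n + 1)).castSucc) = S := by
            rw [Fin.castSucc_zero, Fin.cons_zero]
          have e2 : (Fin.cons S U : Fin (n + 2) → Set L) ((0 : Fin (n + 1)).succ) = T' := by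
            rw [show ((0 : Fin (n + 1)).succ) = Fin.succ (0 : Fin (n + 1)) from rfl,
              Fin.cons_succ, hU0]
          rw [e1, e2]
          exact ⟨hS, g, gm, x₁, x₂, hprim, hgen⟩
        | succ j =>
          have e1 : (Fin.cons S U : Fin (n + 2) → Set L) ((Fin.succ j).castSucc) = U j.castSucc := by
            rw [← Fin.succ_castSucc, Fin.cons_succ]
          have e2 : (Fin.cons S U : Fin (n + 2) → Set L) ((Fin.succ j).succ) = U j.succ := Fin.cons_succ _ _ _
          rw [e1, e2]
          exact hUstep j

theorem exists_tower_of_primitive_extensions {L : Type*} [CoheytingAlgebra L] [Finite L]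
    (S : Set L) (hS : IsSubalg S) (hne : S ≠ Set.univ) :
    ∃ (n : ℕ) (T : Fin (n + 1) → Set L),
      T 0 = S ∧ T (Fin.last n) = Set.univ ∧
      ∀ i : Fin n, IsSubalg (T i.castSucc) ∧
        ∃ g gm x₁ x₂ : L, Primitive (T i.castSucc) g gm x₁ x₂ ∧
          GeneratesOver (T i.castSucc) (T i.succ) x₁ x₂ := by
  obtain ⟨n, T, h1, h2, h3⟩ := tower (Sᶜ).ncard S hS le_rfl
  exact ⟨n, T, h1, h2, h3⟩
end

section
/- Let L₁ and L₂ be finite co-Heyting algebras, each generated over a common subalgebra L₀ by a primitive tuple, and suppose these primitive tuples have the same signature (g, H, r) in L₀. Then there is an isomorphism of co-Heyting algebras from L₁ to L₂ fixing L₀ pointwise. -/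
/-- An embedding of co-Heyting algebras: injective and preserving `⊥`, `⊤`, `⊔`, `⊓`, `\`. -/
def IsCoheytingEmb {K L : Type*} [CoheytingAlgebra K] [CoheytingAlgebra L] (f : K → L) : Prop :=
  Function.Injective f ∧ f ⊥ = ⊥ ∧ f ⊤ = ⊤ ∧
    (∀ a b, f (a ⊔ b) = f a ⊔ f b) ∧ (∀ a b, f (a ⊓ b) = f a ⊓ f b) ∧
    (∀ a b, f (a \ b) = f a \ f b)

section Aux

variable {L₀ L : Type*} [CoheytingAlgebra L₀] [CoheytingAlgebra L]

theorem sdiff_sup_inf_eq (a b : L) : a \ b ⊔ a ⊓ b = a := by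
  refine le_antisymm (sup_le sdiff_le inf_le_left) ?_
  calc a = a ⊓ (a \ b ⊔ b) := (inf_eq_left.2 le_sdiff_sup).symm
    _ = a ⊓ (a \ b) ⊔ a ⊓ b := inf_sup_left _ _ _
    _ ≤ _ := sup_le_sup_right inf_le_right _

theorem Primitive.symm {S : Set L} {g gm x₁ x₂ : L}
    (hp : Primitive S g gm x₁ x₂) : Primitive S g gm x₂ x₁ := by
  obtain ⟨h1, h2, h3, h4, h5, h6, h7⟩ := hp
  refine ⟨h2, h1, h3, h4, h6, h5, ?_⟩
  rcases h7 with ⟨heq, l1, l2⟩ | ⟨hne, hm, s1, s2⟩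
  · exact Or.inl ⟨heq.symm, heq ▸ l1, heq ▸ l2⟩
  · exact Or.inr ⟨hne.symm, inf_comm x₁ x₂ ▸ hm, s2, s1⟩

theorem GeneratesOver.symm {S T : Set L} {x₁ x₂ : L}
    (h : GeneratesOver S T x₁ x₂) : GeneratesOver S T x₂ x₁ :=
  ⟨h.1, h.2.1, h.2.2.2.1, h.2.2.1, fun Tp a b c d => h.2.2.2.2 Tp a b d c⟩

variable {f : L₀ → L} {g gm : L₀} {x₁ x₂ : L} {h₁ h₂ : L₀}

theorem fmono (hf : IsCoheytingEmb f) {a b : L₀} (h : a ≤ b) : f a ≤ f b := by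
  have : f a ⊔ f b = f b := by rw [← hf.2.2.2.1, sup_eq_right.2 h]
  exact le_of_sup_eq this

theorem fle (hf : IsCoheytingEmb f) {a b : L₀} : f a ≤ f b ↔ a ≤ b := by
  refine ⟨fun h => ?_, fmono hf⟩
  have : f (a ⊔ b) = f b := by rw [hf.2.2.2.1, sup_eq_right.2 h]
  exact sup_eq_right.1 (hf.1 this)

theorem hx1g (hp : Primitive (Set.range f) (f g) (f gm) x₁ x₂) : x₁ ≤ f g := by
  rcases hp.2.2.2.2.2.2 with ⟨_, _, l2⟩ | ⟨_, _, _, s2⟩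
  · exact l2.2
  · exact s2 ▸ sdiff_le

theorem r2data (hp : Primitive (Set.range f) (f g) (f gm) x₁ x₂) (hne : x₁ ≠ x₂) :
    x₁ ⊓ x₂ ∈ Set.range f ∧ f g \ x₁ = x₂ ∧ f g \ x₂ = x₁ := by
  rcases hp.2.2.2.2.2.2 with ⟨heq, _, _⟩ | ⟨_, hm, s1, s2⟩
  · exact absurd heq hne
  · exact ⟨hm, s1, s2⟩

theorem r1data (hp : Primitive (Set.range f) (f g) (f gm) x₁ x₂) (heq : x₁ = x₂) :
    Ll (f gm ⊓ x₁) x₁ ∧ Ll x₁ (f g) := by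
  rcases hp.2.2.2.2.2.2 with ⟨_, l1, l2⟩ | ⟨hne, _, _, _⟩
  · exact ⟨l1, l2⟩
  · exact absurd heq hne

/-- if `¬ g ≤ a` then `f a ⊓ x₁` lies in the image of `f`, explicitly. -/
theorem key1 (hf : IsCoheytingEmb f) (hgm : IsLUB {b : L₀ | b < g} gm)
    (hp : Primitive (Set.range f) (f g) (f gm) x₁ x₂)
    (hh₁ : f h₁ = f gm ⊓ x₁) {a : L₀} (hna : ¬ g ≤ a) :
    f a ⊓ x₁ = f (a ⊓ g ⊓ h₁) := by
  have hlt : a ⊓ g < g := lt_of_le_of_ne inf_le_right (fun h => hna (inf_eq_right.1 h))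
  have hgle : a ⊓ g ≤ gm := hgm.1 hlt
  have e1 : f a ⊓ x₁ = f (a ⊓ g) ⊓ x₁ := by
    rw [hf.2.2.2.2.1]
    rw [inf_assoc]
    congr 1
    exact (inf_eq_right.2 (hx1g hp)).symm
  have e2 : f (a ⊓ g) ⊓ x₁ = f (a ⊓ g) ⊓ (f gm ⊓ x₁) := by
    rw [← inf_assoc]
    congr 1
    exact (inf_eq_left.2 (fmono hf hgle)).symm
  rw [e1, e2, ← hh₁, ← hf.2.2.2.2.1]

theorem le_x1 (hf : IsCoheytingEmb f) (hgm : IsLUB {b : L₀ | b < g} gm)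
    (hp : Primitive (Set.range f) (f g) (f gm) x₁ x₂)
    (hh₁ : f h₁ = f gm ⊓ x₁) {d : L₀} :
    f d ≤ x₁ ↔ d ≤ h₁ := by
  constructor
  · intro h
    have hdg : d ≤ g := (fle hf).1 (h.trans (hx1g hp))
    have hne : d ≠ g := by
      rintro rfl
      exact hp.1 ⟨d, le_antisymm h (hx1g hp)⟩
    have : d ≤ gm := hgm.1 (lt_of_le_of_ne hdg hne)
    have : f d ≤ f gm ⊓ x₁ := le_inf (fmono hf this) h
    rw [← hh₁] at this
    exact (fle hf).1 this
  · intro h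
    calc f d ≤ f h₁ := fmono hf h
      _ = f gm ⊓ x₁ := hh₁
      _ ≤ x₁ := inf_le_right

theorem x1_le_f (hf : IsCoheytingEmb f) (hgm : IsLUB {b : L₀ | b < g} gm)
    (hp : Primitive (Set.range f) (f g) (f gm) x₁ x₂)
    (hh₁ : f h₁ = f gm ⊓ x₁) {a : L₀} :
    x₁ ≤ f a ↔ g ≤ a := by
  constructor
  · intro h
    by_contra hna
    have : x₁ = f (a ⊓ g ⊓ h₁) := by
      rw [← key1 hf hgm hp hh₁ hna, inf_eq_right.2 h]
    exact hp.1 ⟨_, this.symm⟩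
  · intro h
    exact (hx1g hp).trans (fmono hf h)

theorem not_g_le_gm (hf : IsCoheytingEmb f)
    (hp : Primitive (Set.range f) (f g) (f gm) x₁ x₂)
    (hh₁ : f h₁ = f gm ⊓ x₁) : ¬ g ≤ gm := by
  intro h
  have : x₁ = f h₁ := by
    rw [hh₁]
    exact (inf_eq_right.2 ((hx1g hp).trans (fmono hf h))).symm
  exact hp.1 ⟨_, this.symm⟩

theorem g_sdiff_gm (hf : IsCoheytingEmb f) (hgm : IsLUB {b : L₀ | b < g} gm)
    (hp : Primitive (Set.range f) (f g) (f gm) x₁ x₂)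
    (hh₁ : f h₁ = f gm ⊓ x₁) : g \ gm = g := by
  refine le_antisymm sdiff_le ?_
  rcases lt_or_eq_of_le (sdiff_le : g \ gm ≤ g) with hlt | heq
  · exfalso
    have h1 : g \ gm ≤ gm := hgm.1 hlt
    have : g ≤ gm := by
      calc g ≤ gm ⊔ g \ gm := le_sup_sdiff
        _ ≤ gm := sup_le le_rfl h1
    exact not_g_le_gm hf hp hh₁ this
  · exact heq.ge

theorem sd_x1_hm (hf : IsCoheytingEmb f) (hgm : IsLUB {b : L₀ | b < g} gm)
    (hp : Primitive (Set.range f) (f g) (f gm) x₁ x₂)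
    (hh₁ : f h₁ = f gm ⊓ x₁) : x₁ \ (f gm ⊓ x₁) = x₁ := by
  by_cases heq : x₁ = x₂
  · exact (r1data hp heq).1.1
  · obtain ⟨hm, s1, s2⟩ := r2data hp heq
    rw [inf_comm, sdiff_inf_self_left]
    calc x₁ \ f gm = (f g \ x₂) \ f gm := by rw [s2]
      _ = (f g \ f gm) \ x₂ := sdiff_right_comm _ _ _
      _ = f (g \ gm) \ x₂ := by rw [hf.2.2.2.2.2]
      _ = f g \ x₂ := by rw [g_sdiff_gm hf hgm hp hh₁]
      _ = x₁ := s2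

theorem x1_sdiff_f (hf : IsCoheytingEmb f) (hgm : IsLUB {b : L₀ | b < g} gm)
    (hp : Primitive (Set.range f) (f g) (f gm) x₁ x₂)
    (hh₁ : f h₁ = f gm ⊓ x₁) {a : L₀} (hna : ¬ g ≤ a) :
    x₁ \ f a = x₁ := by
  refine le_antisymm sdiff_le ?_
  have h1 : x₁ ⊓ f a ≤ f gm ⊓ x₁ := by
    rw [inf_comm x₁ (f a), key1 hf hgm hp hh₁ hna, ← hh₁]
    exact fmono hf inf_le_right
  calc x₁ = x₁ \ (f gm ⊓ x₁) := (sd_x1_hm hf hgm hp hh₁).symm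
    _ ≤ x₁ \ (x₁ ⊓ f a) := sdiff_le_sdiff_left h1
    _ = x₁ \ f a := sdiff_inf_self_left _ _

theorem fg_eq_sup (hp : Primitive (Set.range f) (f g) (f gm) x₁ x₂)
    (hne : x₁ ≠ x₂) : f g = x₁ ⊔ x₂ := by
  obtain ⟨_, s1, s2⟩ := r2data hp hne
  refine le_antisymm ?_ (sup_le (hx1g hp) (hx1g hp.symm))
  calc f g ≤ f g \ x₂ ⊔ x₂ := le_sdiff_sup
    _ = x₁ ⊔ x₂ := by rw [s2]

theorem x1_le_f_sup_x2 (hf : IsCoheytingEmb f) (hgm : IsLUB {b : L₀ | b < g} gm)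
    (hp : Primitive (Set.range f) (f g) (f gm) x₁ x₂)
    (hh₁ : f h₁ = f gm ⊓ x₁) (hne : x₁ ≠ x₂) {a : L₀} :
    x₁ ≤ f a ⊔ x₂ ↔ g ≤ a := by
  constructor
  · intro h
    by_contra hna
    obtain ⟨⟨m, hm⟩, _, _⟩ := r2data hp hne
    have : x₁ = f (a ⊓ g ⊓ h₁ ⊔ m) := by
      rw [hf.2.2.2.1, hm, ← key1 hf hgm hp hh₁ hna, inf_comm (f a) x₁]
      rw [← inf_sup_left]
      exact (inf_eq_left.2 h).symm
    exact hp.1 ⟨_, this.symm⟩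
  · intro h
    exact le_sup_of_le_left ((hx1g hp).trans (fmono hf h))

theorem x2_sdiff_x1 (hf : IsCoheytingEmb f) (hgm : IsLUB {b : L₀ | b < g} gm)
    (hp : Primitive (Set.range f) (f g) (f gm) x₁ x₂)
    (hh₂ : f h₂ = f gm ⊓ x₂) (hne : x₁ ≠ x₂) :
    x₂ \ x₁ = x₂ := by
  obtain ⟨⟨m, hm⟩, _, _⟩ := r2data hp hne
  have hng : ¬ g ≤ m := by
    intro h
    have h1 : f g ≤ x₁ := by
      calc f g ≤ f m := fmono hf h
        _ = x₁ ⊓ x₂ := hm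
        _ ≤ x₁ := inf_le_left
    exact hp.1 ⟨g, le_antisymm h1 (hx1g hp)⟩
  calc x₂ \ x₁ = x₂ \ (x₂ ⊓ x₁) := (sdiff_inf_self_left _ _).symm
    _ = x₂ \ f m := by rw [inf_comm x₂ x₁, ← hm]
    _ = x₂ := x1_sdiff_f hf hgm hp.symm hh₂ hng

theorem f_sdiff_x1 (hf : IsCoheytingEmb f)
    (hp : Primitive (Set.range f) (f g) (f gm) x₁ x₂) (d : L₀) :
    f d \ x₁ = f (d \ g) ⊔ f (d ⊓ g) \ x₁ := by
  have hd : f d = f (d \ g) ⊔ f (d ⊓ g) := by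
    rw [← hf.2.2.2.1, sdiff_sup_inf_eq]
  have h1 : f (d \ g) \ x₁ = f (d \ g) := by
    refine le_antisymm sdiff_le ?_
    have e : f (d \ g) \ f g = f (d \ g) := by
      rw [← hf.2.2.2.2.2]; congr 1; exact sdiff_idem
    calc f (d \ g) = f (d \ g) \ f g := e.symm
      _ ≤ f (d \ g) \ x₁ := sdiff_le_sdiff_left (hx1g hp)
  rw [hd, sup_sdiff, h1]

theorem e_sdiff_x1 (hf : IsCoheytingEmb f) (hgm : IsLUB {b : L₀ | b < g} gm)
    (hp : Primitive (Set.range f) (f g) (f gm) x₁ x₂)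
    (hh₁ : f h₁ = f gm ⊓ x₁) {e : L₀} (hne : ¬ g ≤ e) :
    f e \ x₁ = f (e \ (e ⊓ g ⊓ h₁)) := by
  calc f e \ x₁ = f e \ (f e ⊓ x₁) := (sdiff_inf_self_left _ _).symm
    _ = f e \ f (e ⊓ g ⊓ h₁) := by rw [key1 hf hgm hp hh₁ hne]
    _ = f (e \ (e ⊓ g ⊓ h₁)) := (hf.2.2.2.2.2 _ _).symm

end Aux

section NFsec

variable {L₀ L : Type*} [CoheytingAlgebra L₀] [CoheytingAlgebra L]

/-- Normal form for elements of a primitive extension. -/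
def NF (f : L₀ → L) (x₁ x₂ : L) (a : L₀) (b c : Bool) : L :=
  f a ⊔ (cond b x₁ ⊥) ⊔ (cond c x₂ ⊥)

variable {f : L₀ → L} {g gm : L₀} {x₁ x₂ : L} {h₁ h₂ : L₀}

theorem NF_swap (f : L₀ → L) (x₁ x₂ : L) (a : L₀) (b c : Bool) :
    NF f x₂ x₁ a b c = NF f x₁ x₂ a c b := by
  simp only [NF, sup_assoc]
  rw [sup_comm (cond b x₂ ⊥) (cond c x₁ ⊥)]

theorem NF_f (f : L₀ → L) (x₁ x₂ : L) (a : L₀) : NF f x₁ x₂ a false false = f a := by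
  simp [NF]

theorem NF_sup (hf : IsCoheytingEmb f) (a a' : L₀) (b c b' c' : Bool) :
    NF f x₁ x₂ a b c ⊔ NF f x₁ x₂ a' b' c' = NF f x₁ x₂ (a ⊔ a') (b || b') (c || c') := by
  simp only [NF, hf.2.2.2.1]
  cases b <;> cases b' <;> cases c <;> cases c' <;> simp <;> ac_rfl

theorem NF_le (w : L) (a : L₀) (b c : Bool) :
    NF f x₁ x₂ a b c ≤ w ↔ (f a ≤ w ∧ (b = true → x₁ ≤ w) ∧ (c = true → x₂ ≤ w)) := by
  cases b <;> cases c <;> simp [NF, sup_le_iff, and_assoc]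

/-- the purely-`L₀` criterion for comparison of normal forms. -/
def CondLe (g h₁ h₂ : L₀) (R : Prop) (a : L₀) (b c : Bool) (a' : L₀) (b' c' : Bool) : Prop :=
  (match b', c' with
   | false, false => a ≤ a'
   | true, false => a ≤ a' ⊔ h₁
   | false, true => a ≤ a' ⊔ h₂
   | true, true => (R → a ≤ a' ⊔ h₁) ∧ (¬ R → a ≤ a' ⊔ g)) ∧
  (b = true → b' = true ∨ (R ∧ c' = true) ∨ g ≤ a') ∧
  (c = true → c' = true ∨ (R ∧ b' = true) ∨ g ≤ a')

theorem fd_le_NF (hf : IsCoheytingEmb f) (hgm : IsLUB {b : L₀ | b < g} gm)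
    (hp : Primitive (Set.range f) (f g) (f gm) x₁ x₂)
    (hh₁ : f h₁ = f gm ⊓ x₁) (hh₂ : f h₂ = f gm ⊓ x₂)
    {R : Prop} (hR : R ↔ x₁ = x₂) (d a' : L₀) (b' c' : Bool) :
    f d ≤ NF f x₁ x₂ a' b' c' ↔
      (match b', c' with
       | false, false => d ≤ a'
       | true, false => d ≤ a' ⊔ h₁
       | false, true => d ≤ a' ⊔ h₂
       | true, true => (R → d ≤ a' ⊔ h₁) ∧ (¬ R → d ≤ a' ⊔ g)) := by
  cases b' <;> cases c'
  · simp only [NF, cond_false, sup_bot_eq]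
    exact fle hf
  · simp only [NF, cond_false, cond_true, sup_bot_eq]
    rw [← sdiff_le_iff, ← hf.2.2.2.2.2, le_x1 hf hgm hp.symm hh₂, sdiff_le_iff]
  · simp only [NF, cond_false, cond_true, sup_bot_eq]
    rw [← sdiff_le_iff, ← hf.2.2.2.2.2, le_x1 hf hgm hp hh₁, sdiff_le_iff]
  · simp only [NF, cond_true]
    by_cases heq : x₁ = x₂
    · have hRt : R := hR.2 heq
      have : f a' ⊔ x₁ ⊔ x₂ = f a' ⊔ x₁ := by rw [sup_assoc, ← heq, sup_idem]
      rw [this, ← sdiff_le_iff, ← hf.2.2.2.2.2, le_x1 hf hgm hp hh₁, sdiff_le_iff]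
      constructor
      · intro h; exact ⟨fun _ => h, fun hn => absurd hRt hn⟩
      · intro h; exact h.1 hRt
    · have hRf : ¬ R := fun hr => heq (hR.1 hr)
      have : f a' ⊔ x₁ ⊔ x₂ = f (a' ⊔ g) := by
        rw [sup_assoc, ← fg_eq_sup hp heq, hf.2.2.2.1]
      rw [this, fle hf]
      constructor
      · intro h; exact ⟨fun hr => absurd hr hRf, fun _ => h⟩
      · intro h; exact h.2 hRf

theorem x1_le_NF (hf : IsCoheytingEmb f) (hgm : IsLUB {b : L₀ | b < g} gm)
    (hp : Primitive (Set.range f) (f g) (f gm) x₁ x₂)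
    (hh₁ : f h₁ = f gm ⊓ x₁)
    {R : Prop} (hR : R ↔ x₁ = x₂) (a' : L₀) (b' c' : Bool) :
    x₁ ≤ NF f x₁ x₂ a' b' c' ↔ (b' = true ∨ (R ∧ c' = true) ∨ g ≤ a') := by
  cases b'
  · cases c'
    · simp only [NF, cond_false, sup_bot_eq]
      rw [x1_le_f hf hgm hp hh₁]
      simp
    · simp only [NF, cond_false, cond_true, sup_bot_eq]
      by_cases heq : x₁ = x₂
      · have hRt : R := hR.2 heq
        constructor
        · intro _; exact Or.inr (Or.inl ⟨hRt, by trivial⟩)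
        · intro _; rw [heq]; exact le_sup_right
      · have hRf : ¬ R := fun hr => heq (hR.1 hr)
        rw [x1_le_f_sup_x2 hf hgm hp hh₁ heq]
        simp [hRf]
  · simp only [NF, cond_true, true_or, iff_true]
    exact le_sup_of_le_left le_sup_right

theorem NF_le_iff (hf : IsCoheytingEmb f) (hgm : IsLUB {b : L₀ | b < g} gm)
    (hp : Primitive (Set.range f) (f g) (f gm) x₁ x₂)
    (hh₁ : f h₁ = f gm ⊓ x₁) (hh₂ : f h₂ = f gm ⊓ x₂)
    {R : Prop} (hR : R ↔ x₁ = x₂) (a : L₀) (b c : Bool) (a' : L₀) (b' c' : Bool) :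
    NF f x₁ x₂ a b c ≤ NF f x₁ x₂ a' b' c' ↔ CondLe g h₁ h₂ R a b c a' b' c' := by
  rw [NF_le, fd_le_NF hf hgm hp hh₁ hh₂ hR,
    x1_le_NF hf hgm hp hh₁ hR]
  have hx2 : x₂ ≤ NF f x₁ x₂ a' b' c' ↔ (c' = true ∨ (R ∧ b' = true) ∨ g ≤ a') := by
    rw [← NF_swap f x₁ x₂ a' c' b']
    exact x1_le_NF hf hgm hp.symm hh₂ (hR.trans ⟨Eq.symm, Eq.symm⟩) a' c' b'
  rw [hx2]
  exact Iff.rfl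

/-- The set of normal forms. -/
def NFset (f : L₀ → L) (x₁ x₂ : L) : Set L := {w | ∃ a b c, w = NF f x₁ x₂ a b c}

theorem NFset_swap : NFset f x₂ x₁ = NFset f x₁ x₂ := by
  ext w
  constructor <;> rintro ⟨a, b, c, rfl⟩
  · exact ⟨a, c, b, (NF_swap f x₁ x₂ a b c)⟩
  · exact ⟨a, c, b, (NF_swap f x₁ x₂ a c b).symm⟩

theorem mem_NFset_f (a : L₀) : f a ∈ NFset f x₁ x₂ := ⟨a, false, false, (NF_f f x₁ x₂ a).symm⟩

theorem mem_NFset_x1 (hf : IsCoheytingEmb f) : x₁ ∈ NFset f x₁ x₂ :=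
  ⟨⊥, true, false, by simp [NF, hf.2.1]⟩

theorem mem_NFset_x2 (hf : IsCoheytingEmb f) : x₂ ∈ NFset f x₁ x₂ :=
  ⟨⊥, false, true, by simp [NF, hf.2.1]⟩

theorem NFset_sup (hf : IsCoheytingEmb f) {w w' : L}
    (h : w ∈ NFset f x₁ x₂) (h' : w' ∈ NFset f x₁ x₂) : w ⊔ w' ∈ NFset f x₁ x₂ := by
  obtain ⟨a, b, c, rfl⟩ := h
  obtain ⟨a', b', c', rfl⟩ := h'
  exact ⟨a ⊔ a', b || b', c || c', NF_sup (x₁ := x₁) (x₂ := x₂) hf a a' b c b' c'⟩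

theorem x1_inf_f_mem (hf : IsCoheytingEmb f) (hgm : IsLUB {b : L₀ | b < g} gm)
    (hp : Primitive (Set.range f) (f g) (f gm) x₁ x₂)
    (hh₁ : f h₁ = f gm ⊓ x₁) (a : L₀) : x₁ ⊓ f a ∈ NFset f x₁ x₂ := by
  by_cases hg : g ≤ a
  · have : x₁ ⊓ f a = x₁ := inf_eq_left.2 ((x1_le_f hf hgm hp hh₁).2 hg)
    rw [this]; exact mem_NFset_x1 hf
  · rw [inf_comm, key1 hf hgm hp hh₁ hg]
    exact mem_NFset_f _

theorem x1_inf_x2_mem (hf : IsCoheytingEmb f)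
    (hp : Primitive (Set.range f) (f g) (f gm) x₁ x₂) : x₁ ⊓ x₂ ∈ NFset f x₁ x₂ := by
  by_cases heq : x₁ = x₂
  · rw [← heq, inf_idem]; exact mem_NFset_x1 hf
  · obtain ⟨⟨m, hm⟩, _, _⟩ := r2data hp heq
    rw [← hm]; exact mem_NFset_f m

theorem x1_inf_mem (hf : IsCoheytingEmb f) (hgm : IsLUB {b : L₀ | b < g} gm)
    (hp : Primitive (Set.range f) (f g) (f gm) x₁ x₂)
    (hh₁ : f h₁ = f gm ⊓ x₁) {w : L} (h : w ∈ NFset f x₁ x₂) :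
    x₁ ⊓ w ∈ NFset f x₁ x₂ := by
  obtain ⟨a, b, c, rfl⟩ := h
  rw [NF, inf_sup_left, inf_sup_left]
  refine NFset_sup hf (NFset_sup hf (x1_inf_f_mem hf hgm hp hh₁ a) ?_) ?_
  · cases b
    · simp only [cond_false, inf_bot_eq]; exact ⟨⊥, false, false, by simp [NF, hf.2.1]⟩
    · simp only [cond_true, inf_idem]; exact mem_NFset_x1 hf
  · cases c
    · simp only [cond_false, inf_bot_eq]; exact ⟨⊥, false, false, by simp [NF, hf.2.1]⟩
    · simp only [cond_true]; exact x1_inf_x2_mem hf hp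

theorem NFset_inf (hf : IsCoheytingEmb f) (hgm : IsLUB {b : L₀ | b < g} gm)
    (hp : Primitive (Set.range f) (f g) (f gm) x₁ x₂)
    (hh₁ : f h₁ = f gm ⊓ x₁) (hh₂ : f h₂ = f gm ⊓ x₂) {w w' : L}
    (h : w ∈ NFset f x₁ x₂) (h' : w' ∈ NFset f x₁ x₂) : w ⊓ w' ∈ NFset f x₁ x₂ := by
  obtain ⟨a, b, c, rfl⟩ := h
  rw [NF, inf_sup_right, inf_sup_right]
  refine NFset_sup hf (NFset_sup hf ?_ ?_) ?_
  · -- f a ⊓ w'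
    obtain ⟨a', b', c', rfl⟩ := h'
    rw [NF, inf_sup_left, inf_sup_left]
    refine NFset_sup hf (NFset_sup hf ?_ ?_) ?_
    · rw [← hf.2.2.2.2.1]; exact mem_NFset_f _
    · cases b'
      · simp only [cond_false, inf_bot_eq]; exact ⟨⊥, false, false, by simp [NF, hf.2.1]⟩
      · simp only [cond_true]; rw [inf_comm]; exact x1_inf_f_mem hf hgm hp hh₁ a
    · cases c'
      · simp only [cond_false, inf_bot_eq]; exact ⟨⊥, false, false, by simp [NF, hf.2.1]⟩
      · simp only [cond_true]
        rw [inf_comm (f a) x₂, ← NFset_swap]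
        exact x1_inf_f_mem hf hgm hp.symm hh₂ a
  · cases b
    · simp only [cond_false, bot_inf_eq]; exact ⟨⊥, false, false, by simp [NF, hf.2.1]⟩
    · simp only [cond_true]; exact x1_inf_mem hf hgm hp hh₁ h'
  · cases c
    · simp only [cond_false, bot_inf_eq]; exact ⟨⊥, false, false, by simp [NF, hf.2.1]⟩
    · simp only [cond_true]
      rw [← NFset_swap] at h' ⊢
      exact x1_inf_mem hf hgm hp.symm hh₂ h'

theorem NFset_sdiff_f (hf : IsCoheytingEmb f) (hgm : IsLUB {b : L₀ | b < g} gm)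
    (hp : Primitive (Set.range f) (f g) (f gm) x₁ x₂)
    (hh₁ : f h₁ = f gm ⊓ x₁) (hh₂ : f h₂ = f gm ⊓ x₂) {w : L}
    (h : w ∈ NFset f x₁ x₂) (a' : L₀) : w \ f a' ∈ NFset f x₁ x₂ := by
  obtain ⟨a, b, c, rfl⟩ := h
  rw [NF, sup_sdiff, sup_sdiff]
  refine NFset_sup hf (NFset_sup hf ?_ ?_) ?_
  · rw [← hf.2.2.2.2.2]; exact mem_NFset_f _
  · cases b
    · simp only [cond_false, bot_sdiff]; exact ⟨⊥, false, false, by simp [NF, hf.2.1]⟩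
    · simp only [cond_true]
      by_cases hg : g ≤ a'
      · rw [sdiff_eq_bot_iff.2 ((x1_le_f hf hgm hp hh₁).2 hg)]
        exact ⟨⊥, false, false, by simp [NF, hf.2.1]⟩
      · rw [x1_sdiff_f hf hgm hp hh₁ hg]; exact mem_NFset_x1 hf
  · cases c
    · simp only [cond_false, bot_sdiff]; exact ⟨⊥, false, false, by simp [NF, hf.2.1]⟩
    · simp only [cond_true]
      by_cases hg : g ≤ a'
      · rw [sdiff_eq_bot_iff.2 ((x1_le_f hf hgm hp.symm hh₂).2 hg)]
        exact ⟨⊥, false, false, by simp [NF, hf.2.1]⟩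
      · rw [x1_sdiff_f hf hgm hp.symm hh₂ hg]; exact mem_NFset_x2 hf

theorem f_sdiff_x1_mem (hf : IsCoheytingEmb f) (hgm : IsLUB {b : L₀ | b < g} gm)
    (hp : Primitive (Set.range f) (f g) (f gm) x₁ x₂)
    (hh₁ : f h₁ = f gm ⊓ x₁) (d : L₀) : f d \ x₁ ∈ NFset f x₁ x₂ := by
  rw [f_sdiff_x1 hf hp d]
  by_cases hg : g ≤ d
  · have hdg : d ⊓ g = g := inf_eq_right.2 hg
    rw [hdg]
    by_cases heq : x₁ = x₂
    · have : f g \ x₁ = f g := (r1data hp heq).2.1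
      rw [this, ← hf.2.2.2.1]; exact mem_NFset_f _
    · have : f g \ x₁ = x₂ := (r2data hp heq).2.1
      rw [this]
      exact NFset_sup hf (mem_NFset_f _) (mem_NFset_x2 hf)
  · have hng : ¬ g ≤ d ⊓ g := fun hle => hg (le_trans hle inf_le_left)
    rw [e_sdiff_x1 hf hgm hp hh₁ hng, ← hf.2.2.2.1]
    exact mem_NFset_f _

theorem NFset_sdiff_x1 (hf : IsCoheytingEmb f) (hgm : IsLUB {b : L₀ | b < g} gm)
    (hp : Primitive (Set.range f) (f g) (f gm) x₁ x₂)
    (hh₁ : f h₁ = f gm ⊓ x₁) (hh₂ : f h₂ = f gm ⊓ x₂) {w : L}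
    (h : w ∈ NFset f x₁ x₂) : w \ x₁ ∈ NFset f x₁ x₂ := by
  obtain ⟨a, b, c, rfl⟩ := h
  rw [NF, sup_sdiff, sup_sdiff]
  refine NFset_sup hf (NFset_sup hf ?_ ?_) ?_
  · exact f_sdiff_x1_mem hf hgm hp hh₁ a
  · cases b
    · simp only [cond_false, bot_sdiff]; exact ⟨⊥, false, false, by simp [NF, hf.2.1]⟩
    · simp only [cond_true, sdiff_self]; exact ⟨⊥, false, false, by simp [NF, hf.2.1]⟩
  · cases c
    · simp only [cond_false, bot_sdiff]; exact ⟨⊥, false, false, by simp [NF, hf.2.1]⟩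
    · simp only [cond_true]
      by_cases heq : x₁ = x₂
      · rw [← heq, sdiff_self]; exact ⟨⊥, false, false, by simp [NF, hf.2.1]⟩
      · rw [x2_sdiff_x1 hf hgm hp hh₂ heq]; exact mem_NFset_x2 hf

theorem NFset_subalg (hf : IsCoheytingEmb f) (hgm : IsLUB {b : L₀ | b < g} gm)
    (hp : Primitive (Set.range f) (f g) (f gm) x₁ x₂)
    (hh₁ : f h₁ = f gm ⊓ x₁) (hh₂ : f h₂ = f gm ⊓ x₂) :
    IsSubalg (NFset f x₁ x₂) := by
  refine ⟨⟨⊥, false, false, by simp [NF, hf.2.1]⟩, ⟨⊤, false, false, by simp [NF, hf.2.2.1]⟩,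
    fun w hw w' hw' => ⟨NFset_sup hf hw hw', NFset_inf hf hgm hp hh₁ hh₂ hw hw', ?_⟩⟩
  obtain ⟨a', b', c', rfl⟩ := hw'
  rw [NF, ← sdiff_sdiff_left, ← sdiff_sdiff_left]
  have s1 : w \ f a' ∈ NFset f x₁ x₂ := NFset_sdiff_f hf hgm hp hh₁ hh₂ hw a'
  have s2 : (w \ f a') \ (cond b' x₁ ⊥) ∈ NFset f x₁ x₂ := by
    cases b'
    · simpa using s1
    · exact NFset_sdiff_x1 hf hgm hp hh₁ hh₂ s1
  cases c'
  · simpa using s2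
  · simp only [cond_true]
    rw [← NFset_swap] at s2 ⊢
    exact NFset_sdiff_x1 hf hgm hp.symm hh₂ hh₁ s2

theorem NF_surj (hf : IsCoheytingEmb f) (hgm : IsLUB {b : L₀ | b < g} gm)
    (hp : Primitive (Set.range f) (f g) (f gm) x₁ x₂)
    (hh₁ : f h₁ = f gm ⊓ x₁) (hh₂ : f h₂ = f gm ⊓ x₂)
    (hgen : GeneratesOver (Set.range f) Set.univ x₁ x₂) (w : L) :
    ∃ a b c, w = NF f x₁ x₂ a b c := by
  have := hgen.2.2.2.2 (NFset f x₁ x₂) (NFset_subalg hf hgm hp hh₁ hh₂)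
    (by rintro v ⟨a, rfl⟩; exact mem_NFset_f a) (mem_NFset_x1 hf) (mem_NFset_x2 hf)
  exact this (Set.mem_univ w)

end NFsec

section MainAux

variable {L₀ L₁ L₂ : Type*} [CoheytingAlgebra L₀] [CoheytingAlgebra L₁] [CoheytingAlgebra L₂]

theorem main_aux
    (f₁ : L₀ → L₁) (f₂ : L₀ → L₂) (hf₁ : IsCoheytingEmb f₁) (hf₂ : IsCoheytingEmb f₂)
    (g gm : L₀) (hgm : IsLUB {b : L₀ | b < g} gm)
    (x₁ x₂ : L₁) (y₁ y₂ : L₂)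
    (hp₁ : Primitive (Set.range f₁) (f₁ g) (f₁ gm) x₁ x₂)
    (hgen₁ : GeneratesOver (Set.range f₁) Set.univ x₁ x₂)
    (hp₂ : Primitive (Set.range f₂) (f₂ g) (f₂ gm) y₁ y₂)
    (hgen₂ : GeneratesOver (Set.range f₂) Set.univ y₁ y₂)
    (h₁ h₂ : L₀) (hh₁ : f₁ h₁ = f₁ gm ⊓ x₁) (hh₂ : f₁ h₂ = f₁ gm ⊓ x₂)
    (hk₁ : f₂ h₁ = f₂ gm ⊓ y₁) (hk₂ : f₂ h₂ = f₂ gm ⊓ y₂)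
    (hsigr : x₁ = x₂ ↔ y₁ = y₂) :
    ∃ φ : L₁ ≃ L₂, IsCoheytingEmb φ ∧ ∀ a : L₀, φ (f₁ a) = f₂ a := by
  set R : Prop := (x₁ = x₂) with hRdef
  have hR₁ : R ↔ x₁ = x₂ := Iff.rfl
  have hR₂ : R ↔ y₁ = y₂ := hsigr
  -- transfer of the order
  have transfer : ∀ a b c a' b' c', (NF f₁ x₁ x₂ a b c ≤ NF f₁ x₁ x₂ a' b' c') ↔
      (NF f₂ y₁ y₂ a b c ≤ NF f₂ y₁ y₂ a' b' c') := by
    intro a b c a' b' c'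
    rw [NF_le_iff hf₁ hgm hp₁ hh₁ hh₂ hR₁, NF_le_iff hf₂ hgm hp₂ hk₁ hk₂ hR₂]
  have transfer_eq : ∀ a b c a' b' c', (NF f₁ x₁ x₂ a b c = NF f₁ x₁ x₂ a' b' c') ↔
      (NF f₂ y₁ y₂ a b c = NF f₂ y₁ y₂ a' b' c') := by
    intro a b c a' b' c'
    constructor <;> intro h
    · exact le_antisymm ((transfer _ _ _ _ _ _).1 h.le) ((transfer _ _ _ _ _ _).1 h.ge)
    · exact le_antisymm ((transfer _ _ _ _ _ _).2 h.le) ((transfer _ _ _ _ _ _).2 h.ge)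
  -- choose representations
  choose A B C hABC using NF_surj hf₁ hgm hp₁ hh₁ hh₂ hgen₁
  choose A' B' C' hABC' using NF_surj hf₂ hgm hp₂ hk₁ hk₂ hgen₂
  set to1 : L₁ → L₂ := fun w => NF f₂ y₁ y₂ (A w) (B w) (C w) with hto1
  set to2 : L₂ → L₁ := fun v => NF f₁ x₁ x₂ (A' v) (B' v) (C' v) with hto2
  have spec : ∀ a b c, to1 (NF f₁ x₁ x₂ a b c) = NF f₂ y₁ y₂ a b c := by
    intro a b c
    have h := hABC (NF f₁ x₁ x₂ a b c)
    exact ((transfer_eq _ _ _ _ _ _).1 h.symm)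
  have spec' : ∀ a b c, to2 (NF f₂ y₁ y₂ a b c) = NF f₁ x₁ x₂ a b c := by
    intro a b c
    have h := hABC' (NF f₂ y₁ y₂ a b c)
    exact ((transfer_eq _ _ _ _ _ _).2 h.symm)
  have linv : Function.LeftInverse to2 to1 := by
    intro w
    rw [hABC w, spec, spec']
  have rinv : Function.RightInverse to2 to1 := by
    intro v
    rw [hABC' v, spec', spec]
  set φ : L₁ ≃ L₂ := ⟨to1, to2, linv, rinv⟩ with hφ
  have mono1 : ∀ {u v : L₁}, u ≤ v → φ u ≤ φ v := by
    intro u v huv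
    have h1 := hABC u; have h2 := hABC v
    show to1 u ≤ to1 v
    rw [h1, h2, spec, spec]
    exact (transfer _ _ _ _ _ _).1 (h1 ▸ h2 ▸ huv)
  have mono2 : ∀ {u v : L₂}, u ≤ v → φ.symm u ≤ φ.symm v := by
    intro u v huv
    have h1 := hABC' u; have h2 := hABC' v
    show to2 u ≤ to2 v
    rw [h1, h2, spec', spec']
    exact (transfer _ _ _ _ _ _).2 (h1 ▸ h2 ▸ huv)
  have map_sup : ∀ u v : L₁, φ (u ⊔ v) = φ u ⊔ φ v := by
    intro u v
    have e1 : u ⊔ v = NF f₁ x₁ x₂ (A u ⊔ A v) (B u || B v) (C u || C v) := by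
      conv_lhs => rw [hABC u, hABC v]
      exact NF_sup (x₁ := x₁) (x₂ := x₂) hf₁ _ _ _ _ _ _
    have e2 : φ u ⊔ φ v = NF f₂ y₁ y₂ (A u ⊔ A v) (B u || B v) (C u || C v) := by
      show to1 u ⊔ to1 v = _
      exact NF_sup (x₁ := y₁) (x₂ := y₂) hf₂ _ _ _ _ _ _
    rw [e1, e2]
    show to1 _ = _
    exact spec _ _ _
  have map_inf : ∀ u v : L₁, φ (u ⊓ v) = φ u ⊓ φ v := by
    intro u v
    refine le_antisymm (le_inf (mono1 inf_le_left) (mono1 inf_le_right)) ?_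
    have h : φ.symm (φ u ⊓ φ v) ≤ u ⊓ v := by
      refine le_inf ?_ ?_
      · have := mono2 (inf_le_left : φ u ⊓ φ v ≤ φ u)
        rwa [Equiv.symm_apply_apply] at this
      · have := mono2 (inf_le_right : φ u ⊓ φ v ≤ φ v)
        rwa [Equiv.symm_apply_apply] at this
    have := mono1 h
    rwa [Equiv.apply_symm_apply] at this
  have map_bot : φ (⊥ : L₁) = ⊥ := by
    have : (⊥ : L₁) = NF f₁ x₁ x₂ ⊥ false false := by simp [NF, hf₁.2.1]
    rw [this]
    show to1 _ = ⊥
    rw [spec]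
    simp [NF, hf₂.2.1]
  have map_top : φ (⊤ : L₁) = ⊤ := by
    have : (⊤ : L₁) = NF f₁ x₁ x₂ ⊤ false false := by simp [NF, hf₁.2.2.1]
    rw [this]
    show to1 _ = ⊤
    rw [spec]
    simp [NF, hf₂.2.2.1]
  have map_sdiff : ∀ u v : L₁, φ (u \ v) = φ u \ φ v := by
    intro u v
    refine le_antisymm ?_ ?_
    · -- φ (u \ v) ≤ φ u \ φ v  via the inverse
      have key : ∀ s t : L₂, φ.symm s \ φ.symm t ≤ φ.symm (s \ t) := by
        intro s t
        have h1 : s ≤ t ⊔ s \ t := le_sup_sdiff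
        have h2 : φ.symm s ≤ φ.symm (t ⊔ s \ t) := mono2 h1
        have h3 : φ.symm (t ⊔ s \ t) = φ.symm t ⊔ φ.symm (s \ t) := by
          have := map_sup (φ.symm t) (φ.symm (s \ t))
          rw [Equiv.apply_symm_apply, Equiv.apply_symm_apply] at this
          calc φ.symm (t ⊔ s \ t) = φ.symm (φ (φ.symm t ⊔ φ.symm (s \ t))) := by rw [this]
            _ = φ.symm t ⊔ φ.symm (s \ t) := Equiv.symm_apply_apply _ _
        rw [h3] at h2
        exact sdiff_le_iff.2 h2
      have h4 : u \ v = φ.symm (φ u) \ φ.symm (φ v) := by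
        rw [Equiv.symm_apply_apply, Equiv.symm_apply_apply]
      have h5 : u \ v ≤ φ.symm (φ u \ φ v) := h4 ▸ key (φ u) (φ v)
      have := mono1 h5
      rwa [Equiv.apply_symm_apply] at this
    · have h1 : u ≤ v ⊔ u \ v := le_sup_sdiff
      have h2 : φ u ≤ φ v ⊔ φ (u \ v) := by
        have := mono1 h1
        rwa [map_sup] at this
      exact sdiff_le_iff.2 h2
  refine ⟨φ, ⟨φ.injective, map_bot, map_top, map_sup, map_inf, map_sdiff⟩, ?_⟩
  intro a
  have : f₁ a = NF f₁ x₁ x₂ a false false := (NF_f f₁ x₁ x₂ a).symm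
  rw [this]
  show to1 _ = f₂ a
  rw [spec, NF_f]

end MainAux

theorem primitive_extensions_same_signature_isomorphic
    {L₀ L₁ L₂ : Type*} [CoheytingAlgebra L₀] [CoheytingAlgebra L₁] [CoheytingAlgebra L₂]
    [Finite L₀] [Finite L₁] [Finite L₂]
    (f₁ : L₀ → L₁) (f₂ : L₀ → L₂) (hf₁ : IsCoheytingEmb f₁) (hf₂ : IsCoheytingEmb f₂)
    (g gm : L₀) (hgm : IsLUB {b : L₀ | b < g} gm)
    (x₁ x₂ : L₁) (y₁ y₂ : L₂)
    (hp₁ : Primitive (Set.range f₁) (f₁ g) (f₁ gm) x₁ x₂)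
    (hgen₁ : GeneratesOver (Set.range f₁) Set.univ x₁ x₂)
    (hp₂ : Primitive (Set.range f₂) (f₂ g) (f₂ gm) y₁ y₂)
    (hgen₂ : GeneratesOver (Set.range f₂) Set.univ y₁ y₂)
    (hsigH : f₁ ⁻¹' {f₁ gm ⊓ x₁, f₁ gm ⊓ x₂} = f₂ ⁻¹' {f₂ gm ⊓ y₁, f₂ gm ⊓ y₂})
    (hsigr : x₁ = x₂ ↔ y₁ = y₂) :
    ∃ φ : L₁ ≃ L₂, IsCoheytingEmb φ ∧ ∀ a : L₀, φ (f₁ a) = f₂ a := by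
  obtain ⟨h₁, hh₁⟩ := hp₁.2.2.2.2.1
  obtain ⟨h₂, hh₂⟩ := hp₁.2.2.2.2.2.1
  obtain ⟨k₁, hk₁⟩ := hp₂.2.2.2.2.1
  obtain ⟨k₂, hk₂⟩ := hp₂.2.2.2.2.2.1
  -- membership facts from the signature condition
  have mem1 : ∀ d : L₀, f₁ d = f₁ gm ⊓ x₁ ∨ f₁ d = f₁ gm ⊓ x₂ →
      d = k₁ ∨ d = k₂ := by
    intro d hd
    have : d ∈ f₁ ⁻¹' {f₁ gm ⊓ x₁, f₁ gm ⊓ x₂} := by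
      simpa [Set.mem_preimage] using hd
    rw [hsigH] at this
    simp only [Set.mem_preimage, Set.mem_insert_iff, Set.mem_singleton_iff] at this
    rcases this with h | h
    · exact Or.inl (hf₂.1 (hk₁ ▸ h : f₂ d = f₂ k₁))
    · exact Or.inr (hf₂.1 (hk₂ ▸ h : f₂ d = f₂ k₂))
  have mem2 : ∀ d : L₀, f₂ d = f₂ gm ⊓ y₁ ∨ f₂ d = f₂ gm ⊓ y₂ →
      d = h₁ ∨ d = h₂ := by
    intro d hd
    have : d ∈ f₂ ⁻¹' {f₂ gm ⊓ y₁, f₂ gm ⊓ y₂} := by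
      simpa [Set.mem_preimage] using hd
    rw [← hsigH] at this
    simp only [Set.mem_preimage, Set.mem_insert_iff, Set.mem_singleton_iff] at this
    rcases this with h | h
    · exact Or.inl (hf₁.1 (hh₁ ▸ h : f₁ d = f₁ h₁))
    · exact Or.inr (hf₁.1 (hh₂ ▸ h : f₁ d = f₁ h₂))
  have c1 : h₁ = k₁ ∨ h₁ = k₂ := mem1 h₁ (Or.inl hh₁)
  have c2 : h₂ = k₁ ∨ h₂ = k₂ := mem1 h₂ (Or.inr hh₂)
  have c3 : k₁ = h₁ ∨ k₁ = h₂ := mem2 k₁ (Or.inl hk₁)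
  have c4 : k₂ = h₁ ∨ k₂ = h₂ := mem2 k₂ (Or.inr hk₂)
  have pairing : (h₁ = k₁ ∧ h₂ = k₂) ∨ (h₁ = k₂ ∧ h₂ = k₁) := by
    rcases c1 with e1 | e1
    · rcases c2 with e2 | e2
      · -- h₁ = k₁, h₂ = k₁
        rcases c4 with e4 | e4
        · exact Or.inl ⟨e1, e2.trans (e4.trans e1).symm⟩
        · exact Or.inl ⟨e1, e4.symm⟩
      · exact Or.inl ⟨e1, e2⟩
    · rcases c2 with e2 | e2
      · exact Or.inr ⟨e1, e2⟩
      · -- h₁ = k₂, h₂ = k₂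
        rcases c3 with e3 | e3
        · exact Or.inr ⟨e1, (e2.trans e1.symm).trans e3.symm⟩
        · exact Or.inr ⟨e1, e3.symm⟩
  rcases pairing with ⟨e1, e2⟩ | ⟨e1, e2⟩
  · exact main_aux f₁ f₂ hf₁ hf₂ g gm hgm x₁ x₂ y₁ y₂ hp₁ hgen₁ hp₂ hgen₂ h₁ h₂ hh₁ hh₂
      (e1 ▸ hk₁) (e2 ▸ hk₂) hsigr
  · obtain ⟨φ, hemb, hfix⟩ := main_aux f₁ f₂ hf₁ hf₂ g gm hgm x₁ x₂ y₂ y₁ hp₁ hgen₁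
      hp₂.symm hgen₂.symm h₁ h₂ hh₁ hh₂ (e1 ▸ hk₂) (e2 ▸ hk₁)
      (hsigr.trans ⟨Eq.symm, Eq.symm⟩)
    exact ⟨φ, hemb, hfix⟩
end

section
/- Let L be a finite co-Heyting algebra and a, c ∈ L with c ≪ a and a ≠ ⊥. Then there exists a finite co-Heyting algebra L' containing L as a subalgebra and a nonzero element b ∈ L' such that c ≪ b ≪ a. -/
/-- There is an embedding of `L` into `K` and a nonzero `b` in `K` with
`f c ≪ b ≪ f a`. -/
def DenseExt (L : Type*) [CoheytingAlgebra L] (K : Type*) [CoheytingAlgebra K]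
    (c a : L) : Prop :=
  ∃ (f : L → K) (b : K), IsCoheytingEmb f ∧ b ≠ ⊥ ∧ Ll (f c) b ∧ Ll b (f a)

section Aux

open Function

variable {K₁ K₂ K₃ : Type*}

lemma coheytingEmb_mono [CoheytingAlgebra K₁] [CoheytingAlgebra K₂] {f : K₁ → K₂}
    (hf : IsCoheytingEmb f) : Monotone f := by
  intro x y hxy
  have h := hf.2.2.2.2.1 x y
  rw [inf_eq_left.2 hxy] at h
  exact inf_eq_left.1 h.symm

lemma coheytingEmb_comp [CoheytingAlgebra K₁] [CoheytingAlgebra K₂] [CoheytingAlgebra K₃]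
    {f : K₁ → K₂} {g : K₂ → K₃} (hf : IsCoheytingEmb f) (hg : IsCoheytingEmb g) :
    IsCoheytingEmb (g ∘ f) := by
  obtain ⟨fi, fb, ft, fs, fm, fd⟩ := hf
  obtain ⟨gi, gb, gt, gs, gm, gd⟩ := hg
  refine ⟨gi.comp fi, ?_, ?_, fun a b => ?_, fun a b => ?_, fun a b => ?_⟩ <;>
    simp [Function.comp, fb, gb, ft, gt, fs, gs, fm, gm, fd, gd]

lemma denseExt_comp [CoheytingAlgebra K₁] [CoheytingAlgebra K₂] [CoheytingAlgebra K₃]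
    {c a : K₁} (hd : DenseExt K₁ K₂ c a) {ψ : K₂ → K₃} (hψ : IsCoheytingEmb ψ) :
    DenseExt K₁ K₃ c a := by
  obtain ⟨f, b, hf, hb, h1, h2⟩ := hd
  refine ⟨ψ ∘ f, ψ b, coheytingEmb_comp hf hψ, ?_, ?_, ?_⟩
  · intro hbot
    exact hb (hψ.1 (by rw [hbot, hψ.2.1]))
  · exact ⟨by rw [Function.comp_apply, ← hψ.2.2.2.2.2, h1.1], coheytingEmb_mono hψ h1.2⟩
  · exact ⟨by rw [Function.comp_apply, ← hψ.2.2.2.2.2, h2.1], coheytingEmb_mono hψ h2.2⟩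

lemma orderIso_coheytingEmb [CoheytingAlgebra K₁] [CoheytingAlgebra K₂] (e : K₁ ≃o K₂) :
    IsCoheytingEmb e := by
  have hsd : ∀ a b : K₁, e (a \ b) = e a \ e b := by
    intro a b
    refine le_antisymm ?_ (sdiff_le_iff.2 ?_)
    · have h0 : e a ≤ e b ⊔ (e a \ e b) := sdiff_le_iff.1 le_rfl
      have h1 := e.symm.monotone h0
      rw [e.symm.map_sup, e.symm_apply_apply, e.symm_apply_apply] at h1
      have h2 := e.monotone (sdiff_le_iff.2 h1)
      rwa [e.apply_symm_apply] at h2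
    · rw [← e.map_sup]
      exact e.monotone (sdiff_le_iff.1 le_rfl)
  exact ⟨e.injective, e.map_bot, e.map_top, fun a b => e.map_sup a b,
    fun a b => e.map_inf a b, hsd⟩

/-- Preimage of a lower set along a monotone map. -/
def lowerPre {P Q : Type*} [Preorder P] [Preorder Q] {g : Q → P} (hg : Monotone g)
    (d : LowerSet P) : LowerSet Q :=
  ⟨g ⁻¹' d, fun _ _ h hz => d.lower (hg h) hz⟩

@[simp] lemma mem_lowerPre {P Q : Type*} [Preorder P] [Preorder Q] {g : Q → P}
    (hg : Monotone g) {d : LowerSet P} {z : Q} : z ∈ lowerPre hg d ↔ g z ∈ d := Iff.rfl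

lemma lowerPre_mono {P Q : Type*} [Preorder P] [Preorder Q] {g : Q → P} (hg : Monotone g) :
    Monotone (lowerPre hg) := by
  intro d e hde
  rw [← LowerSet.coe_subset_coe]
  intro z hz
  exact (LowerSet.coe_subset_coe.2 hde) hz

lemma lowerPre_emb {P Q : Type*} [Preorder P] [Preorder Q] {g : Q → P} (hg : Monotone g)
    (hsur : Function.Surjective g)
    (hlift : ∀ z p, g z ≤ p → ∃ w, z ≤ w ∧ g w = p) :
    IsCoheytingEmb (lowerPre hg) := by
  have hinj : Function.Injective (lowerPre hg) := by
    intro d e hde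
    refine SetLike.ext fun p => ?_
    obtain ⟨z, rfl⟩ := hsur p
    constructor
    · intro hz
      have hz' : z ∈ lowerPre hg d := hz
      rw [hde] at hz'
      exact hz'
    · intro hz
      have hz' : z ∈ lowerPre hg e := hz
      rw [← hde] at hz'
      exact hz'
  have hbot : lowerPre hg ⊥ = ⊥ := by
    refine SetLike.ext fun z => ?_
    simp [LowerSet.notMem_bot]
  have htop : lowerPre hg ⊤ = ⊤ := by
    refine SetLike.ext fun z => ?_
    simp [LowerSet.mem_top]
  have hsup : ∀ d e, lowerPre hg (d ⊔ e) = lowerPre hg d ⊔ lowerPre hg e := by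
    intro d e
    refine SetLike.ext fun z => ?_
    simp [LowerSet.mem_sup_iff]
  have hinf : ∀ d e, lowerPre hg (d ⊓ e) = lowerPre hg d ⊓ lowerPre hg e := by
    intro d e
    refine SetLike.ext fun z => ?_
    simp [LowerSet.mem_inf_iff]
  have hsdiff : ∀ d e, lowerPre hg (d \ e) = lowerPre hg d \ lowerPre hg e := by
    intro d e
    refine le_antisymm ?_ ?_
    · set x := lowerPre hg d \ lowerPre hg e with hx
      have hdx : lowerPre hg d ≤ lowerPre hg e ⊔ x := sdiff_le_iff.1 le_rfl
      have hy : IsLowerSet {p : P | ∀ w, g w = p → w ∈ x} := by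
        intro p p' hle hp w hw
        obtain ⟨w', hww', hgw'⟩ := hlift w p (hw ▸ hle)
        exact x.lower hww' (hp w' hgw')
      set y : LowerSet P := ⟨_, hy⟩ with hydef
      have hdey : d ≤ e ⊔ y := by
        intro p hp
        simp only [SetLike.mem_coe, LowerSet.mem_sup_iff]
        by_cases hpe : p ∈ e
        · exact Or.inl hpe
        · refine Or.inr ?_
          intro w hw
          have hwd : w ∈ lowerPre hg d := by
            rw [mem_lowerPre, hw]; exact hp
          have h2 := hdx hwd
          simp only [SetLike.mem_coe, LowerSet.mem_sup_iff] at h2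
          rcases h2 with h2 | h2
          · exact absurd (by rw [← hw]; exact h2) hpe
          · exact h2
      have h1 : d \ e ≤ y := sdiff_le_iff.2 hdey
      refine (lowerPre_mono hg h1).trans ?_
      intro z hz
      exact hz z rfl
    · rw [sdiff_le_iff, ← hsup]
      exact lowerPre_mono hg (sdiff_le_iff.1 le_rfl)
  exact ⟨hinj, hbot, htop, hsup, hinf, hsdiff⟩

/-- A poset extended by a set of new points. -/
inductive QT (P S : Type*) : Type _ where
  | old : P → QT P S
  | new : S → QT P S

instance {P S : Type*} [Finite P] [Finite S] : Finite (QT P S) :=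
  Finite.of_equiv (P ⊕ S)
    ⟨Sum.elim QT.old QT.new,
     fun z => match z with | QT.old q => Sum.inl q | QT.new s => Sum.inr s,
     fun z => by cases z <;> rfl, fun z => by cases z <;> rfl⟩

/-- The preorder on `QT P S` used to glue new points into a poset. -/
def QPre (P S : Type*) [Preorder P] (gs : S → P) (cond : P → Prop)
    (hdown : ∀ ⦃x y : P⦄, x ≤ y → cond y → cond x)
    (hns : ∀ s, ¬ cond (gs s)) : Preorder (QT P S) where
  le z w :=
    match z, w with
    | QT.old q, QT.old q' => q ≤ q'
    | QT.old q, QT.new s => q ≤ gs s ∧ cond q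
    | QT.new s, QT.old q => gs s ≤ q
    | QT.new s, QT.new t => s = t
  le_refl z := by cases z with
    | old q => exact le_refl q
    | new s => exact rfl
  le_trans z w u hzw hwu := by
    cases z with
    | old q =>
      cases w with
      | old q' =>
        cases u with
        | old q'' => exact le_trans hzw hwu
        | new s => exact ⟨le_trans hzw hwu.1, hdown hzw hwu.2⟩
      | new s =>
        cases u with
        | old q' => exact le_trans hzw.1 hwu
        | new t => cases hwu; exact hzw
    | new s =>
      cases w with
      | old q =>
        cases u with
        | old q' => exact le_trans hzw hwu
        | new t => exact absurd (hdown hzw hwu.2) (hns s)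
      | new t =>
        cases u with
        | old q' => cases hzw; exact hwu
        | new u' => exact Eq.trans hzw hwu

/-- A `Type 0` copy of a finite type, carrying no pre-existing order instances. -/
def CopyType (n : ℕ) : Type := Fin n

instance (n : ℕ) : Finite (CopyType n) := Finite.intro (Equiv.refl (Fin n))

lemma exists_smallCopy (K : Type*) [CoheytingAlgebra K] [Finite K] :
    ∃ (γ : Type) (inst : CoheytingAlgebra γ), Finite γ ∧
      ∃ ψ : K → γ, @IsCoheytingEmb K γ _ inst ψ := by
  let γ := CopyType (Nat.card K)
  let φ : K ≃ γ := Finite.equivFin K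
  letI : Max γ := ⟨fun x y => φ (φ.symm x ⊔ φ.symm y)⟩
  letI : Min γ := ⟨fun x y => φ (φ.symm x ⊓ φ.symm y)⟩
  letI : Top γ := ⟨φ ⊤⟩
  letI : Bot γ := ⟨φ ⊥⟩
  letI : HNot γ := ⟨fun x => φ (￢ φ.symm x)⟩
  letI : SDiff γ := ⟨fun x y => φ (φ.symm x \ φ.symm y)⟩
  letI : LE γ := ⟨fun x y => φ.symm x ≤ φ.symm y⟩
  letI : LT γ := ⟨fun x y => φ.symm x < φ.symm y⟩
  letI inst : CoheytingAlgebra γ :=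
    Function.Injective.coheytingAlgebra (φ.symm : γ → K) φ.symm.injective Iff.rfl Iff.rfl
      (fun _ _ => φ.symm_apply_apply _) (fun _ _ => φ.symm_apply_apply _)
      (φ.symm_apply_apply _) (φ.symm_apply_apply _)
      (fun _ => φ.symm_apply_apply _) (fun _ _ => φ.symm_apply_apply _)
  refine ⟨γ, inst, inferInstance, φ, φ.injective, rfl, rfl, fun a b => ?_, fun a b => ?_,
    fun a b => ?_⟩ <;>
    exact congrArg φ (by simp)

end Aux

theorem density_extension_exists (L : Type*) [CoheytingAlgebra L] [Finite L]
    (a c : L) (h : Ll c a) (ha : a ≠ ⊥) :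
    ∃ (L' : Type) (inst : CoheytingAlgebra L'),
      Finite L' ∧ @DenseExt L _ L' inst c a := by
  classical
  cases nonempty_fintype L
  letI : DecidablePred (SupIrred : L → Prop) := Classical.decPred _
  set P := {x : L // SupIrred x} with hP
  let e : L ≃o LowerSet P := OrderIso.lowerSetSupIrred
  have he : IsCoheytingEmb e := orderIso_coheytingEmb e
  set C : LowerSet P := e c with hC
  set A : LowerSet P := e a with hA
  have hCA : C ≤ A := e.monotone h.2
  have hAC : A \ C = A := by rw [hC, hA, ← he.2.2.2.2.2, h.1]
  have hAbot : A ≠ ⊥ := by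
    intro hb
    apply ha
    apply e.injective
    rw [he.2.1, ← hA]
    exact hb
  -- density step: every point of A is below a point of A not in C
  have hstep : ∀ q, q ∈ A → ∃ s, s ∈ A ∧ s ∉ C ∧ q ≤ s := by
    have h1 : A ≤ lowerClosure {s : P | s ∈ A ∧ s ∉ C} := by
      conv_lhs => rw [← hAC]
      refine sdiff_le_iff.2 ?_
      intro p hp
      simp only [SetLike.mem_coe, LowerSet.mem_sup_iff]
      by_cases hpC : p ∈ C
      · exact Or.inl hpC
      · exact Or.inr (subset_lowerClosure ⟨hp, hpC⟩)
    intro q hq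
    have h2 := h1 hq
    simp only [SetLike.mem_coe, mem_lowerClosure] at h2
    obtain ⟨s, hs, hqs⟩ := h2
    exact ⟨s, hs.1, hs.2, hqs⟩
  -- the new poset
  let S := {s : P // s ∈ A ∧ s ∉ C}
  letI instQ : Preorder (QT P S) :=
    QPre P S (fun s => s.1) (fun p => p ∈ C)
      (fun x y hxy hy => C.lower hxy hy) (fun s => s.2.2)
  let g : QT P S → P := fun z => match z with | QT.old q => q | QT.new s => s.1
  have hgmono : Monotone g := by
    intro z w hzw
    cases z with
    | old q =>
      cases w with
      | old q' => exact hzw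
      | new s => exact hzw.1
    | new s =>
      cases w with
      | old q => exact hzw
      | new t => exact le_of_eq (congrArg (fun s : S => s.1) hzw)
  have hgsur : Function.Surjective g := fun p => ⟨QT.old p, rfl⟩
  have hglift : ∀ z p, g z ≤ p → ∃ w, z ≤ w ∧ g w = p := by
    intro z p hzp
    refine ⟨QT.old p, ?_, rfl⟩
    cases z with
    | old q => exact hzp
    | new s => exact hzp
  let f0 : LowerSet P → LowerSet (QT P S) := lowerPre hgmono
  have hf0 : IsCoheytingEmb f0 := lowerPre_emb hgmono hgsur hglift
  -- the new element b
  have hbset : IsLowerSet {z : QT P S | match z with | QT.old q => q ∈ C | QT.new _ => True} := by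
    intro z w hwz hz
    cases w with
    | new s => trivial
    | old q =>
      cases z with
      | old q' => exact C.lower hwz hz
      | new s => exact hwz.2
  set b : LowerSet (QT P S) := ⟨_, hbset⟩ with hbdef
  have hmem_inl : ∀ q : P, ((QT.old q : QT P S) ∈ b) ↔ q ∈ C := fun q => Iff.rfl
  have hmem_inr : ∀ s : S, (QT.new s : QT P S) ∈ b := fun s => trivial
  -- f0 C ≤ b
  have hCb : f0 C ≤ b := by
    intro z hz
    cases z with
    | old q => exact hz
    | new s => exact trivial
  -- key fact 1
  have hkey1 : ∀ x : LowerSet (QT P S), b ≤ f0 C ⊔ x → b ≤ x := by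
    intro x hx
    have hinr : ∀ s : S, (QT.new s : QT P S) ∈ x := by
      intro s
      have h2 := hx (hmem_inr s)
      simp only [SetLike.mem_coe, LowerSet.mem_sup_iff] at h2
      rcases h2 with h2 | h2
      · exact absurd h2 s.2.2
      · exact h2
    intro z hz
    cases z with
    | new s => exact hinr s
    | old q =>
      have hqC : q ∈ C := hz
      obtain ⟨s, hsA, hsC, hqs⟩ := hstep q (hCA hqC)
      exact x.lower
        (show (QT.old q : QT P S) ≤ QT.new ⟨s, hsA, hsC⟩ from ⟨hqs, hqC⟩) (hinr _)
  have hLl1 : Ll (f0 C) b :=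
    ⟨le_antisymm sdiff_le (hkey1 _ (sdiff_le_iff.1 le_rfl)), hCb⟩
  -- b ≤ f0 A
  have hbA : b ≤ f0 A := by
    intro z hz
    cases z with
    | old q => exact hCA hz
    | new s => exact s.2.1
  -- key fact 2
  have hkey2 : ∀ x : LowerSet (QT P S), f0 A ≤ b ⊔ x → f0 A ≤ x := by
    intro x hx
    have hinl : ∀ p : P, p ∈ A → (QT.old p : QT P S) ∈ x := by
      intro p hp
      obtain ⟨s, hsA, hsC, hps⟩ := hstep p hp
      have h1 : (QT.old s : QT P S) ∈ f0 A := hsA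
      have h2 := hx h1
      simp only [SetLike.mem_coe, LowerSet.mem_sup_iff] at h2
      rcases h2 with h2 | h2
      · exact absurd h2 hsC
      · exact x.lower (show (QT.old p : QT P S) ≤ QT.old s from hps) h2
    intro z hz
    cases z with
    | old p => exact hinl p hz
    | new s =>
      exact x.lower (show (QT.new s : QT P S) ≤ QT.old s.1 from le_refl s.1.1)
        (hinl s.1 s.2.1)
  have hLl2 : Ll b (f0 A) :=
    ⟨le_antisymm sdiff_le (hkey2 _ (sdiff_le_iff.1 le_rfl)), hbA⟩
  -- b is nonzero
  have hbbot : b ≠ ⊥ := by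
    obtain ⟨p, hp⟩ : ∃ p, p ∈ A := by
      by_contra hno
      push_neg at hno
      exact hAbot (SetLike.ext fun p =>
        ⟨fun hp => absurd hp (hno p), fun hp => absurd hp LowerSet.notMem_bot⟩)
    obtain ⟨s, hsA, hsC, _⟩ := hstep p hp
    intro heq
    have hmem : (QT.new ⟨s, hsA, hsC⟩ : QT P S) ∈ b := trivial
    rw [heq] at hmem
    exact LowerSet.notMem_bot hmem
  -- assemble the dense extension into LowerSet (QT P S)
  have hdense : DenseExt L (LowerSet (QT P S)) c a := by
    refine ⟨f0 ∘ e, b, coheytingEmb_comp he hf0, hbbot, ?_, ?_⟩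
    · show Ll (f0 (e c)) b
      rw [← hC]
      exact hLl1
    · show Ll b (f0 (e a))
      rw [← hA]
      exact hLl2
  -- shrink to Type 0
  haveI : Finite (LowerSet (QT P S)) :=
    Finite.of_injective (fun d : LowerSet (QT P S) => (d : Set (QT P S)))
      SetLike.coe_injective
  obtain ⟨γ, inst, hfin, ψ, hψ⟩ := exists_smallCopy (LowerSet (QT P S))
  exact ⟨γ, inst, hfin, denseExt_comp hdense hψ⟩
end

section
/- Let L be a finite co-Heyting algebra and a, b₁, b₂ ∈ L with b₁ ⊔ b₂ ≪ a and a ≠ ⊥. Then there exists a finite co-Heyting algebra L' containing L as a subalgebra and nonzero elements a₁, a₂ ∈ L' such that a \ a₂ = a₁ ≥ b₁, a \ a₁ = a₂ ≥ b₂, and a₁ ⊓ a₂ = b₁ ⊓ b₂. -/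
/-- There is an embedding `f` of `L` into `K` and nonzero `a₁, a₂` in `K` splitting
`f a` along `f b₁ ⊓ f b₂`. -/
def SplitExt (L : Type*) [CoheytingAlgebra L] (K : Type*) [CoheytingAlgebra K]
    (a b₁ b₂ : L) : Prop :=
  ∃ (f : L → K) (a₁ a₂ : K), IsCoheytingEmb f ∧ a₁ ≠ ⊥ ∧ a₂ ≠ ⊥ ∧
    f a \ a₂ = a₁ ∧ f b₁ ≤ a₁ ∧ f a \ a₁ = a₂ ∧ f b₂ ≤ a₂ ∧ a₁ ⊓ a₂ = f b₁ ⊓ f b₂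

namespace SplitAux

variable {L : Type*} [CoheytingAlgebra L]

/-- Key lemma: any sup-irreducible `p ≤ x \ c` lies below a sup-irreducible
`s ≤ x \ c` with `s ≰ c`. -/
lemma key [Finite L] {x c p : L} (hp : SupIrred p) (hpx : p ≤ x \ c) :
    ∃ s, SupIrred s ∧ s ≤ x \ c ∧ ¬ s ≤ c ∧ p ≤ s := by
  classical
  obtain ⟨t, hts, htirr⟩ := exists_supIrred_decomposition (x \ c)
  set e := (t.filter fun s => ¬ s ≤ c).sup id with he
  have h1 : x \ c ≤ c ⊔ e := by
    conv_lhs => rw [← hts]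
    refine Finset.sup_le fun s hs => ?_
    by_cases hsc : s ≤ c
    · exact le_sup_of_le_left hsc
    · exact le_sup_of_le_right (Finset.le_sup (f := id) (Finset.mem_filter.2 ⟨hs, hsc⟩))
  have h2 : x \ c ≤ e := by
    have h3 : (x \ c) \ c ≤ e := sdiff_le_iff.2 h1
    rwa [sdiff_sdiff_left, sup_idem] at h3
  obtain ⟨s, hsmem, hps⟩ := (hp.supPrime.le_finset_sup).1 (hpx.trans h2)
  obtain ⟨hst, hsc⟩ := Finset.mem_filter.1 hsmem
  exact ⟨s, htirr hst, by rw [← hts]; exact Finset.le_sup (f := id) hst, hsc, hps⟩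

variable (a b₁ b₂ : L)

/-- Points of the extended poset: sup-irreducibles of `L`, where those in
`S = {p ≤ a, p ≰ b₁, p ≰ b₂}` are duplicated (index `true` allowed only on `S`). -/
structure Pt where
  pt : L
  ix : Bool
  irred : SupIrred pt
  cond : ix = true → pt ≤ a ∧ ¬ pt ≤ b₁ ∧ ¬ pt ≤ b₂

open Classical in
/-- Labels: `some false` = side 1, `some true` = side 2, `none` = wildcard. -/
noncomputable def labv (p : L) (i : Bool) : Option Bool :=
  if p ≤ b₁ then (if p ≤ b₂ then none else some false)
  else if p ≤ b₂ then some true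
  else if p ≤ a then some i
  else none

noncomputable def Pt.lab (q : Pt a b₁ b₂) : Option Bool := labv a b₁ b₂ q.pt q.ix

variable {a b₁ b₂}

lemma labv_of_both {p : L} {i : Bool} (h1 : p ≤ b₁) (h2 : p ≤ b₂) :
    labv a b₁ b₂ p i = none := by simp [labv, h1, h2]

lemma labv_of_free {p : L} {i : Bool} (h1 : ¬ p ≤ b₁) (h2 : ¬ p ≤ b₂) (h3 : p ≤ a) :
    labv a b₁ b₂ p i = some i := by simp [labv, h1, h2, h3]

lemma labv_of_none {p : L} {i : Bool} (h1 : ¬ p ≤ a) (h2 : ¬ p ≤ b₁) (h3 : ¬ p ≤ b₂) :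
    labv a b₁ b₂ p i = none := by simp [labv, h1, h2, h3]

lemma labv_none {p : L} {i : Bool} (h : labv a b₁ b₂ p i = none) :
    (p ≤ b₁ ∧ p ≤ b₂) ∨ (¬ p ≤ a ∧ ¬ p ≤ b₁ ∧ ¬ p ≤ b₂) := by
  unfold labv at h
  split_ifs at h with h1 h2 h3 h4 <;> simp_all

lemma labv_false_not_b2 {p : L} {i : Bool} (h : labv a b₁ b₂ p i = some false) : ¬ p ≤ b₂ := by
  unfold labv at h
  split_ifs at h with h1 h2 h3 h4 <;> simp_all

lemma labv_true_not_b1 {p : L} {i : Bool} (h : labv a b₁ b₂ p i = some true) : ¬ p ≤ b₁ := by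
  unfold labv at h
  split_ifs at h with h1 h2 h3 h4 <;> simp_all

instance : PartialOrder (Pt a b₁ b₂) where
  le q r := q.pt ≤ r.pt ∧ (q.lab = none ∨ r.lab = none ∨ q.lab = r.lab)
  le_refl q := ⟨le_rfl, Or.inr (Or.inr rfl)⟩
  le_trans x y z hxy hyz := by
    refine ⟨hxy.1.trans hyz.1, ?_⟩
    rcases hxy.2 with h | h | h
    · exact Or.inl h
    · rcases labv_none h with ⟨h1, h2⟩ | ⟨h1, h2, h3⟩
      · exact Or.inl (labv_of_both (hxy.1.trans h1) (hxy.1.trans h2))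
      · exact Or.inr (Or.inl (labv_of_none (fun hz => h1 (hyz.1.trans hz))
          (fun hz => h2 (hyz.1.trans hz)) (fun hz => h3 (hyz.1.trans hz))))
    · rcases hyz.2 with h' | h' | h'
      · exact Or.inl (h.trans h')
      · exact Or.inr (Or.inl h')
      · exact Or.inr (Or.inr (h.trans h'))
  le_antisymm q r hqr hrq := by
    have hpt : q.pt = r.pt := le_antisymm hqr.1 hrq.1
    have hix : q.ix = r.ix := by
      by_cases hq : q.ix = true
      · obtain ⟨h3, h1, h2⟩ := q.cond hq
        have hql : q.lab = some q.ix := labv_of_free h1 h2 h3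
        have hrl : r.lab = some r.ix := by
          rw [Pt.lab, ← hpt]; exact labv_of_free h1 h2 h3
        rcases hqr.2 with h | h | h <;> simp_all
      · by_cases hr : r.ix = true
        · obtain ⟨h3, h1, h2⟩ := r.cond hr
          have hrl : r.lab = some r.ix := labv_of_free h1 h2 h3
          have hql : q.lab = some q.ix := by
            rw [Pt.lab, hpt]; exact labv_of_free h1 h2 h3
          rcases hqr.2 with h | h | h <;> simp_all
        · simp only [Bool.not_eq_true] at hq hr; rw [hq, hr]
    cases q; cases r
    simp_all

lemma Pt.le_def {q r : Pt a b₁ b₂} :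
    q ≤ r ↔ q.pt ≤ r.pt ∧ (q.lab = none ∨ r.lab = none ∨ q.lab = r.lab) := Iff.rfl

instance [Finite L] : Finite (Pt a b₁ b₂) :=
  Finite.of_injective (fun q : Pt a b₁ b₂ => (q.pt, q.ix))
    (by rintro ⟨p, i, _, _⟩ ⟨p', i', _, _⟩ h; simpa using h)

/-- The lifting property: any point below a sup-irreducible `s` has a point with
first coordinate `s` above it. -/
lemma exists_lift (q : Pt a b₁ b₂) {s : L} (hs : SupIrred s) (hqs : q.pt ≤ s) :
    ∃ r : Pt a b₁ b₂, r.pt = s ∧ q ≤ r := by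
  by_cases hS : s ≤ a ∧ ¬ s ≤ b₁ ∧ ¬ s ≤ b₂
  · rcases hq : q.lab with _ | β
    · exact ⟨⟨s, false, hs, fun _ => hS⟩, rfl, hqs, Or.inl hq⟩
    · exact ⟨⟨s, β, hs, fun _ => hS⟩, rfl, hqs,
        Or.inr (Or.inr (hq.trans (labv_of_free hS.2.1 hS.2.2 hS.1).symm))⟩
  · refine ⟨⟨s, false, hs, by simp⟩, rfl, hqs, ?_⟩
    have hrl : Pt.lab a b₁ b₂ ⟨s, false, hs, by simp⟩ = labv a b₁ b₂ s false := rfl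
    by_cases h1 : s ≤ b₁
    · by_cases h2 : s ≤ b₂
      · exact Or.inr (Or.inl (labv_of_both h1 h2))
      · rcases hq : q.lab with _ | β
        · exact Or.inl rfl
        · cases β
          · refine Or.inr (Or.inr ?_)
            rw [hrl]
            simp [labv, h1, h2]
          · exact absurd (hqs.trans h1) (labv_true_not_b1 hq)
    · by_cases h2 : s ≤ b₂
      · rcases hq : q.lab with _ | β
        · exact Or.inl rfl
        · cases β
          · exact absurd (hqs.trans h2) (labv_false_not_b2 hq)
          · refine Or.inr (Or.inr ?_)
            rw [hrl]
            simp [labv, h1, h2]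
      · exact Or.inr (Or.inl (labv_of_none (fun h3 => hS ⟨h3, h1, h2⟩) h1 h2))

variable (a b₁ b₂)

/-- The embedding of `L` into the lower sets of `Pt`. -/
def emb (x : L) : LowerSet (Pt a b₁ b₂) :=
  ⟨{q | q.pt ≤ x}, fun _ _ hrq hq => hrq.1.trans hq⟩

/-- The two halves: `aa true` is `a₁` (labels `≠ some true`),
`aa false` is `a₂` (labels `≠ some false`). -/
def aa (j : Bool) : LowerSet (Pt a b₁ b₂) :=
  ⟨{q | q.pt ≤ a ∧ q.lab ≠ some j}, by
    rintro r q hqr ⟨hra, hrl⟩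
    refine ⟨hqr.1.trans hra, fun hql => ?_⟩
    have hrn : r.lab = none := by
      rcases hqr.2 with h | h | h
      · exact absurd h (by rw [hql]; simp)
      · exact h
      · exact absurd (h ▸ hql : r.lab = some j) hrl
    rcases labv_none hrn with ⟨h1, h2⟩ | ⟨h1, _, _⟩
    · have : q.lab = none := labv_of_both (hqr.1.trans h1) (hqr.1.trans h2)
      rw [this] at hql; cases hql
    · exact h1 hra⟩

variable {a b₁ b₂}

lemma mem_emb {x : L} {q : Pt a b₁ b₂} : q ∈ emb a b₁ b₂ x ↔ q.pt ≤ x := Iff.rfl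

lemma mem_aa {j : Bool} {q : Pt a b₁ b₂} :
    q ∈ aa a b₁ b₂ j ↔ q.pt ≤ a ∧ q.lab ≠ some j := Iff.rfl

lemma emb_injective [Finite L] : Function.Injective (emb a b₁ b₂) := by
  have hle : ∀ x y : L, emb a b₁ b₂ x ≤ emb a b₁ b₂ y → x ≤ y := by
    intro x y hxy
    obtain ⟨t, hts, htirr⟩ := exists_supIrred_decomposition x
    conv_lhs => rw [← hts]
    refine Finset.sup_le fun s hs => ?_
    have hsx : s ≤ x := by rw [← hts]; exact Finset.le_sup (f := id) hs
    have hmem : (⟨s, false, htirr hs, by simp⟩ : Pt a b₁ b₂) ∈ emb a b₁ b₂ x := hsx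
    exact hxy hmem
  exact fun x y hxy => le_antisymm (hle _ _ hxy.le) (hle _ _ hxy.ge)

lemma emb_sdiff [Finite L] (x y : L) :
    emb a b₁ b₂ (x \ y) = emb a b₁ b₂ x \ emb a b₁ b₂ y := by
  refine le_antisymm ?_ ?_
  · intro q hq
    obtain ⟨s, hsirr, hsxy, hsy, hqs⟩ := key q.irred (mem_emb.1 hq)
    obtain ⟨r, hrpt, hqr⟩ := exists_lift q hsirr hqs
    have hrx : r ∈ emb a b₁ b₂ x := by
      rw [mem_emb, hrpt]
      exact hsxy.trans sdiff_le
    have hsup : emb a b₁ b₂ x ≤ emb a b₁ b₂ y ⊔ (emb a b₁ b₂ x \ emb a b₁ b₂ y) :=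
      le_sup_sdiff
    rcases LowerSet.mem_sup_iff.1 (hsup hrx) with hr | hr
    · rw [mem_emb, hrpt] at hr
      exact absurd hr hsy
    · exact (emb a b₁ b₂ x \ emb a b₁ b₂ y).lower hqr hr
  · rw [sdiff_le_iff]
    intro q hq
    rcases q.irred.supPrime.le_sup.1 ((mem_emb.1 hq).trans le_sup_sdiff) with h | h
    · exact LowerSet.mem_sup_iff.2 (Or.inl (mem_emb.2 h))
    · exact LowerSet.mem_sup_iff.2 (Or.inr (mem_emb.2 h))

lemma emb_isCoheytingEmb [Finite L] : IsCoheytingEmb (emb a b₁ b₂) := by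
  refine ⟨emb_injective, ?_, ?_, ?_, ?_, fun x y => emb_sdiff x y⟩
  · refine SetLike.ext fun q => ?_
    simp only [mem_emb, le_bot_iff]
    simpa using q.irred.ne_bot
  · exact SetLike.ext fun q => by simp [mem_emb]
  · intro x y
    refine SetLike.ext fun q => ?_
    rw [LowerSet.mem_sup_iff, mem_emb, mem_emb, mem_emb]
    exact q.irred.supPrime.le_sup
  · intro x y
    exact SetLike.ext fun q => by
      rw [LowerSet.mem_inf_iff, mem_emb, mem_emb, mem_emb]; exact le_inf_iff

section Main

variable [Finite L] (h : a \ (b₁ ⊔ b₂) = a) (hb1 : b₁ ≤ a) (hb2 : b₂ ≤ a)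

include h in
lemma exists_S {p : L} (hp : SupIrred p) (hpa : p ≤ a) :
    ∃ s, SupIrred s ∧ s ≤ a ∧ ¬ s ≤ b₁ ∧ ¬ s ≤ b₂ ∧ p ≤ s := by
  have hpx : p ≤ a \ (b₁ ⊔ b₂) := by rw [h]; exact hpa
  obtain ⟨s, hsirr, hsx, hsc, hps⟩ := key hp hpx
  rw [h] at hsx
  exact ⟨s, hsirr, hsx, fun hh => hsc (hh.trans le_sup_left),
    fun hh => hsc (hh.trans le_sup_right), hps⟩

include h in
lemma sdiff_aa (j : Bool) :
    emb a b₁ b₂ a \ aa a b₁ b₂ j = aa a b₁ b₂ (!j) := by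
  refine le_antisymm ?_ ?_
  · rw [sdiff_le_iff]
    intro q hq
    by_cases hqj : q.lab = some j
    · refine LowerSet.mem_sup_iff.2 (Or.inr (mem_aa.2 ⟨mem_emb.1 hq, ?_⟩))
      rw [hqj]
      simp
    · exact LowerSet.mem_sup_iff.2 (Or.inl (mem_aa.2 ⟨mem_emb.1 hq, hqj⟩))
  · intro q hq
    obtain ⟨hqa, hql⟩ := mem_aa.1 hq
    obtain ⟨s, hsirr, hsa, hs1, hs2, hqs⟩ := exists_S h q.irred hqa
    have hrl : Pt.lab a b₁ b₂ ⟨s, j, hsirr, fun _ => ⟨hsa, hs1, hs2⟩⟩ = some j :=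
      labv_of_free hs1 hs2 hsa
    have hqr : q ≤ ⟨s, j, hsirr, fun _ => ⟨hsa, hs1, hs2⟩⟩ := by
      refine ⟨hqs, ?_⟩
      rcases hb : q.lab with _ | β
      · exact Or.inl rfl
      · refine Or.inr (Or.inr ?_)
        rw [hrl]
        have hne : β ≠ (!j) := fun hβ => hql (by rw [hb, hβ])
        cases j <;> cases β <;> simp_all
    have hsup : emb a b₁ b₂ a ≤ aa a b₁ b₂ j ⊔ (emb a b₁ b₂ a \ aa a b₁ b₂ j) :=
      le_sup_sdiff
    have hrx : (⟨s, j, hsirr, fun _ => ⟨hsa, hs1, hs2⟩⟩ : Pt a b₁ b₂) ∈ emb a b₁ b₂ a := hsa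
    rcases LowerSet.mem_sup_iff.1 (hsup hrx) with hr | hr
    · exact absurd hrl (mem_aa.1 hr).2
    · exact (emb a b₁ b₂ a \ aa a b₁ b₂ j).lower hqr hr

include h in
lemma aa_ne_bot (ha : a ≠ ⊥) (j : Bool) : aa a b₁ b₂ j ≠ ⊥ := by
  obtain ⟨t, hts, htirr⟩ := exists_supIrred_decomposition a
  have hne : t.Nonempty := by
    rcases Finset.eq_empty_or_nonempty t with rfl | hne
    · exact absurd (by simpa using hts.symm) ha
    · exact hne
  obtain ⟨p, hp⟩ := hne
  have hpa : p ≤ a := by rw [← hts]; exact Finset.le_sup (f := id) hp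
  obtain ⟨s, hsirr, hsa, hs1, hs2, _⟩ := exists_S h (htirr hp) hpa
  have hrm : (⟨s, !j, hsirr, fun _ => ⟨hsa, hs1, hs2⟩⟩ : Pt a b₁ b₂) ∈ aa a b₁ b₂ j := by
    refine mem_aa.2 ⟨hsa, ?_⟩
    rw [show Pt.lab a b₁ b₂ ⟨s, !j, hsirr, fun _ => ⟨hsa, hs1, hs2⟩⟩ = some (!j) from
      labv_of_free hs1 hs2 hsa]
    cases j <;> simp
  intro hbot
  rw [hbot] at hrm
  exact (by simpa using hrm : False)

include hb1 hb2 in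
lemma inf_aa : aa a b₁ b₂ true ⊓ aa a b₁ b₂ false
    = emb a b₁ b₂ b₁ ⊓ emb a b₁ b₂ b₂ := by
  refine SetLike.ext fun q => ?_
  rw [LowerSet.mem_inf_iff, LowerSet.mem_inf_iff, mem_aa, mem_aa, mem_emb, mem_emb]
  constructor
  · rintro ⟨⟨hqa, ht⟩, _, hf⟩
    have hnone : q.lab = none := by
      rcases hl : q.lab with _ | β
      · rfl
      · cases β
        · exact absurd hl hf
        · exact absurd hl ht
    rcases labv_none hnone with ⟨h1, h2⟩ | ⟨h1, _, _⟩
    · exact ⟨h1, h2⟩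
    · exact absurd hqa h1
  · rintro ⟨h1, h2⟩
    have hnone : q.lab = none := labv_of_both h1 h2
    exact ⟨⟨h1.trans hb1, by rw [hnone]; simp⟩, ⟨h1.trans hb1, by rw [hnone]; simp⟩⟩

include hb1 in
lemma emb_b1_le : emb a b₁ b₂ b₁ ≤ aa a b₁ b₂ true := by
  intro q hq
  have hqb1 : q.pt ≤ b₁ := mem_emb.1 hq
  refine mem_aa.2 ⟨hqb1.trans hb1, fun hl => labv_true_not_b1 hl hqb1⟩

include hb2 in
lemma emb_b2_le : emb a b₁ b₂ b₂ ≤ aa a b₁ b₂ false := by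
  intro q hq
  have hqb2 : q.pt ≤ b₂ := mem_emb.1 hq
  refine mem_aa.2 ⟨hqb2.trans hb2, fun hl => labv_false_not_b2 hl hqb2⟩

end Main

/-- The splitting extension, in the same universe as `L`. -/
lemma splitExt_lowerSet [Finite L] (h : Ll (b₁ ⊔ b₂) a) (ha : a ≠ ⊥) :
    SplitExt L (LowerSet (Pt a b₁ b₂)) a b₁ b₂ := by
  have hb1 : b₁ ≤ a := le_sup_left.trans h.2
  have hb2 : b₂ ≤ a := le_sup_right.trans h.2
  refine ⟨emb a b₁ b₂, aa a b₁ b₂ true, aa a b₁ b₂ false,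
    emb_isCoheytingEmb, aa_ne_bot h.1 ha true, aa_ne_bot h.1 ha false,
    ?_, emb_b1_le hb1, ?_, emb_b2_le hb2, inf_aa hb1 hb2⟩
  · simpa using sdiff_aa h.1 false
  · simpa using sdiff_aa h.1 true

/-- Transfer a splitting extension along a `Shrink` to land in `Type 0`. -/
lemma shrink {K : Type*} [CoheytingAlgebra K] [Finite K] (a b₁ b₂ : L)
    (hs : SplitExt L K a b₁ b₂) :
    ∃ (L' : Type) (inst : CoheytingAlgebra L'), Finite L' ∧ @SplitExt L _ L' inst a b₁ b₂ := by
  letI : Countable K := Finite.to_countable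
  letI : Small.{0} K := inferInstance
  let e : K ≃ Shrink.{0} K := equivShrink K
  let g : Shrink.{0} K → K := e.symm
  letI : Max (Shrink.{0} K) := ⟨fun x y => e (g x ⊔ g y)⟩
  letI : Min (Shrink.{0} K) := ⟨fun x y => e (g x ⊓ g y)⟩
  letI : Top (Shrink.{0} K) := ⟨e ⊤⟩
  letI : Bot (Shrink.{0} K) := ⟨e ⊥⟩
  letI : HNot (Shrink.{0} K) := ⟨fun x => e (￢ (g x))⟩
  letI : SDiff (Shrink.{0} K) := ⟨fun x y => e (g x \ g y)⟩
  letI : LE (Shrink.{0} K) := ⟨fun x y => g x ≤ g y⟩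
  letI : LT (Shrink.{0} K) := ⟨fun x y => g x < g y⟩
  letI inst : CoheytingAlgebra (Shrink.{0} K) :=
    e.symm.injective.coheytingAlgebra g Iff.rfl Iff.rfl
      (fun x y => by show g (e (g x ⊔ g y)) = _; simp [g])
      (fun x y => by show g (e (g x ⊓ g y)) = _; simp [g])
      (by show g (e ⊤) = ⊤; simp [g])
      (by show g (e ⊥) = ⊥; simp [g])
      (fun x => by show g (e (￢ (g x))) = _; simp [g])
      (fun x y => by show g (e (g x \ g y)) = _; simp [g])
  have hesup : ∀ u v : K, e (u ⊔ v) = e u ⊔ e v := by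
    intro u v
    show e (u ⊔ v) = e (e.symm (e u) ⊔ e.symm (e v))
    simp
  have heinf : ∀ u v : K, e (u ⊓ v) = e u ⊓ e v := by
    intro u v
    show e (u ⊓ v) = e (e.symm (e u) ⊓ e.symm (e v))
    simp
  have hesdiff : ∀ u v : K, e (u \ v) = e u \ e v := by
    intro u v
    show e (u \ v) = e (e.symm (e u) \ e.symm (e v))
    simp
  have hetop : e (⊤ : K) = ⊤ := rfl
  have hebot : e (⊥ : K) = ⊥ := rfl
  have hele : ∀ u v : K, u ≤ v → e u ≤ e v := by
    intro u v huv
    have h2 : e u ⊔ e v = e v := by rw [← hesup, sup_eq_right.2 huv]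
    exact le_of_sup_eq h2
  obtain ⟨f, a₁, a₂, ⟨hinj, hbot, htop, hsup, hinf, hsd⟩, h1, h2, h3, h4, h5, h6, h7⟩ := hs
  refine ⟨Shrink.{0} K, inst, Finite.of_equiv K e, ⟨e ∘ f, e a₁, e a₂,
    ⟨e.injective.comp hinj, ?_, ?_, ?_, ?_, ?_⟩, ?_, ?_, ?_, ?_, ?_, ?_, ?_⟩⟩
  · show e (f ⊥) = ⊥; rw [hbot, hebot]
  · show e (f ⊤) = ⊤; rw [htop, hetop]
  · intro u v; show e (f (u ⊔ v)) = e (f u) ⊔ e (f v); rw [hsup, hesup]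
  · intro u v; show e (f (u ⊓ v)) = e (f u) ⊓ e (f v); rw [hinf, heinf]
  · intro u v; show e (f (u \ v)) = e (f u) \ e (f v); rw [hsd, hesdiff]
  · intro hb; exact h1 (e.injective (by rw [hb, hebot]))
  · intro hb; exact h2 (e.injective (by rw [hb, hebot]))
  · show e (f a) \ e a₂ = e a₁; rw [← hesdiff, h3]
  · exact hele _ _ h4
  · show e (f a) \ e a₁ = e a₂; rw [← hesdiff, h5]
  · exact hele _ _ h6
  · show e a₁ ⊓ e a₂ = e (f b₁) ⊓ e (f b₂)
    rw [← heinf, h7, heinf]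

end SplitAux

theorem splitting_extension_exists (L : Type*) [CoheytingAlgebra L] [Finite L]
    (a b₁ b₂ : L) (h : Ll (b₁ ⊔ b₂) a) (ha : a ≠ ⊥) :
    ∃ (L' : Type) (inst : CoheytingAlgebra L'),
      Finite L' ∧ @SplitExt L _ L' inst a b₁ b₂ := by
  exact SplitAux.shrink a b₁ b₂ (SplitAux.splitExt_lowerSet h ha)
end

section
/- Let L be a finite co-Heyting algebra and let x₁, …, x_r be the join-irreducible components of ⊤ (i.e., the maximal join-irreducible elements of L). Then the following are equivalent: (1) L satisfies the identity (⊤ \ x) ⊓ (⊤ \ (⊤ \ x)) = ⊥ for all x; (2) xᵢ ⊓ xⱼ = ⊥ whenever i ≠ j; (3) L is isomorphic to a finite product of co-Heyting algebras each of whose top element is join irreducible. -/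
/-- The top element is join irreducible. -/
def TopIrred (α : Type*) [CoheytingAlgebra α] : Prop := SupIrred (⊤ : α)

/-! ### Auxiliary material -/

section Aux

variable {L : Type*} [CoheytingAlgebra L]

/-- The maximal join-irreducible elements. -/
def MaxIrr (x : L) : Prop := SupIrred x ∧ ∀ y : L, SupIrred y → x ≤ y → x = y

/-- A co-Heyting structure on a lower interval. -/
instance Set.Iic.coheytingAlgebra (x : L) : CoheytingAlgebra (Set.Iic x) where
  sdiff a b := ⟨(a : L) \ (b : L), sdiff_le.trans a.2⟩
  hnot a := ⟨x \ (a : L), sdiff_le⟩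
  sdiff_le_iff _ _ _ := sdiff_le_iff
  top_sdiff _ := rfl

@[simp] lemma Set.Iic.coe_sdiff (x : L) (a b : Set.Iic x) :
    ((a \ b : Set.Iic x) : L) = (a : L) \ (b : L) := rfl

/-- Weak excluded middle (co-Heyting form) holds when `⊤` is join irreducible. -/
lemma coheyting_wem_of_topIrred {α : Type*} [CoheytingAlgebra α] (h : SupIrred (⊤ : α)) (y : α) :
    (⊤ \ y) ⊓ (⊤ \ (⊤ \ y)) = ⊥ := by
  have hsup : (⊤ \ y) ⊔ (⊤ \ (⊤ \ y)) = ⊤ := by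
    rw [top_sdiff', top_sdiff', sup_hnot_self]
  rcases h.2 hsup with h1 | h1
  · rw [h1, sdiff_self, inf_bot_eq]
  · have h2 : ￢￢y = ⊤ := by rw [← top_sdiff', ← top_sdiff']; exact h1
    have hy : y = ⊤ := top_le_iff.mp (h2 ▸ hnot_hnot_le)
    rw [hy, sdiff_self, bot_inf_eq]

/-- Transfer a co-Heyting algebra structure along an equivalence. -/
noncomputable def Equiv.coheytingAlgebraOfEquiv {A B : Type*} (e : A ≃ B) [CoheytingAlgebra B] :
    CoheytingAlgebra A :=
  letI : Max A := ⟨fun a b => e.symm (e a ⊔ e b)⟩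
  letI : Min A := ⟨fun a b => e.symm (e a ⊓ e b)⟩
  letI : Top A := ⟨e.symm ⊤⟩
  letI : Bot A := ⟨e.symm ⊥⟩
  letI : HNot A := ⟨fun a => e.symm (￢ e a)⟩
  letI : SDiff A := ⟨fun a b => e.symm (e a \ e b)⟩
  letI : LE A := ⟨fun a b => e a ≤ e b⟩
  letI : LT A := ⟨fun a b => e a < e b⟩
  e.injective.coheytingAlgebra e Iff.rfl Iff.rfl (fun _ _ => e.apply_symm_apply _)
    (fun _ _ => e.apply_symm_apply _) (e.apply_symm_apply _) (e.apply_symm_apply _)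
    (fun _ => e.apply_symm_apply _) (fun _ _ => e.apply_symm_apply _)

lemma emb_symm_of_equiv {A B : Type*} (e : A ≃ B) [CoheytingAlgebra B] :
    @IsCoheytingEmb B A _ e.coheytingAlgebraOfEquiv ⇑e.symm := by
  letI := e.coheytingAlgebraOfEquiv
  refine ⟨e.symm.injective, rfl, rfl, fun a b => ?_, fun a b => ?_, fun a b => ?_⟩
  · show e.symm (a ⊔ b) = e.symm (e (e.symm a) ⊔ e (e.symm b))
    simp
  · show e.symm (a ⊓ b) = e.symm (e (e.symm a) ⊓ e (e.symm b))
    simp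
  · show e.symm (a \ b) = e.symm (e (e.symm a) \ e (e.symm b))
    simp

lemma IsCoheytingEmb.comp {A B C : Type*} [CoheytingAlgebra A] [CoheytingAlgebra B]
    [CoheytingAlgebra C] {f : A → B} {g : B → C} (hg : IsCoheytingEmb g)
    (hf : IsCoheytingEmb f) : IsCoheytingEmb (g ∘ f) := by
  obtain ⟨hf1, hf2, hf3, hf4, hf5, hf6⟩ := hf
  obtain ⟨hg1, hg2, hg3, hg4, hg5, hg6⟩ := hg
  exact ⟨hg1.comp hf1, by simp [Function.comp, hf2, hg2], by simp [Function.comp, hf3, hg3],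
    fun a b => by simp [Function.comp, hf4, hg4], fun a b => by simp [Function.comp, hf5, hg5],
    fun a b => by simp [Function.comp, hf6, hg6]⟩

lemma isCoheytingEmb_pi {ι : Type*} {A B : ι → Type*} [∀ i, CoheytingAlgebra (A i)]
    [∀ i, CoheytingAlgebra (B i)] (f : ∀ i, A i → B i) (hf : ∀ i, IsCoheytingEmb (f i)) :
    IsCoheytingEmb (fun (a : ∀ i, A i) i => f i (a i)) := by
  refine ⟨fun a b h => funext fun i => (hf i).1 (congrFun h i), ?_, ?_, fun a b => ?_,
    fun a b => ?_, fun a b => ?_⟩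
  · exact funext fun i => (hf i).2.1
  · exact funext fun i => (hf i).2.2.1
  · exact funext fun i => (hf i).2.2.2.1 (a i) (b i)
  · exact funext fun i => (hf i).2.2.2.2.1 (a i) (b i)
  · exact funext fun i => (hf i).2.2.2.2.2 (a i) (b i)

/-- Transfer `TopIrred` along a surjective embedding. -/
lemma topIrred_of_emb {A B : Type*} [CoheytingAlgebra A] [CoheytingAlgebra B] (e : A ≃ B)
    (he : IsCoheytingEmb ⇑e) (h : TopIrred A) : TopIrred B := by
  obtain ⟨hinj, hbot, htop, hsup, hinf, hsd⟩ := he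
  have hle : ∀ a b : A, e a ≤ e b ↔ a ≤ b := by
    intro a b
    rw [← sup_eq_right, ← sup_eq_right (a := a), ← hsup]
    exact ⟨fun hh => by rw [hinj hh], fun hh => by rw [hh]⟩
  constructor
  · intro hmin
    refine h.1 fun b hb => ?_
    have : e b ≤ e ⊤ := (hle _ _).mpr hb
    rw [htop] at this
    have := hmin this
    rw [← htop] at this
    exact (hle _ _).mp this
  · intro b c hbc
    obtain ⟨b', rfl⟩ := e.surjective b
    obtain ⟨c', rfl⟩ := e.surjective c
    rw [← hsup] at hbc
    rw [← htop] at hbc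
    rcases h.2 (hinj hbc) with h1 | h1
    · exact Or.inl (by rw [h1, htop])
    · exact Or.inr (by rw [h1, htop])

end Aux

section Main

variable {L : Type*} [CoheytingAlgebra L] [Finite L]

open Finset

lemma exists_top_decomp : ∃ T : Finset L, T.sup id = ⊤ ∧ ∀ b ∈ T, MaxIrr b := by
  classical
  have _inst := Fintype.ofFinite L
  refine ⟨Finset.univ.filter MaxIrr, ?_, fun b hb => (Finset.mem_filter.mp hb).2⟩
  apply le_antisymm le_top
  obtain ⟨s, hs, hirr⟩ := exists_supIrred_decomposition (⊤ : L)
  rw [← hs]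
  refine Finset.sup_le fun b hb => ?_
  obtain ⟨m, hbm, hm⟩ := Finite.exists_le_maximal (hirr hb)
  refine le_trans hbm (Finset.le_sup (f := id) ?_)
  simp only [Finset.mem_filter, Finset.mem_univ, true_and]
  exact ⟨hm.1, fun y hy hmy => le_antisymm hmy (hm.2 hy hmy)⟩

lemma supIrred_sdiff {q p : L} (hq : SupIrred q) (h : ¬ q ≤ p) : q \ p = q := by
  have h1 : (q ⊓ p) ⊔ (q \ p) = q := by
    calc (q ⊓ p) ⊔ (q \ p) = (q ⊓ p) ⊔ (q ⊓ (q \ p)) := by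
          rw [inf_eq_right.mpr (sdiff_le : q \ p ≤ q)]
    _ = q ⊓ (p ⊔ q \ p) := (inf_sup_left q p (q \ p)).symm
    _ = q := inf_eq_left.mpr le_sup_sdiff
  rcases hq.2 h1 with h2 | h2
  · exact absurd (h2 ▸ inf_le_right) h
  · exact h2

lemma wem_to_disj (wem : ∀ x : L, (⊤ \ x) ⊓ (⊤ \ (⊤ \ x)) = ⊥)
    (p q : L) (hp : MaxIrr p) (hq : MaxIrr q) (hne : p ≠ q) : p ⊓ q = ⊥ := by
  obtain ⟨T, hT, hTm⟩ := exists_top_decomp (L := L)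
  have hqp : ¬ q ≤ p := fun h => hne ((hq.2 p hp.1 h).symm)
  have hq' : q ≤ ⊤ \ p := by
    have h0 : q \ p ≤ ⊤ \ p := sdiff_le_sdiff_right le_top
    rwa [supIrred_sdiff hq.1 hqp] at h0
  have hpnot : ¬ p ≤ ⊤ \ p := by
    intro hle
    classical
    have h2 : (⊤ : L) \ p ≤ (T.erase p).sup id := by
      rw [sdiff_le_iff, ← hT]
      refine Finset.sup_le fun b hb => ?_
      by_cases hbp : b = p
      · exact hbp ▸ le_sup_left
      · exact le_trans (Finset.le_sup (f := id) (Finset.mem_erase.mpr ⟨hbp, hb⟩)) le_sup_right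
    have h1 : p ≤ (T.erase p).sup id :=
      le_trans (le_trans le_top (le_trans (le_trans le_sup_sdiff (sup_le hle le_rfl)) h2)) le_rfl
    obtain ⟨b, hb, hpb⟩ := (supPrime_iff_supIrred.mpr hp.1).le_finset_sup.mp h1
    exact (Finset.ne_of_mem_erase hb) (hp.2 b (hTm b (Finset.mem_of_mem_erase hb)).1 hpb).symm
  have hp' : p ≤ ⊤ \ (⊤ \ p) := by
    have h0 : p \ (⊤ \ p) ≤ ⊤ \ (⊤ \ p) := sdiff_le_sdiff_right le_top
    rwa [supIrred_sdiff hp.1 hpnot] at h0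
  exact le_bot_iff.mp
    (le_trans (le_inf (inf_le_right.trans hq') (inf_le_left.trans hp')) (wem p).le)

lemma disj_to_decomp
    (hd : ∀ x : L, MaxIrr x → ∀ y : L, MaxIrr y → x ≠ y → x ⊓ y = ⊥) :
    ∃ (n : ℕ) (F : Fin n → Type) (inst : ∀ i, CoheytingAlgebra (F i))
      (e : L ≃ ∀ i, F i),
        (∀ i, @TopIrred (F i) (inst i)) ∧
        @IsCoheytingEmb L (∀ i, F i) _ (@Pi.instCoheytingAlgebra (Fin n) F inst) e := by
  classical
  have _inst := Fintype.ofFinite L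
  obtain ⟨T, hT, hTm⟩ := exists_top_decomp (L := L)
  set n := T.card with hn
  let x : Fin n → L := fun i => ((T.equivFin.symm i : ↥T) : L)
  have hxT : ∀ i, x i ∈ T := fun i => (T.equivFin.symm i).2
  have hcover : ∀ b ∈ T, ∃ i, x i = b := fun b hb =>
    ⟨T.equivFin ⟨b, hb⟩, by simp [x]⟩
  have hxinj : Function.Injective x := fun i j h =>
    T.equivFin.symm.injective (Subtype.ext h)
  have hsup : Finset.univ.sup x = ⊤ := by
    apply le_antisymm le_top
    rw [← hT]
    refine Finset.sup_le fun b hb => ?_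
    obtain ⟨i, rfl⟩ := hcover b hb
    exact Finset.le_sup (Finset.mem_univ i)
  have hdisj : ∀ i j, i ≠ j → x i ⊓ x j = ⊥ := fun i j h =>
    hd _ (hTm _ (hxT i)) _ (hTm _ (hxT j)) fun hxx => h (hxinj hxx)
  have inf_sup_top : ∀ a : L, Finset.univ.sup (fun i => a ⊓ x i) = a := fun a => by
    rw [← Finset.sup_inf_distrib_left, hsup, inf_top_eq]
  -- the key compatibility of `\` with the decomposition
  have hsd : ∀ (a b : L) (i), (a \ b) ⊓ x i = (a ⊓ x i) \ (b ⊓ x i) := by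
    intro a b i
    apply le_antisymm
    · have hsle : ∀ j : Fin n, (a ⊓ x j) \ (b ⊓ x j) ≤
          Finset.univ.sup (fun j => (a ⊓ x j) \ (b ⊓ x j)) := fun j =>
        Finset.le_sup (f := fun k => (a ⊓ x k) \ (b ⊓ x k)) (Finset.mem_univ j)
      have h1 : a \ b ≤ Finset.univ.sup (fun j => (a ⊓ x j) \ (b ⊓ x j)) := by
        rw [sdiff_le_iff]
        conv_lhs => rw [← inf_sup_top a]
        refine Finset.sup_le fun j _ => ?_
        calc a ⊓ x j ≤ (b ⊓ x j) ⊔ ((a ⊓ x j) \ (b ⊓ x j)) := le_sup_sdiff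
          _ ≤ b ⊔ Finset.univ.sup (fun j => (a ⊓ x j) \ (b ⊓ x j)) :=
            sup_le_sup inf_le_left (hsle j)
      have h2 : Finset.univ.sup (fun j => (a ⊓ x j) \ (b ⊓ x j)) ⊓ x i ≤
          (a ⊓ x i) \ (b ⊓ x i) := by
        rw [Finset.sup_inf_distrib_right]
        refine Finset.sup_le fun j _ => ?_
        by_cases hji : j = i
        · subst hji; exact inf_le_left
        · have hb : (a ⊓ x j) \ (b ⊓ x j) ⊓ x i ≤ x j ⊓ x i :=
            inf_le_inf_right _ (sdiff_le.trans inf_le_right)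
          rw [hdisj j i hji] at hb
          exact hb.trans bot_le
      exact le_trans (inf_le_inf_right _ h1) h2
    · refine le_inf ?_ (sdiff_le.trans inf_le_right)
      rw [sdiff_le_iff]
      calc a ⊓ x i ≤ (b ⊔ a \ b) ⊓ x i := inf_le_inf_right _ le_sup_sdiff
        _ = b ⊓ x i ⊔ (a \ b) ⊓ x i := inf_sup_right b (a \ b) (x i)
        _ ≤ (b ⊓ x i) ⊔ (a \ b) := sup_le_sup le_rfl inf_le_left
  -- the interval decomposition
  let e1 : L ≃ ∀ i, Set.Iic (x i) :=
    { toFun := fun a i => ⟨a ⊓ x i, inf_le_right⟩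
      invFun := fun b => Finset.univ.sup fun i => (b i : L)
      left_inv := fun a => inf_sup_top a
      right_inv := by
        intro b
        funext i
        apply Subtype.ext
        show (Finset.univ.sup fun j => ((b j : L))) ⊓ x i = (b i : L)
        rw [Finset.sup_inf_distrib_right]
        apply le_antisymm
        · refine Finset.sup_le fun j _ => ?_
          by_cases hji : j = i
          · subst hji; exact inf_le_left
          · have hb : (b j : L) ⊓ x i ≤ x j ⊓ x i := inf_le_inf_right _ (b j).2
            rw [hdisj j i hji] at hb
            exact hb.trans bot_le
        · have : (b i : L) ⊓ x i = (b i : L) := inf_eq_left.mpr (b i).2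
          exact this ▸ Finset.le_sup (f := fun j => (b j : L) ⊓ x i) (Finset.mem_univ i) }
  have he1 : IsCoheytingEmb ⇑e1 := by
    refine ⟨e1.injective, ?_, ?_, fun a b => ?_, fun a b => ?_, fun a b => ?_⟩
    · funext i
      apply Subtype.ext
      show (⊥ : L) ⊓ x i = (⊥ : L)
      rw [bot_inf_eq]
    · funext i
      apply Subtype.ext
      show (⊤ : L) ⊓ x i = x i
      rw [top_inf_eq]
    · funext i
      apply Subtype.ext
      show (a ⊔ b) ⊓ x i = a ⊓ x i ⊔ b ⊓ x i
      exact inf_sup_right a b (x i)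
    · funext i
      apply Subtype.ext
      show (a ⊓ b) ⊓ x i = (a ⊓ x i) ⊓ (b ⊓ x i)
      exact inf_inf_distrib_right a b (x i)
    · funext i
      apply Subtype.ext
      show (a \ b) ⊓ x i = (a ⊓ x i) \ (b ⊓ x i)
      exact hsd a b i
  have hti : ∀ i, TopIrred (Set.Iic (x i)) := by
    intro i
    have hxi : SupIrred (x i) := (hTm _ (hxT i)).1
    constructor
    · intro hmin
      have h1 : (⊤ : Set.Iic (x i)) ≤ ⊥ := hmin bot_le
      have h2 : x i ≤ (⊥ : L) := h1
      exact hxi.1 fun c _ => h2.trans bot_le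
    · intro b c hbc
      have hco : (b : L) ⊔ (c : L) = x i := by
        rw [← Set.Iic.coe_sup, hbc, Set.Iic.coe_top]
      rcases hxi.2 hco with h | h
      · exact Or.inl (Subtype.ext (by rw [Set.Iic.coe_top]; exact h))
      · exact Or.inr (Subtype.ext (by rw [Set.Iic.coe_top]; exact h))
  -- shrink the intervals to `Type 0`
  have hsmall : ∀ i, Small.{0} (Set.Iic (x i)) := fun i => Countable.toSmall _
  letI := fun i => hsmall i
  letI instF : ∀ i, CoheytingAlgebra (Shrink (Set.Iic (x i))) := fun i =>
    ((equivShrink (Set.Iic (x i))).symm).coheytingAlgebraOfEquiv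
  refine ⟨n, fun i => Shrink (Set.Iic (x i)), instF,
    e1.trans (Equiv.piCongrRight fun i => equivShrink _), fun i => ?_, ?_⟩
  · exact topIrred_of_emb ((equivShrink (Set.Iic (x i))).symm).symm
      (emb_symm_of_equiv _) (hti i)
  · have hcomp := IsCoheytingEmb.comp
      (isCoheytingEmb_pi (fun i => ⇑((equivShrink (Set.Iic (x i))).symm).symm)
        (fun i => emb_symm_of_equiv _)) he1
    exact hcomp

lemma decomp_to_wem
    (h : ∃ (n : ℕ) (F : Fin n → Type) (inst : ∀ i, CoheytingAlgebra (F i))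
      (e : L ≃ ∀ i, F i),
        (∀ i, @TopIrred (F i) (inst i)) ∧
        @IsCoheytingEmb L (∀ i, F i) _ (@Pi.instCoheytingAlgebra (Fin n) F inst) e) :
    ∀ x : L, (⊤ \ x) ⊓ (⊤ \ (⊤ \ x)) = ⊥ := by
  obtain ⟨n, F, inst, e, hti, hemb⟩ := h
  letI : ∀ i, CoheytingAlgebra (F i) := inst
  intro a
  obtain ⟨hinj, hbot, htop, hsup, hinf, hsd⟩ := hemb
  apply hinj
  rw [hinf, hsd, hsd, hsd, htop, hbot]
  funext i
  exact coheyting_wem_of_topIrred (hti i) (e a i)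

end Main

theorem weak_excluded_middle_characterizations (L : Type*) [CoheytingAlgebra L] [Finite L] :
    ((∀ x : L, (⊤ \ x) ⊓ (⊤ \ (⊤ \ x)) = ⊥) ↔
      (∀ x : L, (SupIrred x ∧ ∀ y : L, SupIrred y → x ≤ y → x = y) →
        ∀ y : L, (SupIrred y ∧ ∀ z : L, SupIrred z → y ≤ z → y = z) →
          x ≠ y → x ⊓ y = ⊥)) ∧
    ((∀ x : L, (⊤ \ x) ⊓ (⊤ \ (⊤ \ x)) = ⊥) ↔
      (∃ (n : ℕ) (F : Fin n → Type) (inst : ∀ i, CoheytingAlgebra (F i))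
        (e : L ≃ ∀ i, F i),
          (∀ i, @TopIrred (F i) (inst i)) ∧
          @IsCoheytingEmb L (∀ i, F i) _ (@Pi.instCoheytingAlgebra (Fin n) F inst) e)) := by
  constructor
  · constructor
    · intro wem p hp q hq hne
      exact wem_to_disj wem p q hp hq hne
    · intro hd
      exact decomp_to_wem (disj_to_decomp hd)
  · constructor
    · intro wem
      exact disj_to_decomp fun p hp q hq hne => wem_to_disj wem p q hp hq hne
    · exact decomp_to_wem
end
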